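/- arXiv:0710.4032 — 11 statements merged into one kernel-verified Lean document; each statement's English description precedes it below -/
import Mathlib

section
/- For every natural number n and every rational number x, the n-th Bernoulli polynomial satisfies B_n(x) = ∑_{k=0}^{n} (1/(k+1)) ∑_{j=0}^{k} (-1)^j C(k,j) (x+j)^n. -/
open Finset

/-- `S d k x = ∑_{j=0}^k (-1)^j C(k,j) (x+j)^d`, i.e. `(-1)^k Δ^k` of `y^d` at `x`. -/
private def SS (d k : ℕ) (x : ℚ) : ℚ :=
  ∑ j ∈ range (k + 1), (-1 : ℚ) ^ j * (k.choose j : ℚ) * (x + (j : ℚ)) ^ d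

private lemma SS_succ (d k : ℕ) (x : ℚ) :
    SS d (k + 1) x = SS d k x
      - ∑ i ∈ range (k + 1), (-1 : ℚ) ^ i * (k.choose i : ℚ) * (x + 1 + (i : ℚ)) ^ d := by
  have h1 : SS d (k + 1) x
      = ∑ j ∈ range (k + 1),
          (-1 : ℚ) ^ (j + 1) * (((k + 1).choose (j + 1) : ℕ) : ℚ) * (x + ((j : ℚ) + 1)) ^ d
        + (-1 : ℚ) ^ 0 * (((k + 1).choose 0 : ℕ) : ℚ) * (x + ((0 : ℕ) : ℚ)) ^ d := by
    rw [SS, Finset.sum_range_succ']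
    push_cast
    ring_nf
  rw [h1]
  have h2 : ∀ j ∈ range (k + 1),
      (-1 : ℚ) ^ (j + 1) * (((k + 1).choose (j + 1) : ℕ) : ℚ) * (x + ((j : ℚ) + 1)) ^ d
      = -((-1 : ℚ) ^ j * (k.choose j : ℚ) * (x + 1 + (j : ℚ)) ^ d)
        + (-1 : ℚ) ^ (j + 1) * ((k.choose (j + 1) : ℕ) : ℚ) * (x + (((j : ℕ) + 1 : ℕ) : ℚ)) ^ d := by
    intro j _
    rw [Nat.choose_succ_succ]
    push_cast
    ring
  rw [Finset.sum_congr rfl h2, Finset.sum_add_distrib]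
  have h3 : ∑ j ∈ range (k + 1),
      (-1 : ℚ) ^ (j + 1) * ((k.choose (j + 1) : ℕ) : ℚ) * (x + (((j : ℕ) + 1 : ℕ) : ℚ)) ^ d
      + (-1 : ℚ) ^ 0 * (((k + 1).choose 0 : ℕ) : ℚ) * (x + ((0 : ℕ) : ℚ)) ^ d
      = SS d k x := by
    have := (Finset.sum_range_succ' (fun j => (-1 : ℚ) ^ j * (k.choose j : ℚ) * (x + (j : ℚ)) ^ d) (k + 1)).symm
    simp only [Nat.choose_zero_right] at this ⊢
    rw [this, Finset.sum_range_succ]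
    simp [SS, Nat.choose_succ_self]
  rw [add_assoc, h3]
  rw [Finset.sum_neg_distrib]
  ring

private lemma SS_eq_zero : ∀ (d k : ℕ) (x : ℚ), d < k → SS d k x = 0 := by
  intro d
  induction d using Nat.strong_induction_on with
  | _ d ih =>
    intro k x hdk
    obtain ⟨k', rfl⟩ : ∃ k', k = k' + 1 := ⟨k - 1, by omega⟩
    rw [SS_succ]
    have key : ∑ i ∈ range (k' + 1), (-1 : ℚ) ^ i * (k'.choose i : ℚ) * (x + 1 + (i : ℚ)) ^ d
        = ∑ m ∈ range (d + 1), (d.choose m : ℚ) * SS m k' x := by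
      have h1 : ∀ i ∈ range (k' + 1),
          (-1 : ℚ) ^ i * (k'.choose i : ℚ) * (x + 1 + (i : ℚ)) ^ d
          = ∑ m ∈ range (d + 1),
              (d.choose m : ℚ) * ((-1 : ℚ) ^ i * (k'.choose i : ℚ) * (x + (i : ℚ)) ^ m) := by
        intro i _
        have hb := add_pow (x + (i : ℚ)) 1 d
        simp only [one_pow, mul_one] at hb
        rw [show x + 1 + (i : ℚ) = x + (i : ℚ) + 1 by ring, hb, Finset.mul_sum]
        exact Finset.sum_congr rfl (fun m _ => by ring)
      rw [Finset.sum_congr rfl h1, Finset.sum_comm]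
      exact Finset.sum_congr rfl (fun m _ => by rw [SS, Finset.mul_sum])
    rw [key, Finset.sum_range_succ]
    have hz : ∀ m ∈ range d, (d.choose m : ℚ) * SS m k' x = 0 := by
      intro m hm
      have hm' := mem_range.mp hm
      rw [ih m hm' k' x (by omega), mul_zero]
    rw [Finset.sum_eq_zero hz, Nat.choose_self]
    push_cast
    ring

private lemma SS_pow_succ (d k : ℕ) (x : ℚ) :
    SS (d + 1) (k + 1) x
      = x * SS d (k + 1) x + ((k : ℚ) + 1) * (SS d (k + 1) x - SS d k x) := by
  have h1 : SS (d + 1) (k + 1) x = x * SS d (k + 1) x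
      + ∑ j ∈ range (k + 2), (-1 : ℚ) ^ j * ((k + 1).choose j : ℚ) * (j : ℚ) * (x + (j : ℚ)) ^ d := by
    rw [SS, SS, Finset.mul_sum, ← Finset.sum_add_distrib]
    exact Finset.sum_congr rfl (fun j _ => by ring)
  have h2 : ∑ j ∈ range (k + 2), (-1 : ℚ) ^ j * ((k + 1).choose j : ℚ) * (j : ℚ) * (x + (j : ℚ)) ^ d
      = -((k : ℚ) + 1) * ∑ i ∈ range (k + 1),
          (-1 : ℚ) ^ i * (k.choose i : ℚ) * (x + 1 + (i : ℚ)) ^ d := by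
    rw [Finset.sum_range_succ', Finset.mul_sum]
    simp only [Nat.cast_zero, mul_zero, zero_mul, add_zero]
    refine Finset.sum_congr rfl (fun i _ => ?_)
    have hc : ((k + 1).choose (i + 1) * (i + 1) : ℕ) = ((k + 1) * k.choose i : ℕ) := by
      rw [← Nat.add_one_mul_choose_eq]
    have hcq : (((k + 1).choose (i + 1) : ℕ) : ℚ) * ((i : ℚ) + 1)
        = ((k : ℚ) + 1) * (k.choose i : ℚ) := by exact_mod_cast hc
    push_cast
    linear_combination ((-1 : ℚ) ^ (i + 1) * (x + 1 + (i : ℚ)) ^ d) * hcq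
  have h3 := SS_succ d k x
  rw [h1, h2]
  linear_combination (-((k : ℚ) + 1)) * h3

private lemma G_eq : ∀ (d : ℕ) (x : ℚ),
    ∑ k ∈ range (d + 2), (1 / ((k : ℚ) + 1)) * SS (d + 1) (k + 1) x = -((d : ℚ) + 1) * x ^ d := by
  intro d
  induction d with
  | zero =>
      intro x
      norm_num [SS, Finset.sum_range_succ]
      ring
  | succ d ih =>
      intro x
      have step : ∀ k ∈ range (d + 3), (1 / ((k : ℚ) + 1)) * SS (d + 2) (k + 1) x
          = x * ((1 / ((k : ℚ) + 1)) * SS (d + 1) (k + 1) x)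
            + (SS (d + 1) (k + 1) x - SS (d + 1) k x) := by
        intro k _
        have hk : ((k : ℚ) + 1) ≠ 0 := by positivity
        rw [SS_pow_succ (d + 1) k x]
        field_simp
      rw [Finset.sum_congr rfl step, Finset.sum_add_distrib, ← Finset.mul_sum,
        Finset.sum_range_sub (fun k => SS (d + 1) k x)]
      have e1 : ∑ k ∈ range (d + 3), (1 / ((k : ℚ) + 1)) * SS (d + 1) (k + 1) x
          = -((d : ℚ) + 1) * x ^ d := by
        rw [Finset.sum_range_succ, SS_eq_zero (d + 1) (d + 3) x (by omega), mul_zero, add_zero,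
          ih x]
      have e2 : SS (d + 1) (d + 3) x = 0 := SS_eq_zero (d + 1) (d + 3) x (by omega)
      have e3 : SS (d + 1) 0 x = x ^ (d + 1) := by simp [SS]
      rw [e1, e2, e3]
      push_cast
      ring

private lemma key_sum (n k : ℕ) (x : ℚ) :
    ∑ m ∈ range (n + 1), ((n + 1).choose m : ℚ) * SS m k x = -SS (n + 1) (k + 1) x := by
  have h1 : ∀ m ∈ range (n + 1), ((n + 1).choose m : ℚ) * SS m k x
      = ∑ j ∈ range (k + 1),
          (-1 : ℚ) ^ j * (k.choose j : ℚ) * ((x + (j : ℚ)) ^ m * ((n + 1).choose m : ℚ)) := by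
    intro m _
    rw [SS, Finset.mul_sum]
    exact Finset.sum_congr rfl fun j _ => by ring
  rw [Finset.sum_congr rfl h1, Finset.sum_comm]
  have h2 : ∀ j ∈ range (k + 1),
      ∑ m ∈ range (n + 1),
        (-1 : ℚ) ^ j * (k.choose j : ℚ) * ((x + (j : ℚ)) ^ m * ((n + 1).choose m : ℚ))
      = (-1 : ℚ) ^ j * (k.choose j : ℚ)
          * ((x + 1 + (j : ℚ)) ^ (n + 1) - (x + (j : ℚ)) ^ (n + 1)) := by
    intro j _
    rw [← Finset.mul_sum]
    congr 1
    have hb := add_pow (x + (j : ℚ)) 1 (n + 1)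
    simp only [one_pow, mul_one] at hb
    have hbs : ∑ m ∈ range (n + 2), (x + (j : ℚ)) ^ m * ((n + 1).choose m : ℚ)
        = (x + (j : ℚ) + 1) ^ (n + 1) := hb.symm
    rw [Finset.sum_range_succ] at hbs
    simp only [Nat.choose_self, Nat.cast_one, mul_one] at hbs
    linear_combination hbs
  rw [Finset.sum_congr rfl h2]
  have h3 := SS_succ (n + 1) k x
  have h4 : ∑ j ∈ range (k + 1),
      (-1 : ℚ) ^ j * (k.choose j : ℚ)
        * ((x + 1 + (j : ℚ)) ^ (n + 1) - (x + (j : ℚ)) ^ (n + 1))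
      = (∑ j ∈ range (k + 1), (-1 : ℚ) ^ j * (k.choose j : ℚ) * (x + 1 + (j : ℚ)) ^ (n + 1))
        - SS (n + 1) k x := by
    rw [SS, ← Finset.sum_sub_distrib]
    exact Finset.sum_congr rfl fun j _ => by ring
  rw [h4]
  linear_combination h3

private lemma key (n : ℕ) (x : ℚ) :
    ∑ m ∈ range (n + 1), ((n + 1).choose m : ℚ) *
      (∑ k ∈ range (m + 1), (1 / ((k : ℚ) + 1)) * SS m k x) = ((n : ℚ) + 1) * x ^ n := by
  have hext : ∀ m ∈ range (n + 1),
      ((n + 1).choose m : ℚ) * (∑ k ∈ range (m + 1), (1 / ((k : ℚ) + 1)) * SS m k x)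
      = ∑ k ∈ range (n + 1), ((n + 1).choose m : ℚ) * ((1 / ((k : ℚ) + 1)) * SS m k x) := by
    intro m hm
    have hm' := mem_range.mp hm
    rw [← Finset.mul_sum]
    congr 1
    refine Finset.sum_subset (Finset.range_subset_range.mpr (by omega)) ?_
    intro k hk hk'
    rw [mem_range] at hk hk'
    rw [SS_eq_zero m k x (by omega), mul_zero]
  rw [Finset.sum_congr rfl hext, Finset.sum_comm]
  have hin : ∀ k ∈ range (n + 1),
      ∑ m ∈ range (n + 1), ((n + 1).choose m : ℚ) * ((1 / ((k : ℚ) + 1)) * SS m k x)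
      = (1 / ((k : ℚ) + 1)) * (-SS (n + 1) (k + 1) x) := by
    intro k _
    rw [← key_sum n k x, Finset.mul_sum]
    exact Finset.sum_congr rfl fun m _ => by ring
  rw [Finset.sum_congr rfl hin]
  have hG := G_eq n x
  rw [Finset.sum_range_succ, SS_eq_zero (n + 1) (n + 2) x (by omega), mul_zero, add_zero] at hG
  have hneg : ∑ k ∈ range (n + 1), (1 / ((k : ℚ) + 1)) * (-SS (n + 1) (k + 1) x)
      = -∑ k ∈ range (n + 1), (1 / ((k : ℚ) + 1)) * SS (n + 1) (k + 1) x := by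
    rw [← Finset.sum_neg_distrib]
    exact Finset.sum_congr rfl fun k _ => by ring
  rw [hneg, hG]
  ring

/-- For every natural number `n` and every rational `x`, the `n`-th Bernoulli polynomial
satisfies `B_n(x) = ∑_{k=0}^{n} (1/(k+1)) ∑_{j=0}^{k} (-1)^j C(k,j) (x+j)^n`. -/
theorem bernoulli_poly_eval_eq_double_sum (n : ℕ) (x : ℚ) :
    (Polynomial.bernoulli n).eval x =
      ∑ k ∈ Finset.range (n + 1), (1 / ((k : ℚ) + 1)) *
        ∑ j ∈ Finset.range (k + 1), (-1 : ℚ) ^ j * (k.choose j : ℚ) * (x + (j : ℚ)) ^ n := by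
  have main : ∀ (n : ℕ) (x : ℚ), (Polynomial.bernoulli n).eval x
      = ∑ k ∈ range (n + 1), (1 / ((k : ℚ) + 1)) * SS n k x := by
    intro n
    induction n using Nat.strong_induction_on with
    | _ n ih =>
      intro x
      have h1 := key n x
      have h2 : ∑ m ∈ range (n + 1), ((n + 1).choose m : ℚ) * (Polynomial.bernoulli m).eval x
          = ((n : ℚ) + 1) * x ^ n := by
        have h := congrArg (Polynomial.eval x) (Polynomial.sum_bernoulli n)
        simp only [Polynomial.eval_finset_sum, Polynomial.eval_smul, smul_eq_mul,
          Polynomial.eval_monomial] at h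
        exact h
      rw [Finset.sum_range_succ] at h1 h2
      have h3 : ∀ m ∈ range n,
          ((n + 1).choose m : ℚ) * (∑ k ∈ range (m + 1), (1 / ((k : ℚ) + 1)) * SS m k x)
          = ((n + 1).choose m : ℚ) * (Polynomial.bernoulli m).eval x := by
        intro m hm
        rw [ih m (mem_range.mp hm) x]
      rw [Finset.sum_congr rfl h3] at h1
      have hC : (((n + 1).choose n : ℕ) : ℚ) = (n : ℚ) + 1 := by
        rw [Nat.choose_succ_self_right]
        push_cast
        ring
      have hne : ((n : ℚ) + 1) ≠ 0 := by positivity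
      have h5 : ((n : ℚ) + 1) * (∑ k ∈ range (n + 1), (1 / ((k : ℚ) + 1)) * SS n k x)
          = ((n : ℚ) + 1) * (Polynomial.bernoulli n).eval x := by
        rw [hC] at h1 h2
        linear_combination h1 - h2
      exact (mul_left_cancel₀ hne h5).symm
  simpa [SS] using main n x
end

section
/- For every positive integer n, ∫_0^1 x^{n-1}/(1+x^n) · log(log(1/x)) dx = − (log 2 · log(2n²))/(2n). -/
open Real MeasureTheory Set Filter intervalIntegral Topology

/-- helper: domination by an exponential on `Ioi a` gives integrability. -/
lemma expBound_integrableOn {f : ℝ → ℝ} {a C b : ℝ} (hb : 0 < b)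
    (hm : AEStronglyMeasurable f (volume.restrict (Ioi a)))
    (h : ∀ t ∈ Ioi a, |f t| ≤ C * Real.exp (-(b * t))) :
    IntegrableOn f (Ioi a) := by
  have hint : IntegrableOn (fun t => C * Real.exp (-b * t)) (Ioi a) :=
    (exp_neg_integrableOn_Ioi a hb).const_mul C
  refine hint.integrable.mono hm ?_
  rw [ae_restrict_iff' measurableSet_Ioi]
  filter_upwards with t ht
  have := h t ht
  rw [Real.norm_eq_abs, Real.norm_eq_abs]
  refine le_trans (by simpa [neg_mul] using this) (le_abs_self _)

lemma integrableOn_log_Ioc01 : IntegrableOn Real.log (Ioc (0:ℝ) 1) := by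
  have hr : IntegrableOn (fun x : ℝ => 2 * x ^ (-(1:ℝ)/2)) (Ioc (0:ℝ) 1) := by
    have h2 : IntervalIntegrable (fun x : ℝ => x ^ (-(1:ℝ)/2)) volume 0 1 :=
      intervalIntegrable_rpow' (by norm_num)
    rw [intervalIntegrable_iff_integrableOn_Ioc_of_le zero_le_one] at h2
    exact h2.const_mul 2
  refine hr.integrable.mono ?_ ?_
  · exact (Real.measurable_log).aestronglyMeasurable
  · rw [ae_restrict_iff' measurableSet_Ioc]
    filter_upwards with t ht
    have ht0 : 0 < t := ht.1
    have hlog : Real.log t ≤ 0 := Real.log_nonpos ht0.le ht.2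
    have hpos : (0:ℝ) < t ^ (-(1:ℝ)/2) := Real.rpow_pos_of_pos ht0 _
    rw [Real.norm_eq_abs, Real.norm_eq_abs, abs_of_nonpos hlog,
      abs_of_pos (by positivity : (0:ℝ) < 2 * t ^ (-(1:ℝ)/2))]
    have key : Real.log (t ^ (-(1:ℝ)/2)) ≤ t ^ (-(1:ℝ)/2) - 1 :=
      Real.log_le_sub_one_of_pos hpos
    rw [Real.log_rpow ht0] at key
    nlinarith

lemma contOn_h : ContinuousOn (fun t : ℝ => Real.log t / (Real.exp t + 1)) (Ioi 0) := by
  apply ContinuousOn.div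
  · exact Real.continuousOn_log.mono (fun x hx => ne_of_gt hx)
  · exact (Real.continuous_exp.continuousOn.add continuousOn_const)
  · intro x _; positivity

lemma contOn_p : ContinuousOn (fun t : ℝ => Real.log t / (Real.exp t - 1)) (Ioi 0) := by
  apply ContinuousOn.div
  · exact Real.continuousOn_log.mono (fun x hx => ne_of_gt hx)
  · exact (Real.continuous_exp.continuousOn.sub continuousOn_const)
  · intro x hx
    have : (1:ℝ) < Real.exp x := by
      rw [show (1:ℝ) = Real.exp 0 by simp]
      exact Real.exp_lt_exp.mpr hx
    linarith

lemma contOn_invsub : ContinuousOn (fun t : ℝ => (Real.exp t - 1)⁻¹) (Ioi 0) := by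
  apply ContinuousOn.inv₀
  · exact (Real.continuous_exp.continuousOn.sub continuousOn_const)
  · intro x hx
    have : (1:ℝ) < Real.exp x := by
      rw [show (1:ℝ) = Real.exp 0 by simp]
      exact Real.exp_lt_exp.mpr hx
    linarith

/-- `e^t - 1 ≥ e^t /2` for `t ≥ 1`. -/
lemma exp_sub_one_ge (t : ℝ) (ht : 1 ≤ t) : Real.exp t / 2 ≤ Real.exp t - 1 := by
  have h1 : (2:ℝ) ≤ Real.exp 1 := by
    have := Real.add_one_le_exp 1; linarith
  have h2 : Real.exp 1 ≤ Real.exp t := Real.exp_le_exp.mpr ht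
  nlinarith [Real.exp_pos t]

lemma log_abs_le (t : ℝ) (ht : 1 ≤ t) : |Real.log t| ≤ t := by
  rw [abs_of_nonneg (Real.log_nonneg ht)]
  have := Real.log_le_sub_one_of_pos (by linarith : (0:ℝ) < t)
  linarith

lemma t_le_two_exp_half (t : ℝ) : t ≤ 2 * Real.exp (t / 2) := by
  have := Real.add_one_le_exp (t / 2)
  nlinarith

/-- integrability of `log t / (e^t + 1)` on `(0, ∞)`. -/
lemma integrableOn_h : IntegrableOn (fun t : ℝ => Real.log t / (Real.exp t + 1)) (Ioi 0) := by
  have h1 : IntegrableOn (fun t : ℝ => Real.log t / (Real.exp t + 1)) (Ioc 0 1) := by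
    refine integrableOn_log_Ioc01.integrable.mono ?_ ?_
    · exact (contOn_h.mono Ioc_subset_Ioi_self).aestronglyMeasurable measurableSet_Ioc
    · rw [ae_restrict_iff' measurableSet_Ioc]
      filter_upwards with t ht
      rw [Real.norm_eq_abs, Real.norm_eq_abs, abs_div]
      have he : (1:ℝ) ≤ |Real.exp t + 1| := by
        rw [abs_of_pos (by positivity)]
        have := Real.exp_pos t; linarith
      calc |Real.log t| / |Real.exp t + 1| ≤ |Real.log t| / 1 :=
            div_le_div_of_nonneg_left (abs_nonneg _) one_pos he
        _ = |Real.log t| := by rw [div_one]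
  have h2 : IntegrableOn (fun t : ℝ => Real.log t / (Real.exp t + 1)) (Ioi 1) := by
    refine expBound_integrableOn (C := 2) (by norm_num : (0:ℝ) < 1/2)
      ((contOn_h.mono (Ioi_subset_Ioi zero_le_one)).aestronglyMeasurable measurableSet_Ioi) ?_
    intro t ht
    have ht1 : (1:ℝ) ≤ t := le_of_lt ht
    have hepos := Real.exp_pos t
    rw [abs_div, abs_of_pos (by positivity : (0:ℝ) < Real.exp t + 1)]
    have hlt : |Real.log t| / (Real.exp t + 1) ≤ t / Real.exp t := by
      apply div_le_div₀ (by positivity) (log_abs_le t ht1) hepos (by linarith)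
    refine hlt.trans ?_
    rw [div_le_iff₀ hepos]
    have : 2 * Real.exp (-(1/2 * t)) * Real.exp t = 2 * Real.exp (t/2) := by
      rw [mul_assoc, ← Real.exp_add]; ring_nf
    rw [this]
    exact t_le_two_exp_half t
  have := h1.union h2
  rwa [Ioc_union_Ioi_eq_Ioi zero_le_one] at this

/-- generic: continuous on `Ioi 0`, exp bound on `Ioi 1` ⟹ integrable on `Ioi a` for `a > 0`. -/
lemma integrableOn_Ioi_of_pos {f : ℝ → ℝ} {a : ℝ} (ha : 0 < a)
    (hc : ContinuousOn f (Ioi 0))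
    (h1 : IntegrableOn f (Ioi 1)) : IntegrableOn f (Ioi a) := by
  rcases le_or_gt a 1 with hle | hlt
  · have hIcc : IntegrableOn f (Icc a 1) :=
      (hc.mono (fun x hx => lt_of_lt_of_le ha hx.1)).integrableOn_Icc
    have := (hIcc.mono_set Ioc_subset_Icc_self).union h1
    rwa [Ioc_union_Ioi_eq_Ioi hle] at this
  · exact h1.mono_set (Ioi_subset_Ioi hlt.le)

lemma integrableOn_p_Ioi1 : IntegrableOn (fun t : ℝ => Real.log t / (Real.exp t - 1)) (Ioi 1) := by
  refine expBound_integrableOn (C := 4) (by norm_num : (0:ℝ) < 1/2)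
    ((contOn_p.mono (Ioi_subset_Ioi zero_le_one)).aestronglyMeasurable measurableSet_Ioi) ?_
  intro t ht
  have ht1 : (1:ℝ) ≤ t := le_of_lt ht
  have hepos := Real.exp_pos t
  have hden : Real.exp t / 2 ≤ Real.exp t - 1 := exp_sub_one_ge t ht1
  have hdenpos : (0:ℝ) < Real.exp t - 1 := lt_of_lt_of_le (by positivity) hden
  rw [abs_div, abs_of_pos hdenpos]
  have hlt : |Real.log t| / (Real.exp t - 1) ≤ t / (Real.exp t / 2) :=
    div_le_div₀ (by positivity) (log_abs_le t ht1) (by positivity) hden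
  refine hlt.trans ?_
  rw [div_le_iff₀ (by positivity)]
  have : 4 * Real.exp (-(1/2 * t)) * (Real.exp t / 2) = 2 * Real.exp (t/2) := by
    rw [show 4 * Real.exp (-(1/2 * t)) * (Real.exp t / 2) = 2 * (Real.exp (-(1/2*t)) * Real.exp t) by ring,
      ← Real.exp_add]
    ring_nf
  rw [this]
  exact t_le_two_exp_half t

lemma integrableOn_p {a : ℝ} (ha : 0 < a) :
    IntegrableOn (fun t : ℝ => Real.log t / (Real.exp t - 1)) (Ioi a) :=
  integrableOn_Ioi_of_pos ha contOn_p integrableOn_p_Ioi1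

lemma integrableOn_invsub {a : ℝ} (ha : 0 < a) :
    IntegrableOn (fun t : ℝ => (Real.exp t - 1)⁻¹) (Ioi a) := by
  refine integrableOn_Ioi_of_pos ha contOn_invsub ?_
  refine expBound_integrableOn (C := 2) (by norm_num : (0:ℝ) < 1)
    ((contOn_invsub.mono (Ioi_subset_Ioi zero_le_one)).aestronglyMeasurable measurableSet_Ioi) ?_
  intro t ht
  have ht1 : (1:ℝ) ≤ t := le_of_lt ht
  have hden : Real.exp t / 2 ≤ Real.exp t - 1 := exp_sub_one_ge t ht1
  have hdenpos : (0:ℝ) < Real.exp t - 1 := lt_of_lt_of_le (by positivity) hden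
  rw [abs_of_pos (inv_pos.mpr hdenpos)]
  have h2 : (Real.exp t - 1)⁻¹ ≤ (Real.exp t / 2)⁻¹ :=
    inv_anti₀ (by positivity) hden
  refine h2.trans ?_
  rw [Real.exp_neg]
  rw [inv_div, div_le_iff₀ (Real.exp_pos t), one_mul, mul_assoc, inv_mul_cancel₀ (Real.exp_pos t).ne']
  norm_num

lemma integrableOn_invadd {a : ℝ} :
    IntegrableOn (fun t : ℝ => (Real.exp t + 1)⁻¹) (Ioi a) := by
  have hm : AEStronglyMeasurable (fun t : ℝ => (Real.exp t + 1)⁻¹) (volume.restrict (Ioi a)) := by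
    apply Continuous.aestronglyMeasurable
    exact (Real.continuous_exp.add continuous_const).inv₀ (fun x => (by positivity : (0:ℝ) < Real.exp x + 1).ne')
  refine (exp_neg_integrableOn_Ioi a one_pos).integrable.mono hm ?_
  rw [ae_restrict_iff' measurableSet_Ioi]
  filter_upwards with t _
  rw [Real.norm_eq_abs, Real.norm_eq_abs, abs_of_pos (by positivity : (0:ℝ) < (Real.exp t + 1)⁻¹),
    abs_of_pos (Real.exp_pos _), neg_mul, one_mul, Real.exp_neg]
  exact inv_anti₀ (Real.exp_pos t) (by linarith [Real.exp_pos t])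

lemma integral_invadd (a : ℝ) :
    ∫ t in Ioi a, (Real.exp t + 1)⁻¹ = Real.log (1 + Real.exp (-a)) := by
  have hderiv : ∀ t ∈ Ioi a, HasDerivAt (fun t => -Real.log (1 + Real.exp (-t)))
      ((Real.exp t + 1)⁻¹) t := by
    intro t _
    have h1 : HasDerivAt (fun t : ℝ => 1 + Real.exp (-t)) (-Real.exp (-t)) t := by
      simpa using (((hasDerivAt_id t).neg).exp.const_add 1)
    have h2 : HasDerivAt (fun t => -Real.log (1 + Real.exp (-t))) _ t := (h1.log (by positivity)).neg
    convert h2 using 1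
    have he := Real.exp_pos t
    rw [Real.exp_neg]
    field_simp
  have htend : Tendsto (fun t => -Real.log (1 + Real.exp (-t))) atTop (𝓝 0) := by
    have h1 : Tendsto (fun t : ℝ => 1 + Real.exp (-t)) atTop (𝓝 1) := by
      simpa using (Real.tendsto_exp_neg_atTop_nhds_zero.const_add 1)
    have := ((Real.continuousAt_log one_ne_zero).tendsto.comp h1).neg
    simpa using this
  have hcont : ContinuousWithinAt (fun t => -Real.log (1 + Real.exp (-t))) (Ici a) a := by
    apply Continuous.continuousWithinAt
    refine ((continuous_const.add (Real.continuous_exp.comp continuous_neg)).log ?_).neg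
    intro x
    have := Real.exp_pos (-x)
    simp only [Pi.add_apply, Function.comp_apply]
    positivity
  rw [integral_Ioi_of_hasDerivAt_of_tendsto hcont hderiv integrableOn_invadd htend]
  simp

lemma integral_invsub {a : ℝ} (ha : 0 < a) :
    ∫ t in Ioi a, (Real.exp t - 1)⁻¹ = -Real.log (1 - Real.exp (-a)) := by
  have hpos : ∀ t : ℝ, 0 < t → 0 < 1 - Real.exp (-t) := by
    intro t ht
    have : Real.exp (-t) < 1 := Real.exp_lt_one_iff.mpr (by linarith)
    linarith
  have hderiv : ∀ t ∈ Ioi a, HasDerivAt (fun t => Real.log (1 - Real.exp (-t)))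
      ((Real.exp t - 1)⁻¹) t := by
    intro t ht
    have h1 : HasDerivAt (fun t : ℝ => 1 - Real.exp (-t)) (Real.exp (-t)) t := by
      simpa using (((hasDerivAt_id t).neg).exp.const_sub 1)
    have h2 := h1.log (ne_of_gt (hpos t (lt_trans ha ht)))
    convert h2 using 1
    have he := Real.exp_pos t
    have h3 := hpos t (lt_trans ha ht)
    rw [Real.exp_neg] at h3 ⊢
    field_simp
  have htend : Tendsto (fun t => Real.log (1 - Real.exp (-t))) atTop (𝓝 0) := by
    have h1 : Tendsto (fun t : ℝ => 1 - Real.exp (-t)) atTop (𝓝 1) := by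
      simpa using (Real.tendsto_exp_neg_atTop_nhds_zero.const_sub 1)
    have := (Real.continuousAt_log one_ne_zero).tendsto.comp h1
    simpa [Function.comp_def] using this
  have hcont : ContinuousWithinAt (fun t => Real.log (1 - Real.exp (-t))) (Ici a) a := by
    apply ContinuousOn.continuousWithinAt (s := Ici a)
    · apply ContinuousOn.log
      · exact (continuous_const.sub (Real.continuous_exp.comp continuous_neg)).continuousOn
      · intro x hx
        exact ne_of_gt (hpos x (lt_of_lt_of_le ha hx))
    · exact Set.self_mem_Ici
  rw [integral_Ioi_of_hasDerivAt_of_tendsto hcont hderiv (integrableOn_invsub ha) htend]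
  simp

/-- `|1/(e^t-1) - 1/t| ≤ 1` for `t > 0`. -/
lemma aux_inv_bound {t : ℝ} (ht : 0 < t) : |(Real.exp t - 1)⁻¹ - t⁻¹| ≤ 1 := by
  have hE : 0 < Real.exp t - 1 := by
    have : (1:ℝ) < Real.exp t := by
      rw [show (1:ℝ) = Real.exp 0 by simp]; exact Real.exp_lt_exp.mpr ht
    linarith
  have h1 : t ≤ Real.exp t - 1 := by have := Real.add_one_le_exp t; linarith
  have h2 : Real.exp t - 1 ≤ t * Real.exp t := by
    have h3 := Real.add_one_le_exp (-t)
    have h4 : 1 - Real.exp (-t) ≤ t := by linarith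
    have h5 := Real.exp_pos t
    have h6 : Real.exp (-t) * Real.exp t = 1 := by rw [← Real.exp_add]; simp
    nlinarith
  have hle : (Real.exp t - 1)⁻¹ ≤ t⁻¹ := inv_anti₀ ht h1
  rw [abs_sub_comm, abs_of_nonneg (by linarith)]
  rw [inv_eq_one_div, inv_eq_one_div, div_sub_div _ _ (ne_of_gt ht) (ne_of_gt hE),
    div_le_one (by positivity)]
  nlinarith

/-- partial fractions : `1/(e^t+1) = 1/(e^t-1) - 2/(e^{2t}-1)` for `t > 0`, in form
with `log t` numerators. -/
lemma h_eq_p_sub_q {t : ℝ} (ht : 0 < t) :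
    Real.log t / (Real.exp t + 1) =
      Real.log t / (Real.exp t - 1) - 2 * (Real.log t / (Real.exp (2*t) - 1)) := by
  have h1 : (1:ℝ) < Real.exp t := by
    rw [show (1:ℝ) = Real.exp 0 by simp]; exact Real.exp_lt_exp.mpr ht
  have h2 : Real.exp (2*t) = Real.exp t * Real.exp t := by
    rw [← Real.exp_add]; ring_nf
  have h3 : (0:ℝ) < Real.exp t + 1 := by linarith
  have h4 : (0:ℝ) < Real.exp t - 1 := by linarith
  have h5 : Real.exp (2*t) - 1 = (Real.exp t - 1) * (Real.exp t + 1) := by rw [h2]; ring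
  rw [h5]
  field_simp
  ring

/-- `∫_ε^{2ε} log t / t = log 2 * log ε + (log 2)^2/2`. -/
lemma integral_log_div_self {ε : ℝ} (hε : 0 < ε) :
    ∫ t in ε..(2*ε), Real.log t / t = Real.log 2 * Real.log ε + (Real.log 2)^2 / 2 := by
  have hle : ε ≤ 2*ε := by linarith
  have hderiv : ∀ t ∈ Set.uIcc ε (2*ε), HasDerivAt (fun t => (Real.log t)^2 / 2)
      (Real.log t / t) t := by
    intro t ht
    rw [Set.uIcc_of_le hle] at ht
    have ht0 : 0 < t := lt_of_lt_of_le hε ht.1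
    have h1 := (Real.hasDerivAt_log (ne_of_gt ht0))
    have h2 := ((h1.mul h1).div_const 2)
    have h3 : HasDerivAt (fun t => (Real.log t)^2 / 2)
        ((t⁻¹ * Real.log t + Real.log t * t⁻¹) / 2) t := by
      simpa [pow_two] using h2
    convert h3 using 1
    field_simp
    ring
  have hcont : IntervalIntegrable (fun t => Real.log t / t) volume ε (2*ε) := by
    apply ContinuousOn.intervalIntegrable
    apply ContinuousOn.div
    · apply Real.continuousOn_log.mono
      intro x hx
      rw [Set.uIcc_of_le hle] at hx
      exact ne_of_gt (lt_of_lt_of_le hε hx.1)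
    · exact continuousOn_id
    · intro x hx
      rw [Set.uIcc_of_le hle] at hx
      exact ne_of_gt (lt_of_lt_of_le hε hx.1)
  rw [intervalIntegral.integral_eq_sub_of_hasDerivAt hderiv hcont]
  rw [Real.log_mul two_ne_zero (ne_of_gt hε)]
  ring

lemma integrableOn_q {a : ℝ} (ha : 0 < a) :
    IntegrableOn (fun t : ℝ => Real.log t / (Real.exp (2*t) - 1)) (Ioi a) := by
  apply MeasureTheory.Integrable.mono (integrableOn_p ha)
  · apply ContinuousOn.aestronglyMeasurable _ measurableSet_Ioi
    apply ContinuousOn.div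
    · exact Real.continuousOn_log.mono (fun x hx => ne_of_gt (lt_trans ha hx))
    · exact ((Real.continuous_exp.comp (continuous_const.mul continuous_id)).continuousOn.sub
        continuousOn_const)
    · intro x hx
      have hx0 : 0 < x := lt_trans ha hx
      have : (1:ℝ) < Real.exp (2*x) := by
        rw [show (1:ℝ) = Real.exp 0 by simp]; exact Real.exp_lt_exp.mpr (by linarith)
      intro hc
      rw [sub_eq_zero] at hc
      exact absurd hc.symm (ne_of_lt this)
  · rw [ae_restrict_iff' measurableSet_Ioi]
    filter_upwards with t ht
    have ht0 : 0 < t := lt_trans ha ht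
    have h1 : (1:ℝ) < Real.exp t := by
      rw [show (1:ℝ) = Real.exp 0 by simp]; exact Real.exp_lt_exp.mpr ht0
    have h2 : Real.exp t ≤ Real.exp (2*t) := Real.exp_le_exp.mpr (by linarith)
    rw [Real.norm_eq_abs, Real.norm_eq_abs, abs_div, abs_div,
      abs_of_pos (by linarith : (0:ℝ) < Real.exp (2*t) - 1),
      abs_of_pos (by linarith : (0:ℝ) < Real.exp t - 1)]
    exact div_le_div_of_nonneg_left (abs_nonneg _) (by linarith) (by linarith)

lemma decomp {ε : ℝ} (hε : 0 < ε) :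
    ∫ t in Ioi ε, Real.log t / (Real.exp t + 1) =
      (∫ t in ε..(2*ε), Real.log t / (Real.exp t - 1)) +
        Real.log 2 * (-Real.log (1 - Real.exp (-(2*ε)))) := by
  have h2ε : 0 < 2*ε := by linarith
  have hle : ε ≤ 2*ε := by linarith
  have hpI : IntegrableOn (fun t : ℝ => Real.log t / (Real.exp t - 1)) (Ioi ε) :=
    integrableOn_p hε
  have hqI := integrableOn_q hε
  -- step 1
  have step1 : ∫ t in Ioi ε, Real.log t / (Real.exp t + 1) =
      (∫ t in Ioi ε, Real.log t / (Real.exp t - 1)) -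
        ∫ t in Ioi ε, 2 * (Real.log t / (Real.exp (2*t) - 1)) := by
    rw [← integral_sub hpI (hqI.const_mul 2)]
    apply setIntegral_congr_fun measurableSet_Ioi
    intro t ht
    exact h_eq_p_sub_q (lt_trans hε ht)
  -- step 2 : change of variables for the q-part
  have step2 : ∫ t in Ioi ε, 2 * (Real.log t / (Real.exp (2*t) - 1)) =
      ∫ s in Ioi (2*ε), Real.log (s/2) / (Real.exp s - 1) := by
    rw [MeasureTheory.integral_const_mul]
    have hcv := MeasureTheory.integral_comp_mul_left_Ioi
      (fun s => Real.log (s/2) / (Real.exp s - 1)) ε two_pos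
    have heq : ∀ x : ℝ, Real.log (2*x/2) / (Real.exp (2*x) - 1)
        = Real.log x / (Real.exp (2*x) - 1) := by
      intro x; rw [show (2*x/2 : ℝ) = x by ring]
    simp only [heq] at hcv
    rw [hcv, smul_eq_mul]
    ring
  -- step 3 : split the log
  have step3 : ∫ s in Ioi (2*ε), Real.log (s/2) / (Real.exp s - 1) =
      (∫ s in Ioi (2*ε), Real.log s / (Real.exp s - 1)) -
        Real.log 2 * (-Real.log (1 - Real.exp (-(2*ε)))) := by
    have hcong : ∀ s ∈ Ioi (2*ε), Real.log (s/2) / (Real.exp s - 1) =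
        Real.log s / (Real.exp s - 1) - Real.log 2 * (Real.exp s - 1)⁻¹ := by
      intro s hs
      have hs0 : 0 < s := lt_trans h2ε hs
      rw [Real.log_div (ne_of_gt hs0) two_ne_zero, sub_div, div_eq_mul_inv (Real.log 2)]
    rw [setIntegral_congr_fun measurableSet_Ioi hcong,
      integral_sub (integrableOn_p h2ε) ((integrableOn_invsub h2ε).const_mul _),
      MeasureTheory.integral_const_mul, integral_invsub h2ε]
  -- step 4 : split Ioi ε = Ioc ε 2ε ∪ Ioi 2ε for p
  have step4 : ∫ t in Ioi ε, Real.log t / (Real.exp t - 1) =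
      (∫ t in ε..(2*ε), Real.log t / (Real.exp t - 1)) +
        ∫ t in Ioi (2*ε), Real.log t / (Real.exp t - 1) := by
    rw [intervalIntegral.integral_of_le hle,
      ← setIntegral_union Ioc_disjoint_Ioi_same measurableSet_Ioi
        (hpI.mono_set Ioc_subset_Ioi_self) (integrableOn_p h2ε),
      Ioc_union_Ioi_eq_Ioi hle]
  rw [step1, step2, step3, step4]
  ring

lemma tendsto_F_J :
    Tendsto (fun ε : ℝ => ∫ t in Ioi ε, Real.log t / (Real.exp t + 1)) (𝓝[>] (0:ℝ))
      (𝓝 (∫ t in Ioi (0:ℝ), Real.log t / (Real.exp t + 1))) := by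
  set h : ℝ → ℝ := fun t => Real.log t / (Real.exp t + 1) with hh
  have key : Tendsto (fun ε : ℝ => ∫ t, (Ioi ε).indicator h t ∂(volume.restrict (Ioi 0)))
      (𝓝[>] (0:ℝ)) (𝓝 (∫ t, h t ∂(volume.restrict (Ioi 0)))) := by
    apply MeasureTheory.tendsto_integral_filter_of_dominated_convergence (fun t => |h t|)
    · filter_upwards with ε
      exact integrableOn_h.aestronglyMeasurable.indicator measurableSet_Ioi
    · filter_upwards with ε
      filter_upwards with t
      rw [Real.norm_eq_abs]
      by_cases ht : t ∈ Ioi ε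
      · rw [indicator_of_mem ht]
      · rw [indicator_of_notMem ht, abs_zero]; exact abs_nonneg _
    · exact integrableOn_h.abs
    · rw [ae_restrict_iff' measurableSet_Ioi]
      filter_upwards with t ht
      have hev : ∀ᶠ ε in 𝓝[>] (0:ℝ), (Ioi ε).indicator h t = h t := by
        filter_upwards [Ioo_mem_nhdsGT ht] with ε hε
        exact indicator_of_mem (hε.2 : ε < t) h
      exact Tendsto.congr' (Filter.EventuallyEq.symm hev) tendsto_const_nhds
  refine key.congr' ?_
  filter_upwards [self_mem_nhdsWithin] with ε (hε : 0 < ε)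
  rw [MeasureTheory.integral_indicator measurableSet_Ioi, Measure.restrict_restrict measurableSet_Ioi,
    inter_eq_self_of_subset_left (Ioi_subset_Ioi hε.le)]

lemma tendsto_ratio :
    Tendsto (fun ε : ℝ => ε / (1 - Real.exp (-(2*ε)))) (𝓝[>] (0:ℝ)) (𝓝 (1/2)) := by
  have hd : HasDerivAt (fun x : ℝ => 1 - Real.exp (-(2*x))) 2 0 := by
    have h1 : HasDerivAt (fun x : ℝ => -(2*x)) (-2) 0 := by
      simpa using ((hasDerivAt_id (0:ℝ)).const_mul 2).fun_neg
    have h2 := h1.exp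
    have h3 := h2.const_sub 1
    norm_num at h3
    convert h3 using 1
  have hslope := hasDerivAt_iff_tendsto_slope.mp hd
  have hslope' : Tendsto (slope (fun x : ℝ => 1 - Real.exp (-(2*x))) 0) (𝓝[>] (0:ℝ)) (𝓝 2) :=
    hslope.mono_left (nhdsWithin_mono _ (fun x hx => ne_of_gt hx))
  have hinv := hslope'.inv₀ (two_ne_zero)
  have heq : (fun x : ℝ => (slope (fun x : ℝ => 1 - Real.exp (-(2*x))) 0 x)⁻¹)
      =ᶠ[𝓝[>] (0:ℝ)] (fun ε : ℝ => ε / (1 - Real.exp (-(2*ε)))) := by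
    filter_upwards [self_mem_nhdsWithin] with ε (hε : 0 < ε)
    rw [slope_def_field]
    rw [show -(2*(0:ℝ)) = 0 by ring, Real.exp_zero, sub_self, sub_zero, sub_zero, inv_div]
  have := Tendsto.congr' heq hinv
  simpa [one_div] using this

lemma one_sub_exp_pos {ε : ℝ} (hε : 0 < ε) : 0 < 1 - Real.exp (-(2*ε)) := by
  have : Real.exp (-(2*ε)) < 1 := Real.exp_lt_one_iff.mpr (by linarith)
  linarith

lemma p_interval_split {ε : ℝ} (hε : 0 < ε) :
    ∫ t in ε..(2*ε), Real.log t / (Real.exp t - 1) =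
      (∫ t in ε..(2*ε), Real.log t / t) +
        ∫ t in ε..(2*ε), Real.log t * ((Real.exp t - 1)⁻¹ - t⁻¹) := by
  have hle : ε ≤ 2*ε := by linarith
  have hpos : ∀ x ∈ Set.uIcc ε (2*ε), 0 < x := by
    intro x hx
    rw [Set.uIcc_of_le hle] at hx
    exact lt_of_lt_of_le hε hx.1
  have hE : ∀ x ∈ Set.uIcc ε (2*ε), Real.exp x - 1 ≠ 0 := by
    intro x hx
    have : (1:ℝ) < Real.exp x := by
      rw [show (1:ℝ) = Real.exp 0 by simp]; exact Real.exp_lt_exp.mpr (hpos x hx)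
    linarith
  have ii1 : IntervalIntegrable (fun t => Real.log t / t) volume ε (2*ε) := by
    apply ContinuousOn.intervalIntegrable
    exact ContinuousOn.div
      (Real.continuousOn_log.mono (fun x hx => ne_of_gt (hpos x hx)))
      continuousOn_id (fun x hx => ne_of_gt (hpos x hx))
  have ii2 : IntervalIntegrable (fun t => Real.log t * ((Real.exp t - 1)⁻¹ - t⁻¹))
      volume ε (2*ε) := by
    apply ContinuousOn.intervalIntegrable
    apply ContinuousOn.mul
      (Real.continuousOn_log.mono (fun x hx => ne_of_gt (hpos x hx)))
    apply ContinuousOn.sub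
    · exact ContinuousOn.inv₀ (Real.continuous_exp.continuousOn.sub continuousOn_const) hE
    · exact ContinuousOn.inv₀ continuousOn_id (fun x hx => ne_of_gt (hpos x hx))
  rw [← intervalIntegral.integral_add ii1 ii2]
  apply intervalIntegral.integral_congr
  intro x hx
  have hx0 := hpos x hx
  have hEx : Real.exp x - 1 ≠ 0 := hE x hx
  field_simp
  ring

lemma tendsto_R :
    Tendsto (fun ε : ℝ => ∫ t in ε..(2*ε), Real.log t * ((Real.exp t - 1)⁻¹ - t⁻¹))
      (𝓝[>] (0:ℝ)) (𝓝 0) := by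
  have hg : Tendsto (fun ε : ℝ => -Real.log ε * ε) (𝓝[>] (0:ℝ)) (𝓝 0) := by
    have := (tendsto_log_mul_rpow_nhdsGT_zero one_pos).neg
    simp only [Real.rpow_one, neg_zero] at this
    refine this.congr (fun x => by ring)
  apply squeeze_zero_norm' _ hg
  filter_upwards [Ioo_mem_nhdsGT one_half_pos] with ε hε
  have hε0 : 0 < ε := hε.1
  have hε1 : 2*ε ≤ 1 := by have := hε.2; linarith
  have hle : ε ≤ 2*ε := by linarith
  have hbound : ∀ x ∈ Set.uIoc ε (2*ε), ‖Real.log x * ((Real.exp x - 1)⁻¹ - x⁻¹)‖ ≤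
      -Real.log ε := by
    intro x hx
    rw [Set.uIoc_of_le hle] at hx
    have hx0 : 0 < x := lt_trans hε0 hx.1
    have hlogx : Real.log x ≤ 0 := Real.log_nonpos hx0.le (le_trans hx.2 hε1)
    have hmono : Real.log ε ≤ Real.log x := Real.log_le_log hε0 hx.1.le
    rw [Real.norm_eq_abs, abs_mul]
    calc |Real.log x| * |(Real.exp x - 1)⁻¹ - x⁻¹| ≤ |Real.log x| * 1 :=
          mul_le_mul_of_nonneg_left (aux_inv_bound hx0) (abs_nonneg _)
      _ = -Real.log x := by rw [mul_one, abs_of_nonpos hlogx]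
      _ ≤ -Real.log ε := by linarith
  have := intervalIntegral.norm_integral_le_of_norm_le_const hbound
  rw [show |2*ε - ε| = ε by rw [show 2*ε - ε = ε by ring]; exact abs_of_pos hε0] at this
  exact this

lemma vardi : ∫ t in Ioi (0:ℝ), Real.log t / (Real.exp t + 1) = -(Real.log 2)^2/2 := by
  have h2 : Tendsto (fun ε : ℝ => ∫ t in Ioi ε, Real.log t / (Real.exp t + 1))
      (𝓝[>] (0:ℝ)) (𝓝 (-(Real.log 2)^2/2)) := by
    have hlog : Tendsto (fun ε : ℝ => Real.log (ε / (1 - Real.exp (-(2*ε)))))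
        (𝓝[>] (0:ℝ)) (𝓝 (Real.log (1/2))) :=
      ((Real.continuousAt_log (by norm_num : (1/2:ℝ) ≠ 0)).tendsto).comp tendsto_ratio
    have hmain : Tendsto (fun ε : ℝ => (Real.log 2)^2/2 +
        Real.log 2 * Real.log (ε / (1 - Real.exp (-(2*ε)))) +
        ∫ t in ε..(2*ε), Real.log t * ((Real.exp t - 1)⁻¹ - t⁻¹))
        (𝓝[>] (0:ℝ)) (𝓝 (-(Real.log 2)^2/2)) := by
      have hsum : Tendsto (fun ε : ℝ => (Real.log 2)^2/2 +
          Real.log 2 * Real.log (ε / (1 - Real.exp (-(2*ε)))) +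
          ∫ t in ε..(2*ε), Real.log t * ((Real.exp t - 1)⁻¹ - t⁻¹))
          (𝓝[>] (0:ℝ)) (𝓝 ((Real.log 2)^2/2 + Real.log 2 * Real.log (1/2) + 0)) :=
        (tendsto_const_nhds.add (hlog.const_mul (Real.log 2))).add tendsto_R
      convert hsum using 2
      rw [one_div, Real.log_inv]
      ring
    refine hmain.congr' ?_
    filter_upwards [self_mem_nhdsWithin] with ε (hε : 0 < ε)
    rw [decomp hε, p_interval_split hε, integral_log_div_self hε,
      Real.log_div (ne_of_gt hε) (ne_of_gt (one_sub_exp_pos hε))]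
    ring
  exact tendsto_nhds_unique tendsto_F_J h2

lemma exp_neg_image : (fun t : ℝ => Real.exp (-t)) '' Ioi 0 = Ioo 0 1 := by
  ext x
  constructor
  · rintro ⟨t, ht, rfl⟩
    exact ⟨Real.exp_pos _, Real.exp_lt_one_iff.mpr (by simpa using ht)⟩
  · rintro ⟨hx0, hx1⟩
    refine ⟨-Real.log x, ?_, by simp [Real.exp_log hx0]⟩
    simpa using Real.log_neg hx0 hx1

lemma key_alg {u L : ℝ} (hu : 0 < u) (m : ℕ) :
    u * (u^m / (1 + u^(m+1)) * L) = L / ((u^(m+1))⁻¹ + 1) := by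
  have h1 : (0:ℝ) < u^(m+1) := pow_pos hu _
  have h2 : (0:ℝ) < 1 + u^(m+1) := by linarith
  field_simp
  ring

lemma change_of_var (m : ℕ) :
    ∫ x in Ioo (0:ℝ) 1, x^m/(1+x^(m+1)) * Real.log (Real.log (1/x)) =
      ∫ t in Ioi (0:ℝ), Real.log t / (Real.exp (((m:ℝ)+1)*t) + 1) := by
  have hderiv : ∀ t ∈ Ioi (0:ℝ), HasDerivWithinAt (fun t : ℝ => Real.exp (-t))
      (-Real.exp (-t)) (Ioi 0) t := by
    intro t _
    have h1 : HasDerivAt (fun t : ℝ => Real.exp (-t)) (Real.exp (-t) * (-1)) t :=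
      (hasDerivAt_neg t).exp
    simpa using h1.hasDerivWithinAt
  have hinj : InjOn (fun t : ℝ => Real.exp (-t)) (Ioi 0) := by
    intro a _ b _ hab
    have := Real.exp_injective hab
    linarith [neg_inj.mp this]
  rw [← exp_neg_image,
    integral_image_eq_integral_abs_deriv_smul measurableSet_Ioi hderiv hinj]
  apply setIntegral_congr_fun measurableSet_Ioi
  intro t ht
  have ht0 : (0:ℝ) < t := ht
  have hloglog : Real.log (Real.log (1 / Real.exp (-t))) = Real.log t := by
    rw [one_div, ← Real.exp_neg, neg_neg, Real.log_exp]
  simp only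
  rw [hloglog, abs_neg, abs_of_pos (Real.exp_pos _), smul_eq_mul,
    key_alg (Real.exp_pos (-t)) m]
  congr 2
  rw [← Real.exp_nat_mul, ← Real.exp_neg]
  push_cast
  ring_nf

lemma scaling {c : ℝ} (hc : 0 < c) :
    ∫ t in Ioi (0:ℝ), Real.log t / (Real.exp (c*t) + 1) =
      c⁻¹ * (-(Real.log 2)^2/2 - Real.log c * Real.log 2) := by
  have hcv := MeasureTheory.integral_comp_mul_left_Ioi
    (fun s => Real.log (s/c) / (Real.exp s + 1)) 0 hc
  have heq : ∀ x : ℝ, Real.log (c*x/c) / (Real.exp (c*x) + 1)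
      = Real.log x / (Real.exp (c*x) + 1) := by
    intro x; rw [mul_comm c x, mul_div_assoc, div_self (ne_of_gt hc), mul_one]
  simp only [heq, mul_zero] at hcv
  rw [hcv, smul_eq_mul]
  congr 1
  have hcong : ∀ s ∈ Ioi (0:ℝ), Real.log (s/c) / (Real.exp s + 1) =
      Real.log s / (Real.exp s + 1) - Real.log c * (Real.exp s + 1)⁻¹ := by
    intro s hs
    rw [Real.log_div (ne_of_gt hs) (ne_of_gt hc), sub_div, div_eq_mul_inv (Real.log c)]
  rw [setIntegral_congr_fun measurableSet_Ioi hcong,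
    integral_sub integrableOn_h (integrableOn_invadd.const_mul _),
    MeasureTheory.integral_const_mul, integral_invadd 0, vardi]
  norm_num

/-- For every positive integer `n`,
`∫_0^1 x^{n-1}/(1+x^n) · log(log(1/x)) dx = − (log 2 · log(2n²))/(2n)`. -/
theorem integral_loglog_inv_eq (n : ℕ) (hn : 1 ≤ n) :
    ∫ x in (0:ℝ)..1, x ^ (n - 1) / (1 + x ^ n) * Real.log (Real.log (1 / x)) =
      -(Real.log 2 * Real.log (2 * (n : ℝ) ^ 2)) / (2 * (n : ℝ)) := by
  obtain ⟨m, rfl⟩ : ∃ m, n = m + 1 := ⟨n - 1, (Nat.succ_pred_eq_of_pos hn).symm⟩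
  have hN : (0:ℝ) < (m:ℝ) + 1 := by positivity
  have h1 : ∫ x in (0:ℝ)..1, x ^ (m + 1 - 1) / (1 + x ^ (m+1)) * Real.log (Real.log (1 / x)) =
      ∫ x in Ioo (0:ℝ) 1, x^m/(1+x^(m+1)) * Real.log (Real.log (1/x)) := by
    rw [intervalIntegral.integral_of_le zero_le_one, MeasureTheory.integral_Ioc_eq_integral_Ioo]
    simp
  rw [h1, change_of_var m, scaling hN]
  have hlog : Real.log (2 * ((m:ℕ) + 1 : ℝ)^2) = Real.log 2 + 2 * Real.log ((m:ℝ)+1) := by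
    rw [Real.log_mul two_ne_zero (by positivity), Real.log_pow]
    push_cast
    ring
  push_cast
  rw [hlog]
  have hN' : ((m:ℝ) + 1) ≠ 0 := ne_of_gt hN
  field_simp
  ring
end

section
/- For every real q > 1, ∫_0^1 (1/(1+x)) · (log(1/x))^{q−1} · (log(log(1/x)))² dx = Γ''(q) η(q) + 2 Γ'(q) η'(q) + Γ(q) η''(q), where Γ', Γ'' are the first and second derivatives of the gamma function and η', η'' are the first and second derivatives of the Dirichlet eta function. -/
open MeasureTheory Real Set Filter

/-- The Dirichlet eta (alternating zeta) function `η(s) = ∑_{n=1}^∞ (−1)^{n−1} n^{−s}`,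
as a function of a real variable. -/
noncomputable def dirichletEtaReal (s : ℝ) : ℝ := ∑' n : ℕ, (-1 : ℝ) ^ n / ((n : ℝ) + 1) ^ s


namespace EtaGamma

lemma abs_log_le {δ t : ℝ} (hδ : 0 < δ) (ht : 0 < t) :
    |Real.log t| ≤ (t ^ δ + t ^ (-δ)) / δ := by
  have h1 : (0:ℝ) ≤ t ^ δ := (Real.rpow_pos_of_pos ht δ).le
  have h2 : (0:ℝ) ≤ t ^ (-δ) := (Real.rpow_pos_of_pos ht (-δ)).le
  rcases le_or_gt 1 t with h | h
  · rw [abs_of_nonneg (Real.log_nonneg h)]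
    have : Real.log (t ^ δ) ≤ t ^ δ - 1 :=
      Real.log_le_sub_one_of_pos (Real.rpow_pos_of_pos ht δ)
    rw [Real.log_rpow ht] at this
    rw [le_div_iff₀ hδ]
    nlinarith
  · rw [abs_of_nonpos (Real.log_nonpos ht.le h.le)]
    have : Real.log (t ^ (-δ)) ≤ t ^ (-δ) - 1 :=
      Real.log_le_sub_one_of_pos (Real.rpow_pos_of_pos ht (-δ))
    rw [Real.log_rpow ht] at this
    rw [le_div_iff₀ hδ]
    nlinarith

lemma contOn (a : ℝ) (k : ℕ) :
    ContinuousOn (fun t => Real.exp (-t) * t ^ (a - 1) * (Real.log t) ^ k) (Ioi (0:ℝ)) := by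
  intro t ht
  have h0 : t ≠ 0 := ne_of_gt ht
  exact (((Real.continuous_exp.comp continuous_neg).continuousAt.mul
    (Real.continuousAt_rpow_const t _ (Or.inl h0))).mul
    ((Real.continuousAt_log h0).pow k)).continuousWithinAt

lemma contOn_abs (a : ℝ) (k : ℕ) :
    ContinuousOn (fun t => Real.exp (-t) * t ^ (a - 1) * |Real.log t| ^ k) (Ioi (0:ℝ)) := by
  intro t ht
  have h0 : t ≠ 0 := ne_of_gt ht
  exact (((Real.continuous_exp.comp continuous_neg).continuousAt.mul
    (Real.continuousAt_rpow_const t _ (Or.inl h0))).mul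
    ((Real.continuousAt_log h0).abs.pow k)).continuousWithinAt

lemma log_pow_bound {δ t : ℝ} (hδ : 0 < δ) (ht : 0 < t) (k : ℕ) :
    |Real.log t| ^ k ≤ (2/δ)^k * (t ^ ((k:ℝ)*δ) + t ^ (-((k:ℝ)*δ))) := by
  have h1 : (0:ℝ) < t ^ δ := Real.rpow_pos_of_pos ht δ
  have h2 : (0:ℝ) < t ^ (-δ) := Real.rpow_pos_of_pos ht (-δ)
  set M := max (t ^ δ) (t ^ (-δ)) with hM
  have hM0 : 0 < M := lt_max_of_lt_left h1
  calc |Real.log t| ^ k ≤ ((t ^ δ + t ^ (-δ)) / δ) ^ k :=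
        pow_le_pow_left₀ (abs_nonneg _) (abs_log_le hδ ht) k
    _ ≤ ((2 * M) / δ) ^ k := by
        apply pow_le_pow_left₀ (by positivity)
        gcongr
        rw [two_mul]
        exact add_le_add (le_max_left _ _) (le_max_right _ _)
    _ = (2/δ)^k * M ^ k := by rw [← mul_pow]; ring_nf
    _ ≤ (2/δ)^k * (t ^ ((k:ℝ)*δ) + t ^ (-((k:ℝ)*δ))) := by
        apply mul_le_mul_of_nonneg_left ?_ (by positivity)
        have e1 : (t ^ δ) ^ k = t ^ ((k:ℝ)*δ) := by
          rw [← Real.rpow_natCast (t ^ δ) k, ← Real.rpow_mul ht.le, mul_comm]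
        have e2 : (t ^ (-δ)) ^ k = t ^ (-((k:ℝ)*δ)) := by
          rw [← Real.rpow_natCast (t ^ (-δ)) k, ← Real.rpow_mul ht.le]
          ring_nf
        rcases max_choice (t ^ δ) (t ^ (-δ)) with h | h <;> rw [hM, h]
        · rw [e1]; nlinarith [Real.rpow_pos_of_pos ht (-((k:ℝ)*δ))]
        · rw [e2]; nlinarith [Real.rpow_pos_of_pos ht ((k:ℝ)*δ)]

lemma integrable_abs (a : ℝ) (ha : 0 < a) (k : ℕ) :
    IntegrableOn (fun t => Real.exp (-t) * t ^ (a - 1) * |Real.log t| ^ k) (Ioi (0:ℝ)) := by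
  set δ : ℝ := a / (2 * (k + 1)) with hδdef
  have hδ : 0 < δ := by positivity
  have hka : (k : ℝ) * δ ≤ a / 2 := by
    rw [hδdef, mul_comm, div_mul_eq_mul_div, div_le_div_iff₀ (by positivity) two_pos]
    nlinarith [ha.le, (Nat.cast_nonneg k : (0:ℝ) ≤ k)]
  have h1 : 0 < a + (k:ℝ) * δ := by positivity
  have h2 : 0 < a - (k:ℝ) * δ := by linarith
  have hint : IntegrableOn (fun t => ((2/δ)^k) *
      (Real.exp (-t) * t ^ ((a + (k:ℝ)*δ) - 1) + Real.exp (-t) * t ^ ((a - (k:ℝ)*δ) - 1)))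
      (Ioi (0:ℝ)) :=
    ((Real.GammaIntegral_convergent h1).add (Real.GammaIntegral_convergent h2)).const_mul _
  refine Integrable.mono' hint ((contOn_abs a k).aestronglyMeasurable measurableSet_Ioi) ?_
  rw [ae_restrict_iff' measurableSet_Ioi]
  filter_upwards with t ht
  have ht : (0:ℝ) < t := ht
  have hexp : (0:ℝ) < Real.exp (-t) := Real.exp_pos _
  have hpow : (0:ℝ) < t ^ (a - 1) := Real.rpow_pos_of_pos ht _
  rw [Real.norm_eq_abs, abs_of_nonneg (by positivity)]
  have hlog := log_pow_bound hδ ht k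
  have e1 : t ^ ((a + (k:ℝ)*δ) - 1) = t ^ (a-1) * t ^ ((k:ℝ)*δ) := by
    rw [← Real.rpow_add ht]; ring_nf
  have e2 : t ^ ((a - (k:ℝ)*δ) - 1) = t ^ (a-1) * t ^ (-((k:ℝ)*δ)) := by
    rw [← Real.rpow_add ht]; ring_nf
  rw [e1, e2]
  nlinarith [mul_le_mul_of_nonneg_left hlog (by positivity : (0:ℝ) ≤ Real.exp (-t) * t ^ (a-1))]

end EtaGamma

namespace EtaGamma

noncomputable def G (k : ℕ) (s : ℝ) : ℝ :=
  ∫ t in Ioi (0:ℝ), Real.exp (-t) * t ^ (s - 1) * (Real.log t) ^ k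

lemma integrable_G (a : ℝ) (ha : 0 < a) (k : ℕ) :
    IntegrableOn (fun t => Real.exp (-t) * t ^ (a - 1) * (Real.log t) ^ k) (Ioi (0:ℝ)) := by
  refine (integrable_abs a ha k).mono'
    ((contOn a k).aestronglyMeasurable measurableSet_Ioi) ?_
  rw [ae_restrict_iff' measurableSet_Ioi]
  filter_upwards with t ht
  have ht : (0:ℝ) < t := ht
  have hexp : (0:ℝ) ≤ Real.exp (-t) := (Real.exp_pos _).le
  have hpow : (0:ℝ) ≤ t ^ (a - 1) := (Real.rpow_pos_of_pos ht _).le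
  rw [Real.norm_eq_abs, abs_mul, abs_mul, abs_pow,
    abs_of_nonneg hexp, abs_of_nonneg hpow]

lemma rpow_sub_one_bound {s lo hi t : ℝ} (hlo : lo ≤ s) (hhi : s ≤ hi) (ht : 0 < t) :
    t ^ (s - 1) ≤ t ^ (lo - 1) + t ^ (hi - 1) := by
  rcases le_or_gt 1 t with h | h
  · have : t ^ (s-1) ≤ t ^ (hi-1) :=
      Real.rpow_le_rpow_of_exponent_le h (by linarith)
    nlinarith [Real.rpow_pos_of_pos ht (lo-1)]
  · have : t ^ (s-1) ≤ t ^ (lo-1) :=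
      Real.rpow_le_rpow_of_exponent_ge ht h.le (by linarith)
    nlinarith [Real.rpow_pos_of_pos ht (hi-1)]

lemma hasDerivAt_G (k : ℕ) {q : ℝ} (hq : 0 < q) :
    HasDerivAt (G k) (G (k + 1) q) q := by
  have hε : (0:ℝ) < q / 2 := by positivity
  have key := hasDerivAt_integral_of_dominated_loc_of_deriv_le
    (μ := volume.restrict (Ioi (0:ℝ)))
    (F := fun s t => Real.exp (-t) * t ^ (s - 1) * (Real.log t) ^ k)
    (F' := fun s t => Real.exp (-t) * t ^ (s - 1) * (Real.log t) ^ (k+1))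
    (x₀ := q)
    (bound := fun t => Real.exp (-t) * t ^ (q/2 - 1) * |Real.log t| ^ (k+1)
      + Real.exp (-t) * t ^ (3*q/2 - 1) * |Real.log t| ^ (k+1))
    (Metric.ball_mem_nhds q hε)
    (Eventually.of_forall fun s => (contOn s k).aestronglyMeasurable measurableSet_Ioi)
    (integrable_G q hq k)
    ((contOn q (k+1)).aestronglyMeasurable measurableSet_Ioi)
    ?_ ?_ ?_
  · exact key.2
  · rw [ae_restrict_iff' measurableSet_Ioi]
    filter_upwards with t ht s hs
    have ht : (0:ℝ) < t := ht
    rw [Metric.mem_ball, Real.dist_eq, abs_lt] at hs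
    have hb : t ^ (s - 1) ≤ t ^ (q/2 - 1) + t ^ (3*q/2 - 1) :=
      rpow_sub_one_bound (by linarith) (by linarith) ht
    have hexp : (0:ℝ) ≤ Real.exp (-t) := (Real.exp_pos _).le
    have hpow : (0:ℝ) ≤ t ^ (s - 1) := (Real.rpow_pos_of_pos ht _).le
    rw [Real.norm_eq_abs, abs_mul, abs_mul, abs_pow,
      abs_of_nonneg hexp, abs_of_nonneg hpow]
    nlinarith [pow_nonneg (abs_nonneg (Real.log t)) (k+1),
      mul_le_mul_of_nonneg_right (mul_le_mul_of_nonneg_left hb hexp)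
        (pow_nonneg (abs_nonneg (Real.log t)) (k+1))]
  · exact (integrable_abs (q/2) (by positivity) (k+1)).add
      (integrable_abs (3*q/2) (by positivity) (k+1))
  · rw [ae_restrict_iff' measurableSet_Ioi]
    filter_upwards with t ht s _
    have ht : (0:ℝ) < t := ht
    have h1 : HasDerivAt (fun s : ℝ => t ^ (s - 1)) (t ^ (s - 1) * Real.log t) s := by
      have := (Real.hasStrictDerivAt_const_rpow ht (s - 1)).hasDerivAt
      have h2 := this.comp s ((hasDerivAt_id s).sub_const 1)
      exact h2.congr_deriv (by simp)
    have h3 := (h1.const_mul (Real.exp (-t))).mul_const ((Real.log t) ^ k)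
    refine h3.congr_deriv ?_
    ring

lemma Gamma_eventuallyEq {q : ℝ} (hq : 0 < q) : Real.Gamma =ᶠ[nhds q] G 0 := by
  filter_upwards [eventually_gt_nhds hq] with s hs
  rw [Real.Gamma_eq_integral hs, G]
  simp

lemma deriv_Gamma_eventuallyEq {q : ℝ} (hq : 0 < q) :
    deriv Real.Gamma =ᶠ[nhds q] G 1 := by
  have h1 := (Gamma_eventuallyEq hq).deriv
  filter_upwards [h1, eventually_gt_nhds hq] with s hs1 hs2
  rw [hs1, (hasDerivAt_G 0 hs2).deriv]

lemma deriv_Gamma_eq {q : ℝ} (hq : 0 < q) : deriv Real.Gamma q = G 1 q :=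
  (deriv_Gamma_eventuallyEq hq).self_of_nhds

lemma deriv2_Gamma_eq {q : ℝ} (hq : 0 < q) : deriv (deriv Real.Gamma) q = G 2 q := by
  rw [(deriv_Gamma_eventuallyEq hq).deriv.self_of_nhds, (hasDerivAt_G 1 hq).deriv]

noncomputable def E (k : ℕ) (s : ℝ) : ℝ :=
  ∑' n : ℕ, (-1 : ℝ) ^ n * (Real.log ((n : ℝ) + 1)) ^ k / ((n : ℝ) + 1) ^ s

lemma summable_aux {a : ℝ} (ha : 1 < a) (k : ℕ) :
    Summable (fun n : ℕ => (Real.log ((n:ℝ)+1)) ^ k / ((n:ℝ)+1) ^ a) := by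
  set δ : ℝ := (a - 1) / (2 * (k + 1)) with hδdef
  have hδ : 0 < δ := div_pos (by linarith) (by positivity)
  have hka : (k : ℝ) * δ ≤ (a-1) / 2 := by
    rw [hδdef, mul_comm, div_mul_eq_mul_div, div_le_div_iff₀ (by positivity) two_pos]
    nlinarith [(Nat.cast_nonneg k : (0:ℝ) ≤ k), ha.le]
  have hc : (k:ℝ) * δ - a < -1 := by linarith
  have hs : Summable (fun n : ℕ => ((n:ℝ)+1) ^ ((k:ℝ) * δ - a)) := by
    have := Real.summable_nat_rpow (p := (k:ℝ) * δ - a) |>.mpr hc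
    have h2 := (summable_nat_add_iff 1).mpr this
    simpa using h2
  refine Summable.of_nonneg_of_le (fun n => ?_) (fun n => ?_) (hs.mul_left ((1/δ)^k))
  · have hn0 : (0:ℝ) < (n:ℝ) + 1 := by positivity
    have hn1 : (1:ℝ) ≤ (n:ℝ) + 1 := by
      have := Nat.cast_nonneg (α := ℝ) n; linarith
    exact div_nonneg (pow_nonneg (Real.log_nonneg hn1) k)
      (Real.rpow_pos_of_pos hn0 a).le
  · have hn0 : (0:ℝ) < (n:ℝ) + 1 := by positivity
    have hn1 : (1:ℝ) ≤ (n:ℝ) + 1 := by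
      have := Nat.cast_nonneg (α := ℝ) n; linarith
    have hlog : Real.log ((n:ℝ)+1) ≤ ((n:ℝ)+1) ^ δ / δ := by
      have h := Real.log_le_sub_one_of_pos (Real.rpow_pos_of_pos hn0 δ)
      rw [Real.log_rpow hn0] at h
      rw [le_div_iff₀ hδ]
      nlinarith
    have hpowle : (Real.log ((n:ℝ)+1)) ^ k ≤ (1/δ)^k * ((n:ℝ)+1) ^ ((k:ℝ)*δ) := by
      calc (Real.log ((n:ℝ)+1)) ^ k ≤ (((n:ℝ)+1) ^ δ / δ) ^ k :=
            pow_le_pow_left₀ (Real.log_nonneg hn1) hlog k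
        _ = (1/δ)^k * (((n:ℝ)+1) ^ δ) ^ k := by
            rw [div_pow, one_div, inv_pow]; exact div_eq_inv_mul _ _
        _ = (1/δ)^k * ((n:ℝ)+1) ^ ((k:ℝ)*δ) := by
            rw [← Real.rpow_natCast (((n:ℝ)+1) ^ δ) k, ← Real.rpow_mul hn0.le,
              mul_comm δ (k:ℝ)]
    calc (Real.log ((n:ℝ)+1)) ^ k / ((n:ℝ)+1) ^ a
        ≤ ((1/δ)^k * ((n:ℝ)+1) ^ ((k:ℝ)*δ)) / ((n:ℝ)+1) ^ a := by
          gcongr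
      _ = (1/δ)^k * ((n:ℝ)+1) ^ ((k:ℝ)*δ - a) := by
          rw [Real.rpow_sub hn0]; ring

end EtaGamma

namespace EtaGamma

lemma norm_term (k n : ℕ) (s : ℝ) :
    ‖(-1:ℝ)^n * (Real.log ((n:ℝ)+1))^k / ((n:ℝ)+1)^s‖
      = (Real.log ((n:ℝ)+1))^k / ((n:ℝ)+1)^s := by
  have hn0 : (0:ℝ) < (n:ℝ) + 1 := by positivity
  have hn1 : (1:ℝ) ≤ (n:ℝ) + 1 := by
    have := Nat.cast_nonneg (α := ℝ) n; linarith
  rw [Real.norm_eq_abs, abs_div, abs_mul, abs_pow, abs_pow, abs_neg, abs_one, one_pow,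
    one_mul, abs_of_nonneg (Real.log_nonneg hn1),
    abs_of_pos (Real.rpow_pos_of_pos hn0 s)]

lemma hasDerivAt_term (k n : ℕ) (s : ℝ) :
    HasDerivAt (fun s : ℝ => (-1:ℝ)^n * (Real.log ((n:ℝ)+1))^k / ((n:ℝ)+1)^s)
      (-((-1:ℝ)^n * (Real.log ((n:ℝ)+1))^(k+1) / ((n:ℝ)+1)^s)) s := by
  have hn0 : (0:ℝ) < (n:ℝ) + 1 := by positivity
  set b : ℝ := (n:ℝ) + 1
  set c : ℝ := (-1:ℝ)^n * (Real.log b)^k with hc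
  have h := (Real.hasStrictDerivAt_const_rpow hn0 (-s)).hasDerivAt
  have h2 := h.comp s (hasDerivAt_neg s)
  have h3 := h2.const_mul c
  have hfun : (fun s : ℝ => c * ((fun x : ℝ => b ^ x) ∘ fun s : ℝ => -s) s)
      = fun s : ℝ => (-1:ℝ)^n * (Real.log b)^k / b ^ s := by
    funext x
    simp only [Function.comp_apply, hc]
    rw [Real.rpow_neg hn0.le]
    ring
  rw [hfun] at h3
  refine h3.congr_deriv ?_
  rw [Real.rpow_neg hn0.le, pow_succ]
  ring

lemma hasDerivAt_E (k : ℕ) {q : ℝ} (hq : 1 < q) :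
    HasDerivAt (E k) (-(E (k+1) q)) q := by
  set a : ℝ := (1 + q) / 2 with ha
  have ha1 : 1 < a := by rw [ha]; linarith
  have haq : a < q := by rw [ha]; linarith
  have key := hasDerivAt_tsum_of_isPreconnected
    (u := fun n : ℕ => (Real.log ((n:ℝ)+1)) ^ (k+1) / ((n:ℝ)+1) ^ a)
    (g := fun n s => (-1:ℝ)^n * (Real.log ((n:ℝ)+1))^k / ((n:ℝ)+1)^s)
    (g' := fun n s => -((-1:ℝ)^n * (Real.log ((n:ℝ)+1))^(k+1) / ((n:ℝ)+1)^s))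
    (summable_aux ha1 (k+1)) isOpen_Ioi isPreconnected_Ioi
    (fun n y _ => hasDerivAt_term k n y) ?_ (show q ∈ Ioi a from haq) ?_
    (show q ∈ Ioi a from haq)
  · have : HasDerivAt (E k) (∑' n : ℕ,
        -((-1:ℝ)^n * (Real.log ((n:ℝ)+1))^(k+1) / ((n:ℝ)+1)^q)) q := key
    rwa [tsum_neg] at this
  · intro n y hy
    have hn0 : (0:ℝ) < (n:ℝ) + 1 := by positivity
    have hn1 : (1:ℝ) ≤ (n:ℝ) + 1 := by
      have := Nat.cast_nonneg (α := ℝ) n; linarith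
    rw [norm_neg, norm_term]
    apply div_le_div_of_nonneg_left (pow_nonneg (Real.log_nonneg hn1) _)
      (Real.rpow_pos_of_pos hn0 a)
    exact Real.rpow_le_rpow_of_exponent_le hn1 (le_of_lt hy)
  · apply Summable.of_norm
    have := summable_aux hq k
    convert this using 2 with n
    rw [norm_term]

lemma eta_eq : dirichletEtaReal = E 0 := by
  funext s
  unfold dirichletEtaReal E
  congr 1
  funext n
  rw [pow_zero]
  ring

lemma deriv_eta_eventuallyEq {q : ℝ} (hq : 1 < q) :
    deriv dirichletEtaReal =ᶠ[nhds q] fun s => -(E 1 s) := by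
  filter_upwards [eventually_gt_nhds hq] with s hs
  rw [eta_eq, (hasDerivAt_E 0 hs).deriv]

lemma deriv_eta_eq {q : ℝ} (hq : 1 < q) : deriv dirichletEtaReal q = -(E 1 q) :=
  (deriv_eta_eventuallyEq hq).self_of_nhds

lemma deriv2_eta_eq {q : ℝ} (hq : 1 < q) : deriv (deriv dirichletEtaReal) q = E 2 q := by
  rw [(deriv_eta_eventuallyEq hq).deriv.self_of_nhds, ((hasDerivAt_E 1 hq).fun_neg).deriv,
    neg_neg]

end EtaGamma

namespace EtaGamma

lemma exp_neg_deriv : ∀ t ∈ Ioi (0:ℝ),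
    HasDerivWithinAt (fun t : ℝ => Real.exp (-t)) (-Real.exp (-t)) (Ioi 0) t := by
  intro t _
  have h := (Real.hasDerivAt_exp (-t)).comp t (hasDerivAt_neg t)
  exact h.hasDerivWithinAt.congr_deriv (by simp)

lemma exp_neg_image : (fun t : ℝ => Real.exp (-t)) '' (Ioi 0) = Ioo 0 1 := by
  ext y
  constructor
  · rintro ⟨t, ht, rfl⟩
    refine ⟨Real.exp_pos _, ?_⟩
    have : Real.exp (-t) < Real.exp 0 := Real.exp_lt_exp.mpr (by simpa using ht)
    simpa using this
  · rintro ⟨hy0, hy1⟩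
    exact ⟨-Real.log y, by simpa using Real.log_neg hy0 hy1,
      by simp [Real.exp_log hy0]⟩

lemma exp_neg_injOn : InjOn (fun t : ℝ => Real.exp (-t)) (Ioi 0) :=
  fun a _ b _ h => neg_injective (Real.exp_injective h)

lemma subst_integral (g : ℝ → ℝ) :
    ∫ x in Ioo (0:ℝ) 1, g x = ∫ t in Ioi (0:ℝ), Real.exp (-t) * g (Real.exp (-t)) := by
  rw [← exp_neg_image, integral_image_eq_integral_abs_deriv_smul measurableSet_Ioi
    exp_neg_deriv exp_neg_injOn]
  simp [abs_of_pos (Real.exp_pos _), Real.abs_exp]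

lemma subst_integrable (g : ℝ → ℝ) :
    IntegrableOn g (Ioo (0:ℝ) 1) ↔
      IntegrableOn (fun t => Real.exp (-t) * g (Real.exp (-t))) (Ioi (0:ℝ)) := by
  rw [← exp_neg_image, integrableOn_image_iff_integrableOn_abs_deriv_smul measurableSet_Ioi
    exp_neg_deriv exp_neg_injOn]
  simp_rw [abs_neg, Real.abs_exp, smul_eq_mul]

lemma contOn' (c a : ℝ) (k : ℕ) :
    ContinuousOn (fun t => Real.exp (-(c * t)) * t ^ (a - 1) * (Real.log t) ^ k)
      (Ioi (0:ℝ)) := by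
  intro t ht
  have h0 : t ≠ 0 := ne_of_gt ht
  exact (((Real.continuous_exp.comp (continuous_const.mul continuous_id).neg).continuousAt.mul
    (Real.continuousAt_rpow_const t _ (Or.inl h0))).mul
    ((Real.continuousAt_log h0).pow k)).continuousWithinAt

lemma integrable_In {q : ℝ} (hq : 0 < q) (n : ℕ) :
    IntegrableOn (fun t => Real.exp (-(((n:ℝ)+1) * t)) * t ^ (q-1) * (Real.log t)^2)
      (Ioi (0:ℝ)) := by
  refine (integrable_abs q hq 2).mono'
    ((contOn' ((n:ℝ)+1) q 2).aestronglyMeasurable measurableSet_Ioi) ?_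
  rw [ae_restrict_iff' measurableSet_Ioi]
  filter_upwards with t ht
  have ht : (0:ℝ) < t := ht
  have hpow : (0:ℝ) ≤ t ^ (q - 1) := (Real.rpow_pos_of_pos ht _).le
  have hexp : Real.exp (-(((n:ℝ)+1) * t)) ≤ Real.exp (-t) := by
    apply Real.exp_le_exp.mpr
    nlinarith [Nat.cast_nonneg (α := ℝ) n]
  rw [Real.norm_eq_abs, abs_mul, abs_mul, abs_pow, abs_of_nonneg (Real.exp_pos _).le,
    abs_of_nonneg hpow, ← abs_pow, abs_pow]
  have h2 : (0:ℝ) ≤ |Real.log t| ^ 2 := by positivity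
  nlinarith [mul_le_mul_of_nonneg_right (mul_le_mul_of_nonneg_right hexp hpow) h2]

lemma In_eq {q : ℝ} (hq : 0 < q) (n : ℕ) :
    ∫ t in Ioi (0:ℝ), Real.exp (-(((n:ℝ)+1) * t)) * t ^ (q-1) * (Real.log t)^2
      = ((n:ℝ)+1) ^ (-q) * (G 2 q - 2 * Real.log ((n:ℝ)+1) * G 1 q
          + (Real.log ((n:ℝ)+1))^2 * G 0 q) := by
  have hb : (0:ℝ) < (n:ℝ) + 1 := by positivity
  set b : ℝ := (n:ℝ) + 1 with hbdef
  set h : ℝ → ℝ := fun u =>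
    (Real.exp (-u) * u ^ (q-1) * (Real.log u - Real.log b)^2) * b ^ (1 - q) with hhdef
  have step1 : ∀ t ∈ Ioi (0:ℝ),
      Real.exp (-(b * t)) * t ^ (q-1) * (Real.log t)^2 = h (b * t) := by
    intro t ht
    have ht : (0:ℝ) < t := ht
    rw [hhdef]
    have e1 : Real.log (b * t) - Real.log b = Real.log t := by
      rw [Real.log_mul (ne_of_gt hb) (ne_of_gt ht)]; ring
    have e2 : (b * t) ^ (q - 1) = b ^ (q-1) * t ^ (q-1) :=
      Real.mul_rpow hb.le ht.le
    have e3 : b ^ (q-1) * b ^ (1-q) = 1 := by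
      rw [← Real.rpow_add hb]; norm_num
    simp only [e1, e2]
    calc Real.exp (-(b*t)) * t ^ (q-1) * Real.log t ^ 2
        = (Real.exp (-(b*t)) * t ^ (q-1) * Real.log t ^ 2) * (b ^ (q-1) * b ^ (1-q)) := by
          rw [e3, mul_one]
      _ = Real.exp (-(b*t)) * (b ^ (q-1) * t ^ (q-1)) * Real.log t ^ 2 * b ^ (1-q) := by
          ring
  rw [setIntegral_congr_fun measurableSet_Ioi step1,
    integral_comp_mul_left_Ioi h 0 hb, mul_zero, smul_eq_mul]
  have expand : ∀ u : ℝ,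
      Real.exp (-u) * u ^ (q-1) * (Real.log u - Real.log b)^2
        = Real.exp (-u) * u ^ (q-1) * (Real.log u)^2
          - (2 * Real.log b) * (Real.exp (-u) * u ^ (q-1) * (Real.log u)^1)
          + (Real.log b)^2 * (Real.exp (-u) * u ^ (q-1) * (Real.log u)^0) := by
    intro u; ring
  have hint : ∫ u in Ioi (0:ℝ), h u
      = (G 2 q - 2 * Real.log b * G 1 q + (Real.log b)^2 * G 0 q) * b ^ (1 - q) := by
    rw [hhdef]
    rw [MeasureTheory.integral_mul_const]
    congr 1
    simp only [expand]
    have i2 : Integrable (fun u : ℝ => Real.exp (-u) * u ^ (q-1) * (Real.log u)^2)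
        (volume.restrict (Ioi 0)) := integrable_G q hq 2
    have i1 : Integrable (fun u : ℝ =>
        (2 * Real.log b) * (Real.exp (-u) * u ^ (q-1) * (Real.log u)^1))
        (volume.restrict (Ioi 0)) := (integrable_G q hq 1).const_mul _
    have i0 : Integrable (fun u : ℝ =>
        (Real.log b)^2 * (Real.exp (-u) * u ^ (q-1) * (Real.log u)^0))
        (volume.restrict (Ioi 0)) := (integrable_G q hq 0).const_mul _
    have i21 : Integrable (fun u : ℝ => Real.exp (-u) * u ^ (q-1) * (Real.log u)^2
        - (2 * Real.log b) * (Real.exp (-u) * u ^ (q-1) * (Real.log u)^1))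
        (volume.restrict (Ioi 0)) := i2.sub i1
    rw [MeasureTheory.integral_add i21 i0, MeasureTheory.integral_sub i2 i1,
      MeasureTheory.integral_const_mul, MeasureTheory.integral_const_mul]
    rfl
  rw [hint, ← Real.rpow_neg_one b]
  rw [← mul_assoc, mul_comm (b ^ (-1:ℝ)), mul_assoc, ← Real.rpow_add hb,
    show (-1 + (1 - q)) = -q by ring, mul_comm]

end EtaGamma

namespace EtaGamma

lemma point_eq (q : ℝ) (n : ℕ) (t : ℝ) :
    Real.exp (-t) * ((Real.exp (-t))^n * Real.log (1/Real.exp (-t)) ^ (q-1) *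
      (Real.log (Real.log (1/Real.exp (-t))))^2)
      = Real.exp (-(((n:ℝ)+1)*t)) * t^(q-1) * (Real.log t)^2 := by
  have h1 : 1 / Real.exp (-t) = Real.exp t := by rw [Real.exp_neg, one_div, inv_inv]
  rw [h1, Real.log_exp, ← Real.exp_nat_mul,
    show Real.exp (-t) * (Real.exp ((n:ℝ) * -t) * t ^ (q-1) * Real.log t ^ 2)
      = (Real.exp (-t) * Real.exp ((n:ℝ) * -t)) * t ^ (q-1) * Real.log t ^ 2 from by ring,
    ← Real.exp_add, show -t + (n:ℝ) * -t = -(((n:ℝ)+1)*t) from by ring]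

lemma An_eq (q : ℝ) (n : ℕ) :
    ∫ x in Ioo (0:ℝ) 1, x^n * Real.log (1/x) ^ (q-1) * (Real.log (Real.log (1/x)))^2
      = ∫ t in Ioi (0:ℝ), Real.exp (-(((n:ℝ)+1)*t)) * t^(q-1) * (Real.log t)^2 := by
  rw [subst_integral]
  apply setIntegral_congr_fun measurableSet_Ioi
  intro t _
  simpa using point_eq q n t

lemma integrable_An {q : ℝ} (hq : 0 < q) (n : ℕ) :
    IntegrableOn (fun x => x^n * Real.log (1/x) ^ (q-1) * (Real.log (Real.log (1/x)))^2)
      (Ioo (0:ℝ) 1) := by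
  rw [subst_integrable]
  have heq : (fun t => Real.exp (-t) * ((Real.exp (-t))^n * Real.log (1/Real.exp (-t)) ^ (q-1) *
      (Real.log (Real.log (1/Real.exp (-t))))^2))
      = fun t => Real.exp (-(((n:ℝ)+1)*t)) * t^(q-1) * (Real.log t)^2 := by
    funext t; exact point_eq q n t
  have h2 : IntegrableOn (fun t => Real.exp (-t) * ((Real.exp (-t))^n *
      Real.log (1/Real.exp (-t)) ^ (q-1) * (Real.log (Real.log (1/Real.exp (-t))))^2))
      (Ioi (0:ℝ)) := by
    rw [heq]; exact integrable_In hq n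
  exact h2

lemma summable_term {q : ℝ} (hq : 1 < q) (k : ℕ) :
    Summable (fun n : ℕ => (-1:ℝ)^n * (Real.log ((n:ℝ)+1))^k / ((n:ℝ)+1)^q) := by
  apply Summable.of_norm
  refine (summable_aux hq k).congr fun n => ?_
  rw [norm_term]

theorem main_integral (q : ℝ) (hq : 1 < q) :
    ∫ x in (0:ℝ)..1,
        (1 / (1 + x)) * Real.log (1 / x) ^ (q - 1) * (Real.log (Real.log (1 / x))) ^ 2 =
      deriv (deriv Real.Gamma) q * dirichletEtaReal q +
        2 * deriv Real.Gamma q * deriv dirichletEtaReal q +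
        Real.Gamma q * deriv (deriv dirichletEtaReal) q := by
  have hq0 : 0 < q := by linarith
  set F : ℕ → ℝ → ℝ := fun n x =>
    (-1:ℝ)^n * (x^n * Real.log (1/x) ^ (q-1) * (Real.log (Real.log (1/x)))^2) with hF
  have hFint : ∀ n, Integrable (F n) (volume.restrict (Ioo (0:ℝ) 1)) :=
    fun n => (integrable_An hq0 n).const_mul _
  have hnorm : ∀ n : ℕ, (∫ x in Ioo (0:ℝ) 1, ‖F n x‖)
      = ((n:ℝ)+1)^(-q) * (G 2 q - 2*Real.log ((n:ℝ)+1)*G 1 q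
          + (Real.log ((n:ℝ)+1))^2 * G 0 q) := by
    intro n
    rw [← In_eq hq0 n, ← An_eq q n]
    apply setIntegral_congr_fun measurableSet_Ioo
    intro x hx
    have hx0 : (0:ℝ) < x := hx.1
    have hx1 : x < 1 := hx.2
    have hl : (0:ℝ) < Real.log (1/x) := by
      apply Real.log_pos
      rw [lt_div_iff₀ hx0]; linarith
    have hnn : (0:ℝ) ≤ x^n * Real.log (1/x) ^ (q-1) * (Real.log (Real.log (1/x)))^2 :=
      mul_nonneg (mul_nonneg (pow_nonneg hx0.le n)
        (Real.rpow_pos_of_pos hl _).le) (sq_nonneg _)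
    simp only [hF, Real.norm_eq_abs, abs_mul, abs_pow, abs_neg, abs_one, one_pow, one_mul,
      abs_of_nonneg hnn]
  have hsum : Summable (fun n : ℕ => ∫ x in Ioo (0:ℝ) 1, ‖F n x‖) := by
    refine Summable.congr ?_ (fun n => (hnorm n).symm)
    have h0 := (summable_aux hq 0).mul_left (G 2 q)
    have h1 := (summable_aux hq 1).mul_left (2 * G 1 q)
    have h2 := (summable_aux hq 2).mul_left (G 0 q)
    refine ((h0.sub h1).add h2).congr (fun n => ?_)
    have hn0 : (0:ℝ) < (n:ℝ)+1 := by positivity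
    rw [Real.rpow_neg hn0.le]
    ring
  have hswap := MeasureTheory.integral_tsum_of_summable_integral_norm hFint hsum
  have hpt : ∀ x ∈ Ioo (0:ℝ) 1,
      (1/(1+x)) * Real.log (1/x) ^ (q-1) * (Real.log (Real.log (1/x)))^2
        = ∑' n, F n x := by
    intro x hx
    have hx0 : (0:ℝ) < x := hx.1
    have hx1 : x < 1 := hx.2
    have hgeom : ∑' n : ℕ, (-x)^n = (1 - -x)⁻¹ :=
      tsum_geometric_of_norm_lt_one
        (by rw [norm_neg, Real.norm_eq_abs, abs_of_pos hx0]; exact hx1)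
    have : ∑' n, F n x = (∑' n : ℕ, (-x)^n) *
        (Real.log (1/x) ^ (q-1) * (Real.log (Real.log (1/x)))^2) := by
      rw [← tsum_mul_right]
      exact tsum_congr fun n => by rw [hF, neg_pow]; ring
    rw [this, hgeom, sub_neg_eq_add, ← mul_assoc, one_div]
  have hval : ∀ n : ℕ, ∫ x in Ioo (0:ℝ) 1, F n x
      = (-1:ℝ)^n * (((n:ℝ)+1)^(-q) * (G 2 q - 2*Real.log ((n:ℝ)+1)*G 1 q
          + (Real.log ((n:ℝ)+1))^2 * G 0 q)) := by
    intro n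
    rw [hF]
    rw [MeasureTheory.integral_const_mul, An_eq q n, In_eq hq0 n]
  have htsum : ∑' n : ℕ, ∫ x in Ioo (0:ℝ) 1, F n x
      = G 2 q * E 0 q - 2 * G 1 q * E 1 q + G 0 q * E 2 q := by
    have e1 : ∑' n : ℕ, ∫ x in Ioo (0:ℝ) 1, F n x
        = ∑' n : ℕ, (G 2 q * ((-1:ℝ)^n * (Real.log ((n:ℝ)+1))^0 / ((n:ℝ)+1)^q)
          - (2 * G 1 q) * ((-1:ℝ)^n * (Real.log ((n:ℝ)+1))^1 / ((n:ℝ)+1)^q)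
          + G 0 q * ((-1:ℝ)^n * (Real.log ((n:ℝ)+1))^2 / ((n:ℝ)+1)^q)) := by
      refine tsum_congr fun n => ?_
      rw [hval n, Real.rpow_neg (by positivity : (0:ℝ) ≤ (n:ℝ)+1)]
      ring
    rw [e1, Summable.tsum_add (Summable.sub ((summable_term hq 0).mul_left _)
        ((summable_term hq 1).mul_left _)) ((summable_term hq 2).mul_left _),
      Summable.tsum_sub ((summable_term hq 0).mul_left _) ((summable_term hq 1).mul_left _),
      tsum_mul_left, tsum_mul_left, tsum_mul_left]
    rfl
  rw [intervalIntegral.integral_of_le zero_le_one, MeasureTheory.integral_Ioc_eq_integral_Ioo,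
    setIntegral_congr_fun measurableSet_Ioo hpt, ← hswap, htsum,
    deriv2_Gamma_eq hq0, deriv_Gamma_eq hq0, deriv_eta_eq hq, deriv2_eta_eq hq, eta_eq,
    (Gamma_eventuallyEq hq0).self_of_nhds]
  ring

end EtaGamma


/-- For every real `q > 1`,
`∫_0^1 (1/(1+x)) (log(1/x))^{q−1} (log(log(1/x)))² dx
  = Γ''(q) η(q) + 2 Γ'(q) η'(q) + Γ(q) η''(q)`. -/
theorem integral_loglog_sq_eq_gamma_eta (q : ℝ) (hq : 1 < q) :
    ∫ x in (0:ℝ)..1,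
        (1 / (1 + x)) * Real.log (1 / x) ^ (q - 1) * (Real.log (Real.log (1 / x))) ^ 2 =
      deriv (deriv Real.Gamma) q * dirichletEtaReal q +
        2 * deriv Real.Gamma q * deriv dirichletEtaReal q +
        Real.Gamma q * deriv (deriv dirichletEtaReal) q :=
  EtaGamma.main_integral q hq
end

section
/- For all integers n ≥ 1 and N ≥ 1, the partial Euler–Maclaurin sums bracket the error in the harmonic approximation to γ: γ + 1/(2n) − ∑_{k=1}^{2N+1} B_{2k}/(2k · n^{2k}) < H_n − log n < γ + 1/(2n) − ∑_{k=1}^{2N} B_{2k}/(2k · n^{2k}), with both inequalities strict. -/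
open Real Polynomial MeasureTheory Filter Finset intervalIntegral Topology

namespace EMaux

/-- Bernoulli polynomial over `ℝ`. -/
noncomputable def Bp (m : ℕ) : Polynomial ℝ := (Polynomial.bernoulli m).map (algebraMap ℚ ℝ)

/-- Bernoulli number as a real. -/
noncomputable def bb (m : ℕ) : ℝ := ((_root_.bernoulli m : ℚ) : ℝ)

lemma Bp_eval_zero (m : ℕ) : (Bp m).eval 0 = bb m := by
  rw [Bp, Polynomial.eval_zero_map, Polynomial.bernoulli_eval_zero, bb, eq_ratCast]

lemma Bp_eval_one (m : ℕ) (hm : m ≠ 1) : (Bp m).eval 1 = bb m := by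
  rw [Bp, Polynomial.eval_one_map, Polynomial.bernoulli_eval_one,
    ← bernoulli_eq_bernoulli'_of_ne_one hm, bb, eq_ratCast]

lemma bb_odd_eq_zero {m : ℕ} (hm : Odd m) (h1 : 1 < m) : bb m = 0 := by
  rw [bb, bernoulli_eq_bernoulli'_of_ne_one (by omega), bernoulli'_eq_zero_of_odd hm h1]
  norm_num

lemma Bp_derivative (m : ℕ) : (Bp m).derivative = (m : ℝ[X]) * Bp (m - 1) := by
  rw [Bp, Polynomial.derivative_map, Polynomial.derivative_bernoulli, Polynomial.map_mul, Bp]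
  congr 1
  simp


lemma contOn (c : ℝ) (hc : 0 < c) (p : ℝ[X]) (j : ℕ) :
    IntervalIntegrable (fun t => p.eval t / (c + t) ^ j) volume 0 1 := by
  apply ContinuousOn.intervalIntegrable
  apply ContinuousOn.div (p.continuous.continuousOn) (by fun_prop)
  intro t ht
  rw [Set.uIcc_of_le zero_le_one] at ht
  have : 0 < c + t := by have := ht.1; linarith
  positivity

lemma parts (c : ℝ) (hc : 0 < c) (p : ℝ[X]) (j : ℕ) (hj : 1 ≤ j) :
    ∫ t in (0:ℝ)..1, p.eval t / (c + t) ^ (j + 1)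
      = p.eval 0 / (j * c ^ j) - p.eval 1 / (j * (c + 1) ^ j)
        + (1 / j) * ∫ t in (0:ℝ)..1, p.derivative.eval t / (c + t) ^ j := by
  have hj0 : (j : ℝ) ≠ 0 := by positivity
  have hkey : ∫ t in (0:ℝ)..1,
      (p.eval t / (c + t) ^ (j + 1) - (1 / j) * (p.derivative.eval t / (c + t) ^ j))
      = (-(p.eval 1) / (j * (c + 1) ^ j)) - (-(p.eval 0) / (j * c ^ j)) := by
    have := intervalIntegral.integral_eq_sub_of_hasDerivAt
      (f := fun t => -(p.eval t) / (j * (c + t) ^ j))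
      (f' := fun t => p.eval t / (c + t) ^ (j + 1)
        - (1 / j) * (p.derivative.eval t / (c + t) ^ j))
      (a := 0) (b := 1) ?_ ?_
    · simpa using this
    · intro t ht
      rw [Set.uIcc_of_le zero_le_one] at ht
      have hct : 0 < c + t := by have := ht.1; linarith
      have h1 : HasDerivAt (fun t : ℝ => (c + t) ^ j) (j * (c + t) ^ (j - 1)) t := by
        have := ((hasDerivAt_id t).const_add c).fun_pow j
        simpa using this
      have h2 : HasDerivAt (fun t : ℝ => -(p.eval t)) (-(p.derivative.eval t)) t :=
        (p.hasDerivAt t).neg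
      have h3 : HasDerivAt (fun t : ℝ => (j : ℝ) * (c + t) ^ j) (j * (j * (c + t) ^ (j - 1))) t :=
        h1.const_mul _
      have hne : (j : ℝ) * (c + t) ^ j ≠ 0 := by positivity
      have h4 := h2.fun_div h3 hne
      convert h4 using 1 <;> try rfl
      obtain ⟨m, rfl⟩ : ∃ m, j = m + 1 := ⟨j - 1, by omega⟩
      simp only [Nat.add_sub_cancel]
      field_simp
      ring
    · exact (contOn c hc p (j + 1)).sub ((contOn c hc p.derivative j).const_mul _)
  rw [intervalIntegral.integral_sub (contOn c hc p (j + 1))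
    ((contOn c hc p.derivative j).const_mul _), intervalIntegral.integral_const_mul,
    neg_div, neg_div] at hkey
  linarith [hkey]

lemma int_one_div (c : ℝ) (hc : 0 < c) :
    ∫ t in (0:ℝ)..1, 1 / (c + t) = Real.log (c + 1) - Real.log c := by
  have := intervalIntegral.integral_eq_sub_of_hasDerivAt
    (f := fun t => Real.log (c + t)) (f' := fun t => 1 / (c + t)) (a := 0) (b := 1) ?_ ?_
  · simpa using this
  · intro t ht
    rw [Set.uIcc_of_le zero_le_one] at ht
    have hct : 0 < c + t := by have := ht.1; linarith
    have := (Real.hasDerivAt_log hct.ne').comp t ((hasDerivAt_id t).const_add c)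
    simpa [one_div, Function.comp_def] using this
  · have := contOn c hc 1 1
    simpa using this

noncomputable def Jint (m : ℕ) (x : ℝ) : ℝ :=
  ∫ t in (0:ℝ)..1, ((Bp (2 * m + 2)).eval t - bb (2 * m + 2)) / (x + t) ^ (2 * m + 3)

noncomputable def S (m : ℕ) (x : ℝ) : ℝ :=
  ∑ k ∈ Finset.Icc 1 m, (_root_.bernoulli (2 * k) : ℝ) / (2 * (k : ℝ) * x ^ (2 * k))

/-- Reduce `∫ (B_r - b_r)/(x+t)^(r+1)` (even r ≥ 2) to `∫ B_{r-1}/(x+t)^r`. -/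
lemma reduce_even (x : ℝ) (hx : 0 < x) (r : ℕ) (hr : 2 ≤ r) (hre : r ≠ 1) :
    ∫ t in (0:ℝ)..1, ((Bp r).eval t - bb r) / (x + t) ^ (r + 1)
      = ∫ t in (0:ℝ)..1, (Bp (r - 1)).eval t / (x + t) ^ r := by
  have h1 : ∀ t : ℝ, (Bp r).eval t - bb r = (Bp r - Polynomial.C (bb r)).eval t := by
    intro t; simp
  have h2 := parts x hx (Bp r - Polynomial.C (bb r)) r (by omega)
  simp only [← h1] at h2
  rw [h2, Bp_eval_zero, Bp_eval_one r hre, sub_self, zero_div, zero_div,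
    sub_zero, zero_add]
  have h3 : (Bp r - Polynomial.C (bb r)).derivative = (r : ℝ[X]) * Bp (r - 1) := by
    rw [Polynomial.derivative_sub, Polynomial.derivative_C, sub_zero, Bp_derivative]
  rw [h3]
  have h4 : ∀ t : ℝ, ((r : ℝ[X]) * Bp (r - 1)).eval t / (x + t) ^ r
      = (r : ℝ) * ((Bp (r - 1)).eval t / (x + t) ^ r) := by
    intro t; simp [mul_div_assoc]
  simp only [h4]
  rw [intervalIntegral.integral_const_mul]
  have hr0 : (r : ℝ) ≠ 0 := by positivity
  field_simp

/-- Reduce `∫ B_r/(x+t)^(r+1)` (odd r ≥ 3) to `∫ B_{r-1}/(x+t)^r`. -/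
lemma reduce_odd (x : ℝ) (hx : 0 < x) (r : ℕ) (hro : Odd r) (hr : 2 ≤ r) :
    ∫ t in (0:ℝ)..1, (Bp r).eval t / (x + t) ^ (r + 1)
      = ∫ t in (0:ℝ)..1, (Bp (r - 1)).eval t / (x + t) ^ r := by
  have h2 := parts x hx (Bp r) r (by omega)
  rw [h2, Bp_eval_zero, Bp_eval_one r (by omega), bb_odd_eq_zero hro (by omega),
    zero_div, zero_div, sub_zero, zero_add, Bp_derivative]
  have h4 : ∀ t : ℝ, ((r : ℝ[X]) * Bp (r - 1)).eval t / (x + t) ^ r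
      = (r : ℝ) * ((Bp (r - 1)).eval t / (x + t) ^ r) := by
    intro t; simp [mul_div_assoc]
  simp only [h4]
  rw [intervalIntegral.integral_const_mul]
  have hr0 : (r : ℝ) ≠ 0 := by positivity
  field_simp

lemma int_inv_pow (x : ℝ) (hx : 0 < x) (j : ℕ) (hj : 1 ≤ j) :
    ∫ t in (0:ℝ)..1, (1 : ℝ) / (x + t) ^ (j + 1)
      = 1 / (j * x ^ j) - 1 / (j * (x + 1) ^ j) := by
  have h := parts x hx 1 j hj
  simpa using h

lemma Jstep (x : ℝ) (hx : 0 < x) (m : ℕ) :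
    Jint (m + 1) x = Jint m x + bb (2 * m + 2) / ((2 * m + 2) * x ^ (2 * m + 2))
      - bb (2 * m + 2) / ((2 * m + 2) * (x + 1) ^ (2 * m + 2)) := by
  have e1 : Jint (m + 1) x
      = ∫ t in (0:ℝ)..1, ((Bp (2 * m + 4)).eval t - bb (2 * m + 4)) / (x + t) ^ (2 * m + 4 + 1) := by
    rw [Jint, show 2 * (m + 1) + 2 = 2 * m + 4 from by ring,
      show 2 * (m + 1) + 3 = 2 * m + 4 + 1 from by ring]
  rw [e1, reduce_even x hx (2 * m + 4) (by omega) (by omega)]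
  have e2 : (2 : ℕ) * m + 4 - 1 = (2 * m + 3) := by omega
  rw [e2]
  have e3 : (2 : ℕ) * m + 4 = (2 * m + 3) + 1 := by omega
  rw [e3, reduce_odd x hx (2 * m + 3) ⟨m + 1, by ring⟩ (by omega)]
  have e4 : (2 : ℕ) * m + 3 - 1 = 2 * m + 2 := by omega
  rw [e4]
  have split : (fun t : ℝ => (Bp (2 * m + 2)).eval t / (x + t) ^ (2 * m + 3))
      = fun t : ℝ => ((Bp (2 * m + 2)).eval t - bb (2 * m + 2)) / (x + t) ^ (2 * m + 3)
        + bb (2 * m + 2) * (1 / (x + t) ^ (2 * m + 3)) := by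
    funext t
    rw [mul_one_div, ← add_div, sub_add_cancel]
  have hint1 : IntervalIntegrable
      (fun t : ℝ => ((Bp (2 * m + 2)).eval t - bb (2 * m + 2)) / (x + t) ^ (2 * m + 3))
      volume 0 1 := by
    have := contOn x hx (Bp (2 * m + 2) - Polynomial.C (bb (2 * m + 2))) (2 * m + 3)
    simpa using this
  have hint2 : IntervalIntegrable
      (fun t : ℝ => bb (2 * m + 2) * (1 / (x + t) ^ (2 * m + 3))) volume 0 1 := by
    have := (contOn x hx 1 (2 * m + 3)).const_mul (bb (2 * m + 2))
    simpa using this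
  rw [split, intervalIntegral.integral_add hint1 hint2, intervalIntegral.integral_const_mul]
  have e5 : (2 : ℕ) * m + 3 = (2 * m + 2) + 1 := by omega
  rw [e5, int_inv_pow x hx (2 * m + 2) (by omega), ← Jint]
  push_cast
  ring

lemma bb_one : bb 1 = -(1 / 2) := by
  rw [bb, _root_.bernoulli_one]; norm_num

lemma Bp_one_eval_one : (Bp 1).eval 1 = 1 / 2 := by
  rw [Bp, Polynomial.eval_one_map, Polynomial.bernoulli_eval_one, bernoulli'_one]
  norm_num

lemma Jbase (x : ℝ) (hx : 0 < x) :
    Jint 0 x = Real.log ((x + 1) / x) - 1 / (2 * x) - 1 / (2 * (x + 1)) := by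
  have e1 : Jint 0 x
      = ∫ t in (0:ℝ)..1, ((Bp 2).eval t - bb 2) / (x + t) ^ (2 + 1) := by
    rw [Jint]
  rw [e1, reduce_even x hx 2 (by omega) (by omega)]
  have h2 := parts x hx (Bp (2 - 1)) 1 (by omega)
  norm_num at h2 ⊢
  rw [h2, Bp_eval_zero, bb_one, Bp_one_eval_one, Bp_derivative]
  norm_num
  have h4 : (fun t : ℝ => (Bp 0).eval t / (x + t)) = fun t : ℝ => 1 / (x + t) := by
    funext t
    have : (Bp 0).eval t = 1 := by
      rw [Bp]
      simp [Polynomial.bernoulli_zero]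
    rw [this]
  rw [h4, int_one_div x hx, Real.log_div (by linarith) (by linarith)]
  ring

lemma EM (x : ℝ) (hx : 0 < x) (m : ℕ) :
    Real.log ((x + 1) / x) - 1 / (2 * x) - 1 / (2 * (x + 1)) + S m x - S m (x + 1)
      = Jint m x := by
  induction m with
  | zero => simp [S, Jbase x hx]
  | succ m ih =>
    have hS : ∀ y : ℝ, S (m + 1) y = S m y
        + (_root_.bernoulli (2 * (m + 1)) : ℝ) / (2 * ((m : ℝ) + 1) * y ^ (2 * (m + 1))) := by
      intro y
      rw [S, S, Finset.sum_Icc_succ_top (by omega : 1 ≤ m + 1)]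
      push_cast
      ring
    rw [hS, hS, Jstep x hx]
    have hcast : (_root_.bernoulli (2 * (m + 1)) : ℝ) = bb (2 * m + 2) := by
      rw [bb]; norm_num; ring_nf
    rw [hcast]
    have h1 : 2 * (m + 1) = 2 * m + 2 := by ring
    rw [h1]
    push_cast
    rw [show (2:ℝ) * ((m:ℝ) + 1) = 2 * (m:ℝ) + 2 from by ring]
    linarith [ih]

lemma kernel_sign (k : ℕ) (hk : k ≠ 0) {t : ℝ} (h0 : 0 < t) (h1 : t < 1) :
    (-1 : ℝ) ^ (k + 1) * ((Bp (2 * k)).eval t - bb (2 * k)) < 0 := by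
  have hmem : t ∈ Set.Icc (0:ℝ) 1 := ⟨h0.le, h1.le⟩
  have hmem0 : (0:ℝ) ∈ Set.Icc (0:ℝ) 1 := ⟨le_refl 0, zero_le_one⟩
  have hst := hasSum_one_div_nat_pow_mul_cos hk hmem
  have hs0 := hasSum_one_div_nat_pow_mul_cos hk hmem0
  set d : ℝ := (2 * π) ^ (2 * k) / 2 / ((2 * k).factorial : ℝ) with hd
  have hdpos : 0 < d := by
    rw [hd]
    have := pi_pos
    positivity
  have hc : (-1 : ℝ) ^ (k + 1) * (2 * π) ^ (2 * k) / 2 / ((2 * k).factorial : ℝ)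
      = (-1 : ℝ) ^ (k + 1) * d := by rw [hd]; ring
  rw [hc] at hst hs0
  have hle : ∀ n : ℕ, (1 : ℝ) / (n : ℝ) ^ (2 * k) * Real.cos (2 * π * n * t)
      ≤ (1 : ℝ) / (n : ℝ) ^ (2 * k) * Real.cos (2 * π * n * 0) := by
    intro n
    apply mul_le_mul_of_nonneg_left _ (by positivity)
    rw [mul_zero, Real.cos_zero]
    exact Real.cos_le_one _
  have hlt1 : (1 : ℝ) / ((1:ℕ) : ℝ) ^ (2 * k) * Real.cos (2 * π * ((1:ℕ):ℝ) * t)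
      < (1 : ℝ) / ((1:ℕ) : ℝ) ^ (2 * k) * Real.cos (2 * π * ((1:ℕ):ℝ) * 0) := by
    have hpi := pi_pos
    rw [Nat.cast_one, mul_zero, Real.cos_zero, mul_one, one_pow, mul_one]
    rw [div_self one_ne_zero, one_mul]
    have hne : Real.cos (2 * π * t) ≠ 1 := by
      intro h
      have := (Real.cos_eq_one_iff_of_lt_of_lt
        (by nlinarith : -(2 * π) < 2 * π * t) (by nlinarith : 2 * π * t < 2 * π)).mp h
      nlinarith
    have hlt2 := lt_of_le_of_ne (Real.cos_le_one (2 * π * t)) hne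
    convert hlt2 using 2 <;> ring
  have hlt := hasSum_lt hle hlt1 hst hs0
  have heval0 : (Polynomial.map (algebraMap ℚ ℝ) (Polynomial.bernoulli (2 * k))).eval (0:ℝ)
      = bb (2 * k) := Bp_eval_zero (2 * k)
  rw [heval0] at hlt
  have : (-1 : ℝ) ^ (k + 1) * d * ((Bp (2 * k)).eval t - bb (2 * k)) < 0 := by
    rw [Bp] at *
    nlinarith [hlt]
  calc (-1 : ℝ) ^ (k + 1) * ((Bp (2 * k)).eval t - bb (2 * k))
      = ((-1 : ℝ) ^ (k + 1) * d * ((Bp (2 * k)).eval t - bb (2 * k))) / d := by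
        field_simp
    _ < 0 := div_neg_of_neg_of_pos this hdpos

lemma Jsign (m : ℕ) (x : ℝ) (hx : 1 ≤ x) : 0 < (-1 : ℝ) ^ (m + 1) * Jint m x := by
  rw [Jint, ← intervalIntegral.integral_const_mul]
  apply intervalIntegral_pos_of_pos_on
  · have := (contOn x (by linarith) (Bp (2 * m + 2) - Polynomial.C (bb (2 * m + 2)))
      (2 * m + 3)).const_mul ((-1 : ℝ) ^ (m + 1))
    simpa using this
  · intro t ht
    obtain ⟨h0, h1⟩ := ht
    have hks := kernel_sign (m + 1) (by omega) h0 h1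
    rw [show 2 * (m + 1) = 2 * m + 2 from by ring] at hks
    rw [pow_succ] at hks
    have hnum : 0 < (-1 : ℝ) ^ (m + 1) * ((Bp (2 * m + 2)).eval t - bb (2 * m + 2)) := by
      nlinarith
    have hden : 0 < (x + t) ^ (2 * m + 3) := by positivity
    rw [mul_div_assoc'] at *
    exact div_pos hnum hden
  · norm_num

noncomputable def T (m : ℕ) (n : ℕ) : ℝ :=
  (harmonic n : ℝ) - Real.log n - 1 / (2 * n) + S m n

lemma Tdiff (m n : ℕ) (hn : 1 ≤ n) : T m n - T m (n + 1) = Jint m n := by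
  have hn' : (1:ℝ) ≤ (n : ℝ) := by exact_mod_cast hn
  have hEM := EM (n : ℝ) (by linarith) m
  rw [Real.log_div (by linarith) (by linarith)] at hEM
  rw [T, T]
  have hh : (harmonic (n + 1) : ℝ) = (harmonic n : ℝ) + 1 / ((n : ℝ) + 1) := by
    rw [harmonic_succ]; push_cast; ring
  push_cast
  rw [hh]
  have hne : ((n:ℝ) + 1) ≠ 0 := by positivity
  have e : (1:ℝ) / ((n:ℝ) + 1) = 2 * (1 / (2 * ((n:ℝ) + 1))) := by field_simp
  linarith [hEM]

lemma tendsto_aux (k : ℕ) (hk : 1 ≤ k) :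
    Tendsto (fun n : ℕ => (_root_.bernoulli (2 * k) : ℝ) / (2 * (k : ℝ) * (n : ℝ) ^ (2 * k)))
      atTop (𝓝 0) := by
  have h1 : Tendsto (fun n : ℕ => ((n : ℝ)) ^ (2 * k)) atTop atTop :=
    (tendsto_pow_atTop (by omega)).comp tendsto_natCast_atTop_atTop
  have h2 := h1.inv_tendsto_atTop
  have h3 := h2.const_mul ((_root_.bernoulli (2 * k) : ℝ) / (2 * (k : ℝ)))
  rw [mul_zero] at h3
  apply h3.congr
  intro n
  simp only [Pi.inv_apply]
  rw [div_eq_mul_inv, div_eq_mul_inv, mul_inv]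
  ring

lemma Ttendsto (m : ℕ) :
    Tendsto (fun n : ℕ => T m n) atTop (𝓝 Real.eulerMascheroniConstant) := by
  have hA := Real.tendsto_harmonic_sub_log
  have hB : Tendsto (fun n : ℕ => 1 / (2 * (n : ℝ))) atTop (𝓝 0) := by
    have h1 : Tendsto (fun n : ℕ => 2 * (n : ℝ)) atTop atTop :=
      Tendsto.const_mul_atTop two_pos tendsto_natCast_atTop_atTop
    have := h1.inv_tendsto_atTop
    apply this.congr
    intro n
    simp only [Pi.inv_apply, one_div]
  have hC : Tendsto (fun n : ℕ => S m n) atTop (𝓝 0) := by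
    have : Tendsto (fun n : ℕ => ∑ k ∈ Finset.Icc 1 m,
        (_root_.bernoulli (2 * k) : ℝ) / (2 * (k : ℝ) * (n : ℝ) ^ (2 * k))) atTop
        (𝓝 (∑ k ∈ Finset.Icc 1 m, (0:ℝ))) := by
      apply tendsto_finset_sum
      intro k hk
      exact tendsto_aux k (Finset.mem_Icc.mp hk).1
    simpa [S] using this
  have := (hA.sub hB).add hC
  simp only [sub_zero, add_zero] at this
  apply this.congr
  intro n
  rw [T]

lemma Ttel (m n : ℕ) (hn : 1 ≤ n) (p : ℕ) :
    T m n - T m (n + p) = ∑ i ∈ Finset.range p, Jint m ((n + i : ℕ) : ℝ) := by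
  induction p with
  | zero => simp
  | succ p ih =>
    rw [Finset.sum_range_succ, ← ih, show n + (p + 1) = (n + p) + 1 from by ring]
    have := Tdiff m (n + p) (by omega)
    push_cast at this ⊢
    linarith

lemma key (m n : ℕ) (hn : 1 ≤ n) :
    0 < (-1 : ℝ) ^ (m + 1) * (T m n - Real.eulerMascheroniConstant) := by
  have hn' : (1:ℝ) ≤ (n : ℝ) := by exact_mod_cast hn
  have hlim : Tendsto (fun p : ℕ => (-1:ℝ) ^ (m + 1) * (T m n - T m (n + p))) atTop
      (𝓝 ((-1:ℝ) ^ (m + 1) * (T m n - Real.eulerMascheroniConstant))) := by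
    apply Tendsto.const_mul
    apply Tendsto.const_sub
    exact ((Ttendsto m).comp (tendsto_add_atTop_nat n)).congr
      (fun p => by simp only [Function.comp_apply, Nat.add_comm n p])
  have hge : ∀ᶠ p in atTop,
      (-1:ℝ) ^ (m + 1) * Jint m n ≤ (-1:ℝ) ^ (m + 1) * (T m n - T m (n + p)) := by
    filter_upwards [eventually_ge_atTop 1] with p hp
    rw [Ttel m n hn p, Finset.mul_sum]
    have h0 : (0:ℕ) ∈ Finset.range p := Finset.mem_range.mpr (by omega)
    have := Finset.single_le_sum (f := fun i => (-1:ℝ) ^ (m + 1) * Jint m ((n + i : ℕ) : ℝ))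
      (fun i _ => (Jsign m ((n + i : ℕ) : ℝ)
        (by exact_mod_cast (by omega : 1 ≤ n + i))).le) h0
    simpa using this
  exact lt_of_lt_of_le (Jsign m n hn') (ge_of_tendsto hlim hge)

end EMaux

/-- For all integers `n ≥ 1` and `N ≥ 1`, the partial Euler–Maclaurin sums bracket the error
in the harmonic approximation to `γ`:
`γ + 1/(2n) − ∑_{k=1}^{2N+1} B_{2k}/(2k·n^{2k}) < H_n − log n
  < γ + 1/(2n) − ∑_{k=1}^{2N} B_{2k}/(2k·n^{2k})`, with both inequalities strict. -/
theorem harmonic_sub_log_bernoulli_bounds (n N : ℕ) (hn : 1 ≤ n) (hN : 1 ≤ N) :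
    Real.eulerMascheroniConstant + 1 / (2 * (n : ℝ)) -
        ∑ k ∈ Finset.Icc 1 (2 * N + 1),
          (bernoulli (2 * k) : ℝ) / (2 * (k : ℝ) * (n : ℝ) ^ (2 * k)) <
      (harmonic n : ℝ) - Real.log n ∧
    (harmonic n : ℝ) - Real.log n <
      Real.eulerMascheroniConstant + 1 / (2 * (n : ℝ)) -
        ∑ k ∈ Finset.Icc 1 (2 * N),
          (bernoulli (2 * k) : ℝ) / (2 * (k : ℝ) * (n : ℝ) ^ (2 * k)) := by
  constructor
  · have h := EMaux.key (2 * N + 1) n hn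
    rw [show (2 * N + 1) + 1 = 2 * (N + 1) by ring, pow_mul, neg_one_sq, one_pow, one_mul] at h
    have : Real.eulerMascheroniConstant < EMaux.T (2 * N + 1) n := by linarith
    rw [EMaux.T, EMaux.S] at this
    linarith
  · have h := EMaux.key (2 * N) n hn
    rw [(Odd.neg_one_pow ⟨N, by ring⟩ : (-1 : ℝ) ^ (2 * N + 1) = -1)] at h
    have : EMaux.T (2 * N) n < Real.eulerMascheroniConstant := by linarith
    rw [EMaux.T, EMaux.S] at this
    linarith
end

section
/- The alternating series ∑_{k=2}^∞ (−1)^k ζ(k)/k converges to γ, in the sense that the partial sums ∑_{k=2}^N (−1)^k ζ(k)/k tend to γ as N → ∞. -/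
/-- The Riemann zeta function for a real argument `s > 1`, `ζ(s) = ∑_{n=1}^∞ n^{−s}`. -/
noncomputable def zetaReal (s : ℝ) : ℝ := ∑' n : ℕ, 1 / ((n : ℝ) + 1) ^ s

open Filter Real Finset

noncomputable def Fterm (p : ℕ × ℕ) : ℝ :=
  (-1) ^ p.2 * (1 / ((p.1 : ℝ) + 2)) ^ (p.2 + 2) / ((p.2 : ℝ) + 2)

lemma row_hasSum (n : ℕ) :
    HasSum (fun j => Fterm (n, j))
      (1 / ((n : ℝ) + 2) - Real.log (1 + 1 / ((n : ℝ) + 2))) := by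
  set x : ℝ := 1 / ((n : ℝ) + 2) with hxdef
  have hx0 : 0 < x := by positivity
  have hx : |(-x)| < 1 := by
    rw [abs_neg, abs_of_pos hx0, hxdef, div_lt_one (by positivity)]
    linarith [Nat.cast_nonneg (α := ℝ) n]
  have h := Real.hasSum_pow_div_log_of_abs_lt_one hx
  rw [sub_neg_eq_add] at h
  have h2 := (hasSum_nat_add_iff' (f := fun m => (-x) ^ (m + 1) / ((m : ℝ) + 1)) 1).mpr h
  simp only [Finset.range_one, Finset.sum_singleton, Nat.cast_zero, zero_add, pow_one,
    div_one] at h2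
  convert h2 using 1
  · rfl
  · funext j
    simp only [Fterm]
    rw [show (-x) ^ (j + 1 + 1) = (-1)^(j+2) * x ^ (j+2) by rw [neg_pow]]
    rw [show (-1 : ℝ)^(j+2) = (-1)^j by rw [pow_add]; norm_num]
    push_cast
    ring
  · ring

lemma col_hasSum (j : ℕ) :
    HasSum (fun n : ℕ => (1 / ((n : ℝ) + 2)) ^ (j + 2)) (zetaReal (j + 2) - 1) := by
  have hs : Summable (fun n : ℕ => 1 / ((n : ℝ)) ^ (j + 2)) :=
    Real.summable_one_div_nat_pow.mpr (by omega)
  have hs1 : Summable (fun n : ℕ => 1 / ((n : ℝ) + 1) ^ (j + 2)) := by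
    have := (summable_nat_add_iff 1).mpr hs
    exact this.congr fun n => by push_cast; ring_nf
  have hz : HasSum (fun n : ℕ => 1 / ((n : ℝ) + 1) ^ (j + 2)) (zetaReal (j + 2)) := by
    have heq : zetaReal ((j : ℝ) + 2) = ∑' n : ℕ, 1 / ((n : ℝ) + 1) ^ (j + 2) := by
      unfold zetaReal
      congr 1; funext n
      rw [show ((j : ℝ) + 2) = ((j + 2 : ℕ) : ℝ) by push_cast; ring, Real.rpow_natCast]
    rw [show ((j : ℕ) : ℝ) + 2 = ((j : ℝ) + 2 : ℝ) by norm_num, heq]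
    exact hs1.hasSum
  have h2 := (hasSum_nat_add_iff' (f := fun n => 1 / ((n : ℝ) + 1) ^ (j + 2)) 1).mpr hz
  simp only [Finset.range_one, Finset.sum_singleton, Nat.cast_zero, zero_add, one_pow,
    div_one, one_div_one] at h2
  convert h2 using 1
  · rfl
  funext n
  push_cast
  rw [div_pow, one_pow]
  ring

lemma Fterm_summable : Summable Fterm := by
  have hgeo : Summable (fun j : ℕ => (1 / 2 : ℝ) ^ j) :=
    summable_geometric_of_lt_one (by norm_num) (by norm_num)
  have hsq : Summable (fun n : ℕ => (1 / ((n : ℝ) + 2)) ^ 2) := by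
    have hs : Summable (fun n : ℕ => 1 / ((n : ℝ)) ^ 2) :=
      Real.summable_one_div_nat_pow.mpr (by norm_num)
    have := (summable_nat_add_iff 2).mpr hs
    exact this.congr fun n => by push_cast; rw [div_pow, one_pow]
  have hG := hsq.mul_of_nonneg hgeo (fun n => by positivity) (fun j => by positivity)
  refine Summable.of_norm_bounded hG fun p => ?_
  obtain ⟨n, j⟩ := p
  have hxle : (1 / ((n : ℝ) + 2)) ≤ 1 / 2 := by
    apply one_div_le_one_div_of_le <;> [norm_num; linarith [Nat.cast_nonneg (α := ℝ) n]]
  have hfe : Fterm (n, j) = (-1)^j * ((1 / ((n : ℝ) + 2)) ^ (j + 2) / ((j : ℝ) + 2)) := by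
    simp only [Fterm]; ring
  rw [hfe, norm_mul, norm_pow, norm_neg, norm_one, one_pow, one_mul, Real.norm_eq_abs,
    abs_of_nonneg (by positivity)]
  calc (1 / ((n : ℝ) + 2)) ^ (j + 2) / ((j : ℝ) + 2)
      ≤ (1 / ((n : ℝ) + 2)) ^ (j + 2) := div_le_self (by positivity) (by linarith [Nat.cast_nonneg (α := ℝ) j])
    _ = (1 / ((n : ℝ) + 2)) ^ 2 * (1 / ((n : ℝ) + 2)) ^ j := by ring
    _ ≤ (1 / ((n : ℝ) + 2)) ^ 2 * (1 / 2) ^ j := by gcongr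

lemma row_partial (N : ℕ) :
    ∑ n ∈ range N, (1 / ((n : ℝ) + 2) - Real.log (1 + 1 / ((n : ℝ) + 2)))
      = ((harmonic (N + 1) : ℝ) - 1) - (Real.log ((N : ℝ) + 2) - Real.log 2) := by
  induction N with
  | zero => simp [harmonic_succ]
  | succ N ih =>
    rw [Finset.sum_range_succ, ih]
    have h1 : Real.log (1 + 1 / ((N : ℝ) + 2)) =
        Real.log ((N : ℝ) + 3) - Real.log ((N : ℝ) + 2) := by
      rw [show (1 : ℝ) + 1 / ((N : ℝ) + 2) = ((N : ℝ) + 3) / ((N : ℝ) + 2) by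
        field_simp; ring]
      rw [Real.log_div (by positivity) (by positivity)]
    rw [h1, harmonic_succ (N + 1)]
    push_cast
    ring

lemma even_alt_partial (N : ℕ) :
    ∑ j ∈ range (2 * N), (-1 : ℝ) ^ j / ((j : ℝ) + 1)
      = (harmonic (2 * N) : ℝ) - harmonic N := by
  induction N with
  | zero => simp
  | succ N ih =>
    have h2 : 2 * (N + 1) = (2 * N + 1) + 1 := by ring
    rw [h2, Finset.sum_range_succ, Finset.sum_range_succ, ih]
    rw [harmonic_succ (2*N+1), harmonic_succ (2*N), harmonic_succ N]
    push_cast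
    rw [pow_succ, show ((-1:ℝ)^(2*N)) = 1 by rw [pow_mul]; norm_num]
    field_simp
    ring

lemma alt_harmonic_tendsto :
    Tendsto (fun M : ℕ => ∑ j ∈ range M, (-1 : ℝ) ^ j / ((j : ℝ) + 1)) atTop
      (nhds (Real.log 2)) := by
  have hant : Antitone (fun j : ℕ => 1 / ((j : ℝ) + 1)) := by
    intro a b hab
    apply one_div_le_one_div_of_le (by positivity)
    have : (a : ℝ) ≤ b := Nat.cast_le.mpr hab
    linarith
  have h0 : Tendsto (fun j : ℕ => 1 / ((j : ℝ) + 1)) atTop (nhds 0) :=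
    tendsto_one_div_add_atTop_nhds_zero_nat
  obtain ⟨l, hl⟩ := hant.tendsto_alternating_series_of_tendsto_zero h0
  have hl' : Tendsto (fun M : ℕ => ∑ j ∈ range M, (-1 : ℝ) ^ j / ((j : ℝ) + 1)) atTop (nhds l) := by
    refine hl.congr fun M => Finset.sum_congr rfl fun j _ => by ring
  have h2n : Tendsto (fun N : ℕ => 2 * N) atTop atTop :=
    tendsto_atTop_mono (fun n => by simp [id]; omega) tendsto_id
  have heven : Tendsto (fun N : ℕ => ∑ j ∈ range (2 * N), (-1 : ℝ) ^ j / ((j : ℝ) + 1))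
      atTop (nhds l) := hl'.comp h2n
  have heven' : Tendsto (fun N : ℕ => ∑ j ∈ range (2 * N), (-1 : ℝ) ^ j / ((j : ℝ) + 1))
      atTop (nhds (Real.log 2)) := by
    have key : Tendsto (fun N : ℕ => ((harmonic (2*N) : ℝ) - Real.log (2*N))
        - ((harmonic N : ℝ) - Real.log N) + Real.log 2) atTop (nhds (Real.log 2)) := by
      have t1 : Tendsto (fun N : ℕ => (harmonic (2*N) : ℝ) - Real.log (2*N)) atTop
          (nhds Real.eulerMascheroniConstant) := by
        have := Real.tendsto_harmonic_sub_log.comp h2n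
        refine this.congr fun N => by push_cast; norm_num
      have := (t1.sub Real.tendsto_harmonic_sub_log).add_const (Real.log 2)
      simpa using this
    apply key.congr'
    filter_upwards [eventually_ge_atTop 1] with N hN
    rw [even_alt_partial]
    have hN0 : (N : ℝ) ≠ 0 := Nat.cast_ne_zero.mpr (by omega)
    rw [show (2 * (N:ℝ)) = 2 * N by norm_num, Real.log_mul (by norm_num) hN0]
    ring
  have : l = Real.log 2 := tendsto_nhds_unique heven heven'
  rwa [this] at hl'

lemma alt_shift_tendsto :
    Tendsto (fun M : ℕ => ∑ j ∈ range M, (-1 : ℝ) ^ j / ((j : ℝ) + 2)) atTop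
      (nhds (1 - Real.log 2)) := by
  have h := alt_harmonic_tendsto.comp (tendsto_add_atTop_nat 1)
  have key : Tendsto (fun M : ℕ => 1 - ∑ j ∈ range (M + 1), (-1 : ℝ) ^ j / ((j : ℝ) + 1))
      atTop (nhds (1 - Real.log 2)) := (tendsto_const_nhds.sub h)
  refine key.congr fun M => ?_
  rw [Finset.sum_range_succ' (fun j => (-1 : ℝ) ^ j / ((j : ℝ) + 1)) M]
  push_cast
  norm_num
  rw [← Finset.sum_neg_distrib]
  refine Finset.sum_congr rfl fun j _ => ?_
  rw [pow_succ]
  ring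

lemma col_total_hasSum :
    HasSum (fun j : ℕ => (-1 : ℝ) ^ j * (zetaReal ((j : ℝ) + 2) - 1) / ((j : ℝ) + 2))
      (Real.eulerMascheroniConstant - 1 + Real.log 2) := by
  have hFs := Fterm_summable.hasSum
  set T := ∑' p, Fterm p with hTdef
  have hrow : HasSum (fun n : ℕ => 1 / ((n : ℝ) + 2) - Real.log (1 + 1 / ((n : ℝ) + 2))) T :=
    hFs.prod_fiberwise row_hasSum
  have hT : T = Real.eulerMascheroniConstant - 1 + Real.log 2 := by
    have base := Real.tendsto_harmonic_sub_log_add_one.comp (tendsto_add_atTop_nat 1)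
    have tsum_tendsto : Tendsto
        (fun N : ℕ => ∑ n ∈ range N, (1 / ((n : ℝ) + 2) - Real.log (1 + 1 / ((n : ℝ) + 2))))
        atTop (nhds (Real.eulerMascheroniConstant - 1 + Real.log 2)) := by
      have := base.add_const (Real.log 2 - 1)
      refine Tendsto.congr (fun N => ?_) (by convert this using 2; ring)
      rw [row_partial N]
      simp only [Function.comp]
      push_cast
      ring
    exact tendsto_nhds_unique hrow.tendsto_sum_nat tsum_tendsto
  have hswap : HasSum (fun p : ℕ × ℕ => Fterm p.swap) T :=
    ((Equiv.prodComm ℕ ℕ).hasSum_iff).mpr hFs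
  have hcol : ∀ j : ℕ, HasSum (fun n : ℕ => Fterm (n, j))
      ((-1 : ℝ) ^ j * (zetaReal ((j : ℝ) + 2) - 1) / ((j : ℝ) + 2)) := by
    intro j
    have := (col_hasSum j).mul_left ((-1 : ℝ) ^ j / ((j : ℝ) + 2))
    convert this using 1
    · rfl
    · funext n; simp only [Fterm]; ring
    · ring
  have := hswap.prod_fiberwise (fun j => hcol j)
  rwa [hT] at this


/-- The partial sums `∑_{k=2}^N (−1)^k ζ(k)/k` tend to `γ` as `N → ∞`. -/
theorem tendsto_sum_neg_one_pow_zeta_div :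
    Filter.Tendsto (fun N : ℕ => ∑ k ∈ Finset.Icc 2 N, (-1 : ℝ) ^ k * zetaReal k / (k : ℝ))
      Filter.atTop (nhds Real.eulerMascheroniConstant) := by
  have main : Tendsto
      (fun M : ℕ => ∑ i ∈ range M, (-1 : ℝ) ^ (2 + i) * zetaReal ((2 + i : ℕ) : ℝ)
        / ((2 + i : ℕ) : ℝ)) atTop (nhds Real.eulerMascheroniConstant) := by
    have h := col_total_hasSum.tendsto_sum_nat.add alt_shift_tendsto
    rw [show Real.eulerMascheroniConstant - 1 + Real.log 2 + (1 - Real.log 2)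
      = Real.eulerMascheroniConstant by ring] at h
    refine h.congr fun M => ?_
    rw [← Finset.sum_add_distrib]
    refine Finset.sum_congr rfl fun j _ => ?_
    rw [show ((2 + j : ℕ) : ℝ) = (j : ℝ) + 2 by push_cast; ring,
      show (-1 : ℝ) ^ (2 + j) = (-1 : ℝ) ^ j by rw [pow_add]; norm_num]
    ring
  have comp := main.comp (tendsto_sub_atTop_nat 1)
  refine comp.congr fun N => ?_
  simp only [Function.comp]
  rw [← Finset.Ico_add_one_right_eq_Icc, Finset.sum_Ico_eq_sum_range, show N + 1 - 2 = N - 1 from by omega]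
end

section
/- The series ∑_{k=1}^∞ (−1)^k (log k)/k converges to log 2 · (γ − (log 2)/2), in the sense that the partial sums ∑_{k=1}^N (−1)^k (log k)/k tend to log 2 · (γ − (log 2)/2) as N → ∞. -/
open Real Filter Finset

noncomputable def fAux (k : ℕ) : ℝ := Real.log k / k

noncomputable def gAux (N : ℕ) : ℝ := (∑ k ∈ Finset.Icc 1 N, fAux k) - (Real.log N)^2 / 2

set_option maxHeartbeats 1000000 in
lemma gAux_step_bound (k : ℕ) :
    |gAux (k+1) - gAux k| ≤ 5 / ((k:ℝ) * Real.sqrt k) := by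
  rcases Nat.eq_zero_or_pos k with rfl | hk
  · simp [gAux, fAux]
  have hk1 : (1:ℝ) ≤ (k:ℝ) := by exact_mod_cast hk
  have hkpos : (0:ℝ) < k := by linarith
  set a := Real.log k with ha
  set b := Real.log (k+1) with hb
  have hstep : gAux (k+1) - gAux k = b / ((k:ℝ)+1) - (b^2 - a^2)/2 := by
    simp only [gAux, fAux]
    rw [Finset.sum_Icc_succ_top (by omega)]
    push_cast
    ring
  set d := b - a with hd
  have hblog : b = Real.log ((k:ℝ)+1) := hb
  have hd_le : d ≤ 1 / (k:ℝ) := by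
    have h1 : d = Real.log (((k:ℝ)+1)/(k:ℝ)) := by
      rw [hd, Real.log_div (by positivity) (by positivity), hblog, ha]
    have h2 := Real.log_le_sub_one_of_pos (x := ((k:ℝ)+1)/(k:ℝ)) (by positivity)
    have h3 : ((k:ℝ)+1)/(k:ℝ) - 1 = 1/(k:ℝ) := by field_simp; ring
    rw [h1]; linarith
  have hd_ge : 1 / ((k:ℝ)+1) ≤ d := by
    have h1 : -d = Real.log ((k:ℝ)/((k:ℝ)+1)) := by
      rw [hd, Real.log_div (by positivity) (by positivity), hblog, ha]; ring
    have h2 := Real.log_le_sub_one_of_pos (x := (k:ℝ)/((k:ℝ)+1)) (by positivity)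
    rw [← h1] at h2
    have h3 : (k:ℝ)/((k:ℝ)+1) - 1 = -(1/((k:ℝ)+1)) := by field_simp; ring
    linarith
  set s := Real.sqrt k with hs
  have hs_sq : s * s = (k:ℝ) := Real.mul_self_sqrt hkpos.le
  have hs1 : (1:ℝ) ≤ s := by
    rw [hs, show (1:ℝ) = Real.sqrt 1 by simp]
    exact Real.sqrt_le_sqrt hk1
  have hspos : (0:ℝ) < s := by linarith
  have hb_le : b ≤ 4 * s := by
    have h1 : b = 2 * Real.log (Real.sqrt ((k:ℝ)+1)) := by
      rw [hblog, Real.log_sqrt (by positivity)]; ring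
    have h2 : Real.log (Real.sqrt ((k:ℝ)+1)) ≤ Real.sqrt ((k:ℝ)+1) - 1 :=
      Real.log_le_sub_one_of_pos (by positivity)
    have h3 : Real.sqrt ((k:ℝ)+1) ≤ s + 1 := by
      rw [show s + 1 = Real.sqrt ((s + 1)^2) by rw [Real.sqrt_sq (by positivity)]]
      apply Real.sqrt_le_sqrt
      nlinarith
    nlinarith
  have hbpos : 0 ≤ b := by
    rw [hblog]; exact Real.log_nonneg (by linarith)
  have hexp : b / ((k:ℝ)+1) - (b^2 - a^2)/2 = b * (1/((k:ℝ)+1) - d) + d^2/2 := by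
    rw [hd]; field_simp; ring
  rw [hstep, hexp]
  have hdnn : 0 ≤ d := le_trans (by positivity) hd_ge
  have h1 : d - 1/((k:ℝ)+1) ≤ 1/((k:ℝ)*((k:ℝ)+1)) := by
    have h3 : (1:ℝ)/(k:ℝ) - 1/((k:ℝ)+1) = 1/((k:ℝ)*((k:ℝ)+1)) := by
      field_simp; ring
    linarith
  have hd2 : d^2 ≤ 1/(k:ℝ)^2 := by
    have h := mul_le_mul hd_le hd_le hdnn (by positivity : (0:ℝ) ≤ 1/(k:ℝ))
    have e1 : (1:ℝ)/(k:ℝ) * (1/(k:ℝ)) = 1/(k:ℝ)^2 := by ring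
    have e2 : d^2 = d*d := by ring
    linarith
  have habs : |b * (1/((k:ℝ)+1) - d) + d^2/2| ≤ b * (d - 1/((k:ℝ)+1)) + d^2/2 := by
    have hX : 0 ≤ b * (d - 1/((k:ℝ)+1)) := mul_nonneg hbpos (by linarith)
    have hneg : b * (1/((k:ℝ)+1) - d) = -(b*(d - 1/((k:ℝ)+1))) := by ring
    rw [abs_le]
    constructor
    · rw [hneg]; nlinarith [sq_nonneg d]
    · rw [hneg]; nlinarith [sq_nonneg d]
  refine habs.trans ?_
  have step1 : b * (d - 1/((k:ℝ)+1)) ≤ 4 * s * (1/((k:ℝ)*((k:ℝ)+1))) := by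
    apply mul_le_mul hb_le h1 (by linarith) (by positivity)
  have step2 : 4 * s * (1/((k:ℝ)*((k:ℝ)+1))) ≤ 4 / ((k:ℝ)*s) := by
    rw [mul_one_div, div_le_div_iff₀ (by positivity) (by positivity)]
    nlinarith
  have step3 : d^2/2 ≤ 1 / ((k:ℝ)*s) := by
    have hsk : s ≤ (k:ℝ) := by nlinarith
    have : 1/(k:ℝ)^2 ≤ 2 / ((k:ℝ)*s) := by
      rw [div_le_div_iff₀ (by positivity) (by positivity)]
      nlinarith
    have e : (2:ℝ)/((k:ℝ)*s) = 2*(1/((k:ℝ)*s)) := by ring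
    linarith
  have : (4:ℝ) / ((k:ℝ)*s) + 1/((k:ℝ)*s) = 5/((k:ℝ)*s) := by ring
  linarith

lemma summable_bound : Summable (fun k : ℕ => 5 / ((k:ℝ) * Real.sqrt k)) := by
  have h : Summable (fun k : ℕ => (1:ℝ) / (k:ℝ) ^ ((3:ℝ)/2)) :=
    Real.summable_one_div_nat_rpow.mpr (by norm_num)
  have := h.mul_left 5
  refine this.congr fun k => ?_
  rcases Nat.eq_zero_or_pos k with rfl | hk
  · norm_num
  have hkpos : (0:ℝ) < k := by exact_mod_cast hk
  rw [mul_one_div]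
  congr 1
  rw [show ((3:ℝ)/2) = 1 + 1/2 by norm_num, Real.rpow_add hkpos, Real.rpow_one,
    ← Real.sqrt_eq_rpow]

lemma gAux_tendsto : ∃ L : ℝ, Filter.Tendsto gAux Filter.atTop (nhds L) := by
  have hsum : Summable (fun k : ℕ => gAux (k+1) - gAux k) := by
    apply Summable.of_abs
    exact Summable.of_nonneg_of_le (fun k => abs_nonneg _) gAux_step_bound summable_bound
  refine ⟨∑' k, (gAux (k+1) - gAux k), ?_⟩
  have h := hsum.hasSum.tendsto_sum_nat
  have hg0 : gAux 0 = 0 := by simp [gAux, fAux]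
  refine h.congr fun n => ?_
  rw [Finset.sum_range_sub gAux, hg0, sub_zero]

lemma even_sum_identity (N : ℕ) :
    ∑ k ∈ Finset.Icc 1 (2*N), (-1:ℝ)^k * fAux k
      = 2 * ∑ j ∈ Finset.Icc 1 N, fAux (2*j) - ∑ k ∈ Finset.Icc 1 (2*N), fAux k := by
  induction N with
  | zero => simp
  | succ n ih =>
    have h2 : 2*(n+1) = (2*n+1)+1 := by ring
    rw [h2, Finset.sum_Icc_succ_top (by omega), Finset.sum_Icc_succ_top (by omega),
      Finset.sum_Icc_succ_top (by omega), Finset.sum_Icc_succ_top (by omega),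
      Finset.sum_Icc_succ_top (by omega), ih]
    have hodd : (-1:ℝ)^(2*n+1) = -1 := by
      rw [pow_succ, pow_mul]; norm_num
    have heven : (-1:ℝ)^(2*n+1+1) = 1 := by
      rw [pow_succ, hodd]; norm_num
    rw [hodd, heven]
    have : fAux (2*(n+1)) = fAux (2*n+1+1) := by norm_num [h2]
    rw [this]
    ring

/-- The partial sums `∑_{k=1}^N (−1)^k (log k)/k` tend to `log 2 · (γ − (log 2)/2)`. -/
theorem tendsto_sum_neg_one_pow_log_div :
    Filter.Tendsto (fun N : ℕ => ∑ k ∈ Finset.Icc 1 N, (-1 : ℝ) ^ k * Real.log k / (k : ℝ))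
      Filter.atTop
      (nhds (Real.log 2 * (Real.eulerMascheroniConstant - Real.log 2 / 2))) := by
  obtain ⟨L, hL⟩ := gAux_tendsto
  set P : ℕ → ℝ := fun N => ∑ k ∈ Finset.Icc 1 N, (-1:ℝ)^k * Real.log k / (k:ℝ) with hP
  have hPf : ∀ N, P N = ∑ k ∈ Finset.Icc 1 N, (-1:ℝ)^k * fAux k := by
    intro N
    refine Finset.sum_congr rfl fun k _ => ?_
    rw [fAux, mul_div_assoc]
  set γ := Real.eulerMascheroniConstant
  -- even part formula
  have heven_form : ∀ N : ℕ, 1 ≤ N →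
      P (2*N) = Real.log 2 * ((∑ j ∈ Finset.Icc 1 N, (1:ℝ)/(j:ℝ)) - Real.log N)
        + gAux N - gAux (2*N) - (Real.log 2)^2/2 := by
    intro N hN
    rw [hPf, even_sum_identity]
    have hsplit : 2 * ∑ j ∈ Finset.Icc 1 N, fAux (2*j)
        = Real.log 2 * ∑ j ∈ Finset.Icc 1 N, (1:ℝ)/(j:ℝ) + ∑ j ∈ Finset.Icc 1 N, fAux j := by
      rw [Finset.mul_sum, Finset.mul_sum, ← Finset.sum_add_distrib]
      apply Finset.sum_congr rfl
      intro j hj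
      have hj1 : 1 ≤ j := (Finset.mem_Icc.1 hj).1
      have hjpos : (0:ℝ) < j := by exact_mod_cast hj1
      rw [fAux, fAux]
      push_cast
      rw [Real.log_mul (by norm_num) (by positivity)]
      field_simp
    rw [hsplit]
    have hg1 : ∑ j ∈ Finset.Icc 1 N, fAux j = gAux N + (Real.log N)^2/2 := by
      rw [gAux]; push_cast; ring
    have hg2 : ∑ k ∈ Finset.Icc 1 (2*N), fAux k = gAux (2*N) + (Real.log (2*N))^2/2 := by
      rw [gAux]; push_cast; ring
    have hNpos : (0:ℝ) < N := by exact_mod_cast hN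
    have hlog2N : Real.log (2*(N:ℝ)) = Real.log 2 + Real.log N :=
      Real.log_mul (by norm_num) (by positivity)
    rw [hg1, hg2, hlog2N]
    ring
  -- harmonic tendsto
  have hH : Filter.Tendsto (fun N : ℕ => (∑ j ∈ Finset.Icc 1 N, (1:ℝ)/(j:ℝ)) - Real.log N)
      Filter.atTop (nhds γ) := by
    have := Real.tendsto_harmonic_sub_log
    refine this.congr fun n => ?_
    congr 1
    rw [harmonic_eq_sum_Icc]
    push_cast
    simp [one_div]
  have h2n : Filter.Tendsto (fun N : ℕ => 2*N) Filter.atTop Filter.atTop :=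
    Filter.tendsto_atTop_atTop.2 fun b => ⟨b, fun n hn => by omega⟩
  have hgeven : Filter.Tendsto (fun N : ℕ => gAux (2*N)) Filter.atTop (nhds L) :=
    hL.comp h2n
  have heven : Filter.Tendsto (fun N : ℕ => P (2*N)) Filter.atTop
      (nhds (Real.log 2 * (γ - Real.log 2 / 2))) := by
    have key : Filter.Tendsto
        (fun N : ℕ => Real.log 2 * ((∑ j ∈ Finset.Icc 1 N, (1:ℝ)/(j:ℝ)) - Real.log N)
          + gAux N - gAux (2*N) - (Real.log 2)^2/2)
        Filter.atTop (nhds (Real.log 2 * γ + L - L - (Real.log 2)^2/2)) := by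
      exact (((hH.const_mul (Real.log 2)).add hL).sub hgeven).sub tendsto_const_nhds
    have : Real.log 2 * γ + L - L - (Real.log 2)^2/2
        = Real.log 2 * (γ - Real.log 2 / 2) := by ring
    rw [this] at key
    refine key.congr' ?_
    filter_upwards [Filter.eventually_ge_atTop 1] with N hN
    exact (heven_form N hN).symm
  -- odd part
  have hlogdiv : Filter.Tendsto (fun x : ℝ => Real.log x / x) Filter.atTop (nhds 0) :=
    Real.isLittleO_log_id_atTop.tendsto_div_nhds_zero
  have hodd_aux : Filter.Tendsto (fun N : ℕ => fAux (2*N+1)) Filter.atTop (nhds 0) := by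
    have h1 : Filter.Tendsto (fun N : ℕ => ((2*N+1 : ℕ) : ℝ)) Filter.atTop Filter.atTop := by
      apply tendsto_natCast_atTop_atTop.comp
      exact Filter.tendsto_atTop_atTop.2 fun b => ⟨b, fun n hn => by omega⟩
    exact hlogdiv.comp h1
  have hodd : Filter.Tendsto (fun N : ℕ => P (2*N+1)) Filter.atTop
      (nhds (Real.log 2 * (γ - Real.log 2 / 2))) := by
    have hform : ∀ N : ℕ, P (2*N+1) = P (2*N) - fAux (2*N+1) := by
      intro N
      rw [hPf, hPf, Finset.sum_Icc_succ_top (by omega)]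
      have : (-1:ℝ)^(2*N+1) = -1 := by rw [pow_succ, pow_mul]; norm_num
      rw [this]
      ring
    have := heven.sub hodd_aux
    rw [sub_zero] at this
    exact this.congr fun N => (hform N).symm
  -- combine even and odd
  rw [Metric.tendsto_atTop] at heven hodd ⊢
  intro ε hε
  obtain ⟨N1, h1⟩ := heven ε hε
  obtain ⟨N2, h2⟩ := hodd ε hε
  refine ⟨2*N1 + 2*N2 + 2, fun n hn => ?_⟩
  rcases Nat.even_or_odd n with ⟨m, hm⟩ | ⟨m, hm⟩
  · have hm' : n = 2*m := by omega
    rw [hm']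
    exact h1 m (by omega)
  · have hm' : n = 2*m+1 := by omega
    rw [hm']
    exact h2 m (by omega)
end

section
/- Raabe's formula: for every real x ≥ 0, ∫_x^{x+1} log Γ(z) dz = (1/2) log(2π) + x log x − x, where for x = 0 the term x log x is interpreted as 0; in particular ∫_0^1 log Γ(z) dz = (1/2) log(2π). -/
open Real MeasureTheory Set intervalIntegral

/-- `log` is interval integrable on intervals with nonnegative endpoints. -/
lemma raabe_aux_log_II {a b : ℝ} (ha : 0 ≤ a) (hb : 0 ≤ b) :
    IntervalIntegrable Real.log volume a b := by
  have h1 : IntervalIntegrable (fun t : ℝ => 2 * t ^ (-1/2 : ℝ) + t) volume a b :=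
    ((intervalIntegrable_rpow' (by norm_num)).const_mul 2).add intervalIntegrable_id
  refine h1.mono_fun' (Real.measurable_log.aestronglyMeasurable.restrict) ?_
  refine (ae_restrict_iff' measurableSet_uIoc).mpr (ae_of_all _ fun t ht => ?_)
  have ht0 : 0 < t := lt_of_le_of_lt (le_min ha hb) ht.1
  have hrp : (0:ℝ) < t ^ (-1/2 : ℝ) := Real.rpow_pos_of_pos ht0 _
  have key : (-1/2 : ℝ) * Real.log t ≤ t ^ (-1/2 : ℝ) - 1 := by
    have := Real.log_le_sub_one_of_pos hrp
    rwa [Real.log_rpow ht0] at this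
  have hb2 : Real.log t ≤ t := (Real.log_le_sub_one_of_pos ht0).trans (by linarith)
  simp only [Real.norm_eq_abs]
  rcases abs_cases (Real.log t) with ⟨h, _⟩ | ⟨h, _⟩ <;> rw [h] <;> nlinarith [ht0.le]

/-- `∫ t in 0..x, log t = x log x - x` for `x ≥ 0`. -/
lemma raabe_aux_integral_log {x : ℝ} (hx : 0 ≤ x) :
    ∫ t in (0:ℝ)..x, Real.log t = x * Real.log x - x := by
  have hcont : ContinuousOn (fun t : ℝ => t * Real.log t - t) (Icc 0 x) :=
    (Real.continuous_mul_log.sub continuous_id).continuousOn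
  have hderiv : ∀ t ∈ Ioo (0:ℝ) x,
      HasDerivWithinAt (fun t : ℝ => t * Real.log t - t) (Real.log t) (Ioi t) t := by
    intro t ht
    have h : HasDerivAt (fun t : ℝ => t * Real.log t - t) (Real.log t) t := by
      exact ((Real.hasDerivAt_mul_log ht.1.ne').sub (hasDerivAt_id t)).congr_deriv (by ring)
    exact h.hasDerivWithinAt
  rw [integral_eq_sub_of_hasDeriv_right_of_le hx hcont hderiv (raabe_aux_log_II le_rfl hx)]
  simp

/-- `log ∘ Γ` is interval integrable on intervals with nonnegative endpoints. -/
lemma raabe_aux_logGamma_II {a b : ℝ} (ha : 0 ≤ a) (hb : 0 ≤ b) :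
    IntervalIntegrable (fun t => Real.log (Real.Gamma t)) volume a b := by
  have h1 : IntervalIntegrable (fun t => Real.log (Real.Gamma (t + 1))) volume a b := by
    apply ContinuousOn.intervalIntegrable
    intro t ht
    have ht1 : 0 < t + 1 := by
      have : min a b ≤ t := ht.1
      have : 0 ≤ t := le_trans (le_min ha hb) this
      linarith
    have hG : ContinuousAt Real.Gamma (t + 1) := by
      refine (Real.differentiableAt_Gamma fun m => ?_).continuousAt
      have hm : (-(m:ℝ)) ≤ 0 := neg_nonpos.mpr (Nat.cast_nonneg m)
      linarith
    have h5 : ContinuousAt (fun s : ℝ => s + 1) t := by fun_prop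
    have h6 : ContinuousAt (fun s : ℝ => Real.Gamma (s + 1)) t := ContinuousAt.comp (f := fun s : ℝ => s + 1) hG h5
    exact (h6.log (Real.Gamma_pos_of_pos ht1).ne').continuousWithinAt
  have h2 := raabe_aux_log_II ha hb
  rw [intervalIntegrable_iff] at h1 h2 ⊢
  apply (h1.sub h2).congr
  refine (ae_restrict_iff' measurableSet_uIoc).mpr (ae_of_all _ fun t ht => ?_)
  have ht0 : 0 < t := lt_of_le_of_lt (le_min ha hb) ht.1
  simp only [Pi.sub_apply]
  rw [Real.Gamma_add_one ht0.ne',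
    Real.log_mul ht0.ne' (Real.Gamma_pos_of_pos ht0).ne']
  ring

/-- `∫ z in 0..1, log Γ z = ½ log (2π)` (via the Legendre duplication formula). -/
lemma raabe_aux_I_eq :
    ∫ z in (0:ℝ)..1, Real.log (Real.Gamma z) = 1/2 * Real.log (2 * Real.pi) := by
  set I : ℝ := ∫ z in (0:ℝ)..1, Real.log (Real.Gamma z) with hI
  have hIa : IntervalIntegrable (fun z => Real.log (Real.Gamma z)) volume 0 (1/2) :=
    raabe_aux_logGamma_II le_rfl (by norm_num)
  have hIb : IntervalIntegrable (fun z => Real.log (Real.Gamma (z + 1/2))) volume 0 (1/2) := by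
    have h := (raabe_aux_logGamma_II (a := 1/2) (b := 1) (by norm_num) (by norm_num)).comp_add_right
      (1/2 : ℝ)
    norm_num at h
    exact h
  have hIc : IntervalIntegrable (fun z => Real.log (Real.Gamma (2 * z))) volume 0 (1/2) := by
    have h := (raabe_aux_logGamma_II (a := 0) (b := 1) le_rfl zero_le_one).comp_mul_left (c := 2)
    norm_num at h
    exact h
  have split : I = (∫ z in (0:ℝ)..(1/2), Real.log (Real.Gamma z))
      + ∫ z in (1/2:ℝ)..1, Real.log (Real.Gamma z) :=
    (integral_add_adjacent_intervals hIa
      (raabe_aux_logGamma_II (by norm_num) zero_le_one)).symm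
  have shift : ∫ z in (1/2:ℝ)..1, Real.log (Real.Gamma z)
      = ∫ z in (0:ℝ)..(1/2), Real.log (Real.Gamma (z + 1/2)) := by
    rw [integral_comp_add_right (fun z => Real.log (Real.Gamma z)) (1/2)]
    norm_num
  have sum2 : I = ∫ z in (0:ℝ)..(1/2),
      (Real.log (Real.Gamma z) + Real.log (Real.Gamma (z + 1/2))) := by
    rw [split, shift, integral_add hIa hIb]
  have dup : ∫ z in (0:ℝ)..(1/2),
        (Real.log (Real.Gamma z) + Real.log (Real.Gamma (z + 1/2)))
      = ∫ z in (0:ℝ)..(1/2),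
        (Real.log (Real.Gamma (2 * z)) + ((1 - 2*z) * Real.log 2 + Real.log Real.pi / 2)) := by
    apply intervalIntegral.integral_congr_ae
    refine ae_of_all _ fun z hz => ?_
    rw [uIoc_of_le (by norm_num : (0:ℝ) ≤ 1/2)] at hz
    have hz0 : 0 < z := hz.1
    have h1 : 0 < Real.Gamma z := Real.Gamma_pos_of_pos hz0
    have h2 : 0 < Real.Gamma (z + 1/2) := Real.Gamma_pos_of_pos (by linarith)
    have h3 : 0 < Real.Gamma (2 * z) := Real.Gamma_pos_of_pos (by linarith)
    have h4 : (0:ℝ) < (2:ℝ) ^ (1 - 2*z) := Real.rpow_pos_of_pos two_pos _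
    have hdup := Real.Gamma_mul_Gamma_add_half z
    have := congrArg Real.log hdup
    rw [Real.log_mul h1.ne' h2.ne', Real.log_mul (mul_pos h3 h4).ne'
        (Real.sqrt_pos.mpr Real.pi_pos).ne', Real.log_mul h3.ne' h4.ne',
      Real.log_rpow two_pos, Real.log_sqrt Real.pi_pos.le] at this
    linarith
  have e1 : ∫ z in (0:ℝ)..(1/2), Real.log (Real.Gamma (2 * z)) = (1/2) * I := by
    rw [integral_comp_mul_left (fun z => Real.log (Real.Gamma z)) (two_ne_zero)]
    norm_num [hI]
  have e2 : ∫ z in (0:ℝ)..(1/2), ((1 - 2*z) * Real.log 2 + Real.log Real.pi / 2)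
      = (1/4) * Real.log 2 + (1/4) * Real.log Real.pi := by
    have hfun : ∀ z : ℝ, (1 - 2*z) * Real.log 2 + Real.log Real.pi / 2
        = (Real.log 2 + Real.log Real.pi / 2) - (2 * Real.log 2) * z := fun z => by ring
    simp_rw [hfun]
    rw [intervalIntegral.integral_sub intervalIntegrable_const
      ((intervalIntegrable_id).const_mul _), intervalIntegral.integral_const,
      intervalIntegral.integral_const_mul, integral_id]
    norm_num
    ring
  have hGint : IntervalIntegrable
      (fun z : ℝ => (1 - 2*z) * Real.log 2 + Real.log Real.pi / 2) volume 0 (1/2) :=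
    Continuous.intervalIntegrable (by fun_prop) _ _
  have comb : I = (1/2) * I + ((1/4) * Real.log 2 + (1/4) * Real.log Real.pi) := by
    conv_lhs => rw [sum2, dup]
    rw [integral_add hIc hGint, e1, e2]
  have : I = 1/2 * (Real.log 2 + Real.log Real.pi) := by linarith
  rw [this, Real.log_mul two_ne_zero Real.pi_ne_zero]

/-- Raabe's formula: for every real `x ≥ 0`,
`∫_x^{x+1} log Γ(z) dz = (1/2) log(2π) + x log x − x`
(for `x = 0` the term `x log x` is `0`, which holds automatically here since
`Real.log 0 = 0`). -/
theorem raabe_integral_log_Gamma (x : ℝ) (hx : 0 ≤ x) :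
    ∫ z in x..(x + 1), Real.log (Real.Gamma z) =
      (1 / 2) * Real.log (2 * Real.pi) + x * Real.log x - x := by
  have h0x : IntervalIntegrable (fun z => Real.log (Real.Gamma z)) volume 0 x :=
    raabe_aux_logGamma_II le_rfl hx
  have hxx1 : IntervalIntegrable (fun z => Real.log (Real.Gamma z)) volume x (x+1) :=
    raabe_aux_logGamma_II hx (by linarith)
  have h01 : IntervalIntegrable (fun z => Real.log (Real.Gamma z)) volume 0 1 :=
    raabe_aux_logGamma_II le_rfl zero_le_one
  have h1x1 : IntervalIntegrable (fun z => Real.log (Real.Gamma z)) volume 1 (x+1) :=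
    raabe_aux_logGamma_II zero_le_one (by linarith)
  have hsplit1 : (∫ z in (0:ℝ)..x, Real.log (Real.Gamma z))
      + ∫ z in x..(x+1), Real.log (Real.Gamma z)
      = ∫ z in (0:ℝ)..(x+1), Real.log (Real.Gamma z) :=
    integral_add_adjacent_intervals h0x hxx1
  have hsplit2 : (∫ z in (0:ℝ)..1, Real.log (Real.Gamma z))
      + ∫ z in (1:ℝ)..(x+1), Real.log (Real.Gamma z)
      = ∫ z in (0:ℝ)..(x+1), Real.log (Real.Gamma z) :=
    integral_add_adjacent_intervals h01 h1x1
  have hshift : ∫ z in (1:ℝ)..(x+1), Real.log (Real.Gamma z)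
      = ∫ u in (0:ℝ)..x, Real.log (Real.Gamma (u + 1)) := by
    rw [integral_comp_add_right (fun z => Real.log (Real.Gamma z)) 1]
    norm_num
  have hshiftint : IntervalIntegrable (fun u => Real.log (Real.Gamma (u + 1))) volume 0 x := by
    have h := h1x1.comp_add_right 1
    norm_num at h
    exact h
  have hdiff : (∫ u in (0:ℝ)..x, Real.log (Real.Gamma (u + 1)))
      - ∫ u in (0:ℝ)..x, Real.log (Real.Gamma u)
      = ∫ u in (0:ℝ)..x, Real.log u := by
    rw [← integral_sub hshiftint h0x]
    apply intervalIntegral.integral_congr_ae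
    refine ae_of_all _ fun u hu => ?_
    rw [uIoc_of_le hx] at hu
    have hu0 : 0 < u := hu.1
    rw [Real.Gamma_add_one hu0.ne',
      Real.log_mul hu0.ne' (Real.Gamma_pos_of_pos hu0).ne']
    ring
  have : ∫ z in x..(x+1), Real.log (Real.Gamma z)
      = (∫ z in (0:ℝ)..1, Real.log (Real.Gamma z)) + ∫ u in (0:ℝ)..x, Real.log u := by
    rw [← hdiff, ← hshift]
    linarith
  rw [this, raabe_aux_I_eq, raabe_aux_integral_log hx]
  ring
end

section
/- The alternating series ∑_{k=2}^∞ (−1)^k ζ(k)/(k+1) converges to 1 + γ/2 − (1/2) log(2π), in the sense that the partial sums ∑_{k=2}^N (−1)^k ζ(k)/(k+1) tend to 1 + γ/2 − (1/2) log(2π) as N → ∞. -/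
open Filter Real Finset Topology

namespace AuxZeta

/-- `1/(n+1)` as a real. -/
noncomputable def xn (n : ℕ) : ℝ := 1 / ((n : ℝ) + 1)

lemma xn_pos (n : ℕ) : 0 < xn n := by
  unfold xn; positivity

lemma xn_le_one (n : ℕ) : xn n ≤ 1 := by
  unfold xn
  rw [div_le_one (by positivity)]
  linarith [Nat.cast_nonneg (α := ℝ) n]

lemma xn_succ_le_half (n : ℕ) : xn (n + 1) ≤ 1 / 2 := by
  unfold xn
  rw [div_le_div_iff₀ (by positivity) (by norm_num)]
  push_cast
  linarith [Nat.cast_nonneg (α := ℝ) n]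

lemma summable_sq : Summable (fun n : ℕ => (xn n) ^ 2) := by
  have h : Summable (fun n : ℕ => 1 / (n : ℝ) ^ 2) :=
    summable_one_div_nat_pow.mpr one_lt_two
  have h2 := (summable_nat_add_iff 1).mpr h
  apply h2.congr
  intro n
  unfold xn
  push_cast
  rw [div_pow, one_pow]

lemma summable_pow {k : ℕ} (hk : 2 ≤ k) : Summable (fun n : ℕ => (xn n) ^ k) := by
  refine Summable.of_nonneg_of_le (fun n => pow_nonneg (xn_pos n).le k) (fun n => ?_) summable_sq
  exact pow_le_pow_of_le_one (xn_pos n).le (xn_le_one n) hk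

lemma zetaReal_natCast (k : ℕ) : zetaReal k = ∑' n : ℕ, (xn n) ^ k := by
  unfold zetaReal xn
  refine tsum_congr fun n => ?_
  rw [Real.rpow_natCast, div_pow, one_pow]

/-- the limit function of the inner series -/
noncomputable def fL (x : ℝ) : ℝ := (Real.log (1 + x) - x + x ^ 2 / 2) / x

lemma ident (x : ℝ) : ∀ N : ℕ, 1 ≤ N →
    x * ∑ k ∈ Icc 2 N, (-1 : ℝ) ^ k * x ^ k / ((k : ℝ) + 1)
      = -(∑ i ∈ range (N + 1), (-x) ^ (i + 1) / ((i : ℝ) + 1)) - x + x ^ 2 / 2 := by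
  refine Nat.le_induction ?_ ?_
  · norm_num [Finset.sum_range_succ]
  · intro N hN ih
    rw [Finset.sum_Icc_succ_top (by omega), Finset.sum_range_succ, mul_add, ih]
    push_cast
    rw [neg_pow]
    ring

lemma inner_key {x : ℝ} (hx0 : 0 < x) (hx : x ≤ 1 / 2) {N : ℕ} (hN : 1 ≤ N) :
    |∑ k ∈ Icc 2 N, (-1 : ℝ) ^ k * x ^ k / ((k : ℝ) + 1) - fL x| ≤ 2 * x ^ (N + 1) := by
  have hxne : x ≠ 0 := hx0.ne'
  have habs : |(-x)| < 1 := by rw [abs_neg, abs_of_pos hx0]; linarith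
  have key := Real.abs_log_sub_add_sum_range_le habs (N + 1)
  rw [abs_neg, abs_of_pos hx0, sub_neg_eq_add] at key
  -- key : |∑ i in range (N+1), (-x)^(i+1)/(i+1) + log (1+x)| ≤ x^(N+2)/(1-x)
  have hrw : ∑ k ∈ Icc 2 N, (-1 : ℝ) ^ k * x ^ k / ((k : ℝ) + 1) - fL x
      = -((∑ i ∈ range (N + 1), (-x) ^ (i + 1) / ((i : ℝ) + 1)) + Real.log (1 + x)) / x := by
    have h1 := ident x N hN
    rw [eq_div_iff hxne]
    unfold fL
    rw [sub_mul, div_mul_cancel₀ _ hxne, mul_comm x] at *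
    rw [h1]
    ring
  rw [hrw, abs_div, abs_of_pos hx0, abs_neg, div_le_iff₀ hx0]
  calc |∑ i ∈ range (N + 1), (-x) ^ (i + 1) / ((i : ℝ) + 1) + Real.log (1 + x)|
      ≤ x ^ (N + 1 + 1) / (1 - x) := key
    _ ≤ x ^ (N + 1 + 1) / (1 / 2) := by
        apply div_le_div_of_nonneg_left (by positivity) (by norm_num) (by linarith)
    _ = 2 * x ^ (N + 1) * x := by rw [pow_succ]; ring

/-- bound with no sum: `|fL x| ≤ 2 x^2` for `0 < x ≤ 1/2`. -/
lemma fL_bound {x : ℝ} (hx0 : 0 < x) (hx : x ≤ 1 / 2) : |fL x| ≤ 2 * x ^ 2 := by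
  have h := inner_key hx0 hx (le_refl 1)
  simpa using h

noncomputable def g (n : ℕ) : ℝ := fL (xn n)

lemma g_succ_bound (n : ℕ) : |g (n + 1)| ≤ 2 * (xn (n + 1)) ^ 2 :=
  fL_bound (xn_pos _) (xn_succ_le_half n)

lemma summable_g : Summable g := by
  rw [← summable_nat_add_iff 1, ← summable_abs_iff]
  refine Summable.of_nonneg_of_le (fun n => abs_nonneg _) (fun n => g_succ_bound n) ?_
  exact ((summable_nat_add_iff 1).mpr summable_sq).mul_left 2

/-- the inner partial sums -/
noncomputable def w (N n : ℕ) : ℝ := ∑ k ∈ Icc 2 N, (-1 : ℝ) ^ k * (xn n) ^ k / ((k : ℝ) + 1)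

lemma summable_w (N : ℕ) : Summable (fun n => w N n) := by
  refine summable_sum fun k hk => ?_
  have hk2 : 2 ≤ k := (Finset.mem_Icc.mp hk).1
  exact ((summable_pow hk2).mul_left _).div_const _

lemma P_eq (N : ℕ) :
    ∑ k ∈ Finset.Icc 2 N, (-1 : ℝ) ^ k * zetaReal k / ((k : ℝ) + 1) = ∑' n, w N n := by
  unfold w
  rw [Summable.tsum_finsetSum (fun k hk => ((summable_pow (Finset.mem_Icc.mp hk).1).mul_left _).div_const _)]
  refine Finset.sum_congr rfl fun k hk => ?_
  rw [zetaReal_natCast, tsum_div_const, tsum_mul_left]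

noncomputable def Hr (n : ℕ) : ℝ := ∑ i ∈ range n, 1 / ((i : ℝ) + 1)

noncomputable def B (m : ℕ) : ℝ := ∑ j ∈ range m, (-1 : ℝ) ^ j / ((j : ℝ) + 1)

lemma B_even (M : ℕ) : B (2 * M) = Hr (2 * M) - Hr M := by
  induction M with
  | zero => simp [B, Hr]
  | succ M ih =>
    have h2 : 2 * (M + 1) = 2 * M + 1 + 1 := by ring
    unfold B Hr at ih ⊢
    rw [h2]
    simp only [Finset.sum_range_succ]
    rw [ih]
    have hpow : ((-1 : ℝ)) ^ (2 * M) = 1 := by rw [pow_mul]; norm_num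
    have e1 : (0:ℝ) < (2 * M : ℕ) + 1 := by positivity
    have e2 : (0:ℝ) < (2 * M : ℕ) + 1 + 1 := by positivity
    have e3 : (0:ℝ) < (M : ℝ) + 1 := by positivity
    rw [pow_succ, hpow]
    push_cast at *
    field_simp
    ring

lemma harmonic_real (n : ℕ) : ((harmonic n : ℚ) : ℝ) = Hr n := by
  unfold Hr
  rw [harmonic]
  push_cast
  simp [one_div]

lemma tendsto_Hr_log :
    Tendsto (fun n : ℕ => Hr n - Real.log n) atTop (𝓝 Real.eulerMascheroniConstant) := by
  apply Real.tendsto_eulerMascheroniSeq'.congr'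
  filter_upwards [eventually_ne_atTop 0] with n hn
  rw [Real.eulerMascheroniSeq', if_neg hn, harmonic_real]

lemma tendsto_B_even : Tendsto (fun M => B (2 * M)) atTop (𝓝 (Real.log 2)) := by
  have h2M : Tendsto (fun M : ℕ => 2 * M) atTop atTop :=
    tendsto_atTop_atTop.mpr fun b => ⟨b, fun m hm => by omega⟩
  have hA := tendsto_Hr_log.comp h2M
  have hC := (hA.sub tendsto_Hr_log).add (tendsto_const_nhds (x := Real.log 2))
  rw [sub_self, zero_add] at hC
  apply hC.congr'
  filter_upwards [eventually_ge_atTop 1] with M hM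
  have hM0 : (M : ℝ) ≠ 0 := by
    have : (0:ℝ) < M := by exact_mod_cast hM
    linarith
  simp only [Function.comp_apply]
  have hlog : Real.log ((2 * M : ℕ) : ℝ) = Real.log 2 + Real.log M := by
    push_cast
    rw [Real.log_mul two_ne_zero hM0]
  rw [B_even, hlog]
  ring

lemma B_step (m : ℕ) : |B m - Real.log 2| ≤ |B (2 * (m / 2)) - Real.log 2| + 1 / (m : ℝ) := by
  rcases Nat.even_or_odd m with ⟨t, ht⟩ | ⟨t, ht⟩
  · have h : 2 * (m / 2) = m := by omega
    have h0 : (0:ℝ) ≤ 1 / (m : ℝ) := by positivity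
    rw [h]
    linarith
  · subst ht
    have hdiv : (2 * t + 1) / 2 = t := by omega
    rw [hdiv]
    have hB : B (2 * t + 1) = B (2 * t) + 1 / (((2 * t : ℕ) : ℝ) + 1) := by
      unfold B
      rw [Finset.sum_range_succ]
      congr 1
      rw [pow_mul]
      norm_num
    rw [hB]
    have habs : |B (2 * t) + 1 / (((2 * t : ℕ) : ℝ) + 1) - Real.log 2|
        ≤ |B (2 * t) - Real.log 2| + |1 / (((2 * t : ℕ) : ℝ) + 1)| := by
      have := abs_add_le (B (2 * t) - Real.log 2) (1 / (((2 * t : ℕ) : ℝ) + 1))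
      have he : B (2 * t) + 1 / (((2 * t : ℕ) : ℝ) + 1) - Real.log 2
          = B (2 * t) - Real.log 2 + 1 / (((2 * t : ℕ) : ℝ) + 1) := by ring
      rw [he]
      exact this
    have hc : |1 / (((2 * t : ℕ) : ℝ) + 1)| = 1 / ((2 * t + 1 : ℕ) : ℝ) := by
      rw [abs_of_pos (by positivity)]
      push_cast
      ring_nf
    rw [hc] at habs
    exact habs

lemma tendsto_B : Tendsto B atTop (𝓝 (Real.log 2)) := by
  rw [tendsto_iff_dist_tendsto_zero]
  simp only [Real.dist_eq]
  apply squeeze_zero (fun m => abs_nonneg _) B_step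
  have hhalf : Tendsto (fun m : ℕ => m / 2) atTop atTop :=
    tendsto_atTop_atTop.mpr fun b => ⟨2 * b, fun m hm => by omega⟩
  have h1 : Tendsto (fun M => |B (2 * M) - Real.log 2|) atTop (𝓝 0) := by
    have h := tendsto_B_even.sub (tendsto_const_nhds (x := Real.log 2))
    rw [sub_self] at h
    simpa using h.abs
  have h2 := (h1.comp hhalf).add tendsto_one_div_atTop_nhds_zero_nat
  simpa using h2

lemma xn_zero : xn 0 = 1 := by unfold xn; norm_num

lemma w_zero : ∀ N, 1 ≤ N → w N 0 = B (N + 1) - 1 / 2 := by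
  refine Nat.le_induction ?_ ?_
  · unfold w B
    simp [Finset.sum_range_succ]
    norm_num
  · intro N hN ih
    unfold w B at ih ⊢
    rw [Finset.sum_Icc_succ_top (by omega), Finset.sum_range_succ, ih, xn_zero]
    push_cast
    ring

lemma tendsto_w_zero : Tendsto (fun N => w N 0) atTop (𝓝 (g 0)) := by
  have hg0 : g 0 = Real.log 2 - 1 / 2 := by
    unfold g fL
    rw [xn_zero]
    norm_num
    ring
  rw [hg0]
  have h := (tendsto_B.comp (tendsto_add_atTop_nat 1)).sub
    (tendsto_const_nhds (x := (1 : ℝ) / 2))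
  apply h.congr'
  filter_upwards [eventually_ge_atTop 1] with N hN
  simp only [Function.comp_apply]
  rw [w_zero N hN]

noncomputable def S : ℝ := ∑' n, g n

lemma summable_w_succ (N : ℕ) : Summable (fun n => w N (n + 1)) :=
  (summable_nat_add_iff 1).mpr (summable_w N)

lemma summable_g_succ : Summable (fun n => g (n + 1)) :=
  (summable_nat_add_iff 1).mpr summable_g

lemma diff_bound {N : ℕ} (hN : 1 ≤ N) (n : ℕ) :
    |w N (n + 1) - g (n + 1)| ≤ 4 * (1 / 2) ^ N * (xn (n + 1)) ^ 2 := by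
  obtain ⟨m, rfl⟩ : ∃ m, N = m + 1 := ⟨N - 1, by omega⟩
  have hx := xn_pos (n + 1)
  have hx2 := xn_succ_le_half n
  have h := inner_key hx hx2 hN
  calc |w (m + 1) (n + 1) - g (n + 1)|
      ≤ 2 * (xn (n + 1)) ^ (m + 1 + 1) := h
    _ = 2 * ((xn (n + 1)) ^ m * (xn (n + 1)) ^ 2) := by rw [← pow_add]
    _ ≤ 2 * ((1 / 2 : ℝ) ^ m * (xn (n + 1)) ^ 2) := by
        gcongr
    _ = 4 * (1 / 2) ^ (m + 1) * (xn (n + 1)) ^ 2 := by ring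

lemma summable_diff_abs (N : ℕ) : Summable (fun n => |w N (n + 1) - g (n + 1)|) := by
  exact ((summable_w_succ N).sub summable_g_succ).abs

lemma tendsto_w_tail :
    Tendsto (fun N => ∑' n, w N (n + 1)) atTop (𝓝 (∑' n, g (n + 1))) := by
  have hsq : Summable (fun n => (xn (n + 1)) ^ 2) := (summable_nat_add_iff (f := fun n => (xn n) ^ 2) 1).mpr summable_sq
  set C : ℝ := ∑' n, (xn (n + 1)) ^ 2 with hC
  rw [tendsto_iff_dist_tendsto_zero]
  simp only [Real.dist_eq]
  apply squeeze_zero' (g := fun N => (1 / 2 : ℝ) ^ N * (4 * C))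
    (Eventually.of_forall fun _ => abs_nonneg _)
  · filter_upwards [eventually_ge_atTop 1] with N hN
    rw [← Summable.tsum_sub (summable_w_succ N) summable_g_succ]
    have h1 : |∑' n, (w N (n + 1) - g (n + 1))| ≤ ∑' n, |w N (n + 1) - g (n + 1)| := by
      simpa using norm_tsum_le_tsum_norm
        (f := fun n => w N (n + 1) - g (n + 1)) (by simpa using summable_diff_abs N)
    have h2 : ∑' n, |w N (n + 1) - g (n + 1)| ≤ ∑' n, 4 * (1 / 2 : ℝ) ^ N * (xn (n + 1)) ^ 2 :=
      Summable.tsum_le_tsum (diff_bound hN) (summable_diff_abs N) (hsq.mul_left _)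
    have h3 : ∑' n, 4 * (1 / 2 : ℝ) ^ N * (xn (n + 1)) ^ 2 = (1 / 2 : ℝ) ^ N * (4 * C) := by
      rw [tsum_mul_left]
      ring
    linarith
  · have h := (tendsto_pow_atTop_nhds_zero_of_lt_one (r := (1 / 2 : ℝ))
      (by norm_num) (by norm_num)).mul_const (4 * C)
    simpa using h

lemma tendsto_P :
    Tendsto (fun N : ℕ => ∑ k ∈ Finset.Icc 2 N, (-1 : ℝ) ^ k * zetaReal k / ((k : ℝ) + 1))
      atTop (𝓝 S) := by
  have hsplitS : S = g 0 + ∑' n, g (n + 1) := Summable.tsum_eq_zero_add summable_g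
  have h := tendsto_w_zero.add tendsto_w_tail
  rw [← hsplitS] at h
  apply h.congr
  intro N
  rw [P_eq, Summable.tsum_eq_zero_add (summable_w N)]

lemma g_eq (n : ℕ) : g n
    = ((n : ℝ) + 2) * Real.log ((n : ℝ) + 2) - ((n : ℝ) + 1) * Real.log ((n : ℝ) + 1)
      - Real.log ((n : ℝ) + 2) - 1 + 1 / (2 * ((n : ℝ) + 1)) := by
  have ht : ((n : ℝ) + 1) ≠ 0 := by positivity
  have ht2 : ((n : ℝ) + 2) ≠ 0 := by positivity
  unfold g fL xn
  rw [show (1 : ℝ) + 1 / ((n : ℝ) + 1) = ((n : ℝ) + 2) / ((n : ℝ) + 1) by field_simp; ring,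
    Real.log_div ht2 ht]
  field_simp
  ring

lemma sum_g (M : ℕ) : ∑ n ∈ range M, g n
    = ((M : ℝ) + 1) * Real.log ((M : ℝ) + 1) - Real.log (Nat.factorial (M + 1) : ℝ) - M + Hr M / 2 := by
  induction M with
  | zero => simp [Hr]
  | succ M ih =>
    have hfactpos : (0 : ℝ) < (Nat.factorial (M + 1) : ℝ) := by
      exact_mod_cast Nat.factorial_pos (M + 1)
    have hfact : (Nat.factorial (M + 2) : ℝ) = ((M : ℝ) + 2) * (Nat.factorial (M + 1) : ℝ) := by
      rw [show M + 2 = (M + 1) + 1 by ring, Nat.factorial_succ]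
      push_cast
      ring
    have hlog : Real.log (Nat.factorial (M + 2) : ℝ)
        = Real.log ((M : ℝ) + 2) + Real.log (Nat.factorial (M + 1) : ℝ) := by
      rw [hfact, Real.log_mul (by positivity) hfactpos.ne']
    have hHr : Hr (M + 1) = Hr M + 1 / ((M : ℝ) + 1) := by
      unfold Hr
      rw [Finset.sum_range_succ]
    rw [Finset.sum_range_succ, ih, g_eq, hHr]
    push_cast
    rw [show ((M : ℝ) + 1 + 1) = (M : ℝ) + 2 by ring]
    rw [hlog, show (1:ℝ)/(2*((M:ℝ)+1)) = (1/((M:ℝ)+1))/2 by rw [one_div, one_div, mul_inv]; ring]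
    ring

lemma T_eq2 (M : ℕ) : ∑ n ∈ range M, g n
    = 1 - (1 / 2) * Real.log 2 - Real.log (Stirling.stirlingSeq (M + 1))
      + (Hr (M + 1) - Real.log ((M : ℝ) + 1)) / 2 - 1 / (2 * ((M : ℝ) + 1)) := by
  have hM1 : (0 : ℝ) < (M : ℝ) + 1 := by positivity
  have hfor := Stirling.log_stirlingSeq_formula (M + 1)
  push_cast at hfor
  have h1 : Real.log (2 * ((M : ℝ) + 1)) = Real.log 2 + Real.log ((M : ℝ) + 1) :=
    Real.log_mul two_ne_zero hM1.ne'
  have h2 : Real.log (((M : ℝ) + 1) / rexp 1) = Real.log ((M : ℝ) + 1) - 1 := by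
    rw [Real.log_div hM1.ne' (Real.exp_ne_zero 1), Real.log_exp]
  rw [h1, h2] at hfor
  have hHr : Hr (M + 1) = Hr M + 1 / ((M : ℝ) + 1) := by
    unfold Hr
    rw [Finset.sum_range_succ]
  rw [sum_g, hHr]
  push_cast
  have hxx : ((M : ℝ) + 1) * (Real.log ((M : ℝ) + 1) - 1)
      = ((M : ℝ) + 1) * Real.log ((M : ℝ) + 1) - ((M : ℝ) + 1) := by ring
  rw [hxx] at hfor
  have hinv2 : (1:ℝ)/(2*((M:ℝ)+1)) = (1/((M:ℝ)+1))/2 := by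
    rw [one_div, one_div, mul_inv]; ring
  rw [hinv2]
  linarith [hfor]

lemma tendsto_T : Tendsto (fun M => ∑ n ∈ range M, g n) atTop
    (𝓝 (1 + Real.eulerMascheroniConstant / 2 - (1 / 2) * Real.log (2 * Real.pi))) := by
  have hsqrtpi : Real.sqrt Real.pi ≠ 0 := by positivity
  have hstir : Tendsto (fun M : ℕ => Real.log (Stirling.stirlingSeq (M + 1))) atTop
      (𝓝 (Real.log Real.pi / 2)) := by
    have h := (Stirling.tendsto_stirlingSeq_sqrt_pi.log hsqrtpi).comp (tendsto_add_atTop_nat 1)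
    rw [Real.log_sqrt Real.pi_pos.le] at h
    exact h
  have hEM : Tendsto (fun M : ℕ => (Hr (M + 1) - Real.log ((M : ℝ) + 1)) / 2) atTop
      (𝓝 (Real.eulerMascheroniConstant / 2)) := by
    have h := (tendsto_Hr_log.comp (tendsto_add_atTop_nat 1)).div_const 2
    apply h.congr
    intro M
    simp only [Function.comp_apply]
    push_cast
    ring
  have hinv : Tendsto (fun M : ℕ => 1 / (2 * ((M : ℝ) + 1))) atTop (𝓝 0) := by
    have h := (tendsto_one_div_atTop_nhds_zero_nat.comp (tendsto_add_atTop_nat 1)).const_mul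
      (1 / 2 : ℝ)
    rw [mul_zero] at h
    apply h.congr
    intro M
    simp only [Function.comp_apply]
    push_cast
    field_simp
  have hcomb := (((tendsto_const_nhds
      (x := (1 : ℝ) - (1 / 2) * Real.log 2) (f := atTop (α := ℕ))).sub hstir).add hEM).sub hinv
  have hval : 1 - 1 / 2 * Real.log 2 - Real.log Real.pi / 2 + Real.eulerMascheroniConstant / 2 - 0
      = 1 + Real.eulerMascheroniConstant / 2 - (1 / 2) * Real.log (2 * Real.pi) := by
    rw [Real.log_mul two_ne_zero Real.pi_ne_zero]
    ring
  rw [hval] at hcomb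
  apply hcomb.congr
  intro M
  rw [T_eq2]

lemma S_eq : S = 1 + Real.eulerMascheroniConstant / 2 - (1 / 2) * Real.log (2 * Real.pi) :=
  tendsto_nhds_unique summable_g.hasSum.tendsto_sum_nat tendsto_T

end AuxZeta

/-- The partial sums `∑_{k=2}^N (−1)^k ζ(k)/(k+1)` tend to `1 + γ/2 − (1/2) log(2π)`. -/
theorem tendsto_sum_neg_one_pow_zeta_div_succ :
    Filter.Tendsto
      (fun N : ℕ => ∑ k ∈ Finset.Icc 2 N, (-1 : ℝ) ^ k * zetaReal k / ((k : ℝ) + 1))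
      Filter.atTop
      (nhds (1 + Real.eulerMascheroniConstant / 2 - (1 / 2) * Real.log (2 * Real.pi))) :=
  AuxZeta.S_eq ▸ AuxZeta.tendsto_P
end

section
/- Kummer's integral: for every real x with 0 < x < 1, ∫_0^1 (t^{x−1} − t^{−x}) / ((1+t) · log t) dt = log tan(πx/2). -/
open Real MeasureTheory Set intervalIntegral

noncomputable section
namespace KummerAux

lemma abs_exp_sub_exp (a b : ℝ) :
    |Real.exp a - Real.exp b| ≤ |a - b| * (Real.exp a + Real.exp b) := by
  wlog h : b ≤ a generalizing a b
  · have := this b a (le_of_not_ge h)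
    rwa [abs_sub_comm, abs_sub_comm b a, add_comm] at this
  rw [abs_of_nonneg (sub_nonneg.2 (Real.exp_le_exp.2 h)), abs_of_nonneg (sub_nonneg.2 h)]
  have key : Real.exp (b - a) * Real.exp a = Real.exp b := by
    rw [← Real.exp_add]; ring_nf
  nlinarith [Real.add_one_le_exp (b - a), Real.exp_pos a, Real.exp_pos b,
    Real.exp_le_exp.2 h]

lemma measurable_rpow_div (p : ℝ) : Measurable (fun t : ℝ => t ^ p / (1 + t)) := by
  fun_prop

lemma intervalIntegrable_rpow_div {p : ℝ} (hp : -1 < p) :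
    IntervalIntegrable (fun t : ℝ => t ^ p / (1 + t)) volume 0 1 := by
  have hint : IntervalIntegrable (fun t : ℝ => t ^ p) volume 0 1 :=
    intervalIntegral.intervalIntegrable_rpow' hp
  rw [intervalIntegrable_iff_integrableOn_Ioc_of_le (by norm_num)] at hint ⊢
  refine hint.mono' ((measurable_rpow_div p).aestronglyMeasurable) ?_
  filter_upwards [ae_restrict_mem measurableSet_Ioc] with t ht
  have h0 : (0:ℝ) < t := ht.1
  rw [Real.norm_eq_abs, abs_div, abs_of_nonneg (Real.rpow_nonneg h0.le p),
    abs_of_pos (by linarith : (0:ℝ) < 1 + t)]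
  exact div_le_self (Real.rpow_nonneg h0.le p) (by linarith)

lemma beta_eq {u : ℝ} (h0 : 0 < u) (h1 : u < 1) :
    ∫ t in (0:ℝ)..1, t ^ (u - 1) * (1 - t) ^ (-u) = π / Real.sin (π * u) := by
  have hu : 0 < Complex.re u := by simpa using h0
  have hv : 0 < Complex.re (1 - (u:ℂ)) := by simp; linarith
  have h := Complex.Gamma_mul_Gamma_eq_betaIntegral hu hv
  rw [Complex.Gamma_mul_Gamma_one_sub] at h
  have h1' : (u:ℂ) + (1 - u) = 1 := by ring
  rw [h1', Complex.Gamma_one, one_mul] at h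
  -- h : ↑π / Complex.sin (↑π * ↑u) = Complex.betaIntegral ↑u (1 - ↑u)
  have hb : Complex.betaIntegral u (1 - u) =
      ((∫ t in (0:ℝ)..1, t ^ (u - 1) * (1 - t) ^ (-u) : ℝ) : ℂ) := by
    rw [Complex.betaIntegral, ← intervalIntegral.integral_ofReal]
    refine intervalIntegral.integral_congr fun x hx => ?_
    rw [uIcc_of_le (by norm_num : (0:ℝ) ≤ 1)] at hx
    rw [Complex.ofReal_mul, Complex.ofReal_cpow hx.1, Complex.ofReal_cpow (by linarith [hx.2] : (0:ℝ) ≤ 1 - x)]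
    push_cast
    ring_nf
  have hsin : Complex.sin (↑π * ↑u) = ((Real.sin (π * u) : ℝ) : ℂ) := by
    push_cast [Complex.ofReal_sin]; norm_num
  rw [hb, hsin] at h
  have := h.symm
  rw [show ((π:ℂ)) = ((π:ℝ):ℂ) from rfl, ← Complex.ofReal_div] at this
  exact_mod_cast this

lemma image_phi : (fun y : ℝ => y / (1 + y)) '' Ioo 0 1 = Ioo 0 (1/2) := by
  ext z
  constructor
  · rintro ⟨y, ⟨hy0, hy1⟩, rfl⟩
    have h : (0:ℝ) < 1 + y := by linarith
    constructor
    · positivity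
    · rw [div_lt_iff₀ h]; linarith
  · rintro ⟨hz0, hz1⟩
    have h1z : (1:ℝ) - z ≠ 0 := by linarith
    refine ⟨z / (1 - z), ⟨div_pos hz0 (by linarith), ?_⟩, ?_⟩
    · rw [div_lt_one (by linarith)]; linarith
    · show z / (1 - z) / (1 + z / (1 - z)) = z
      rw [one_add_div h1z, show (1:ℝ) - z + z = 1 by ring]
      field_simp

lemma image_psi : (fun y : ℝ => (1 + y)⁻¹) '' Ioo 0 1 = Ioo (1/2) 1 := by
  ext z
  constructor
  · rintro ⟨y, ⟨hy0, hy1⟩, rfl⟩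
    have h : (0:ℝ) < 1 + y := by linarith
    constructor
    · rw [lt_inv_comm₀ (by norm_num) h]; linarith
    · rw [inv_lt_one_iff₀]; right; linarith
  · rintro ⟨hz0, hz1⟩
    refine ⟨(1 - z) / z, ⟨div_pos (by linarith) (by linarith : (0:ℝ) < z), ?_⟩, ?_⟩
    · rw [div_lt_one (by linarith)]; linarith
    · show (1 + (1 - z) / z)⁻¹ = z
      rw [one_add_div (by linarith : z ≠ 0), show z + (1 - z) = 1 by ring, ← one_div, one_div_one_div]

lemma deriv_phi {y : ℝ} (hy : (0:ℝ) < 1 + y) :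
    HasDerivAt (fun y : ℝ => y / (1 + y)) (((1+y)^2)⁻¹) y := by
  have h := (hasDerivAt_id y).fun_div ((hasDerivAt_id y).const_add 1) (by simpa using hy.ne')
  convert h using 1
  all_goals try rfl
  simp only [id]
  field_simp
  ring

lemma deriv_psi {y : ℝ} (hy : (0:ℝ) < 1 + y) :
    HasDerivAt (fun y : ℝ => (1 + y)⁻¹) (-((1+y)^2)⁻¹) y := by
  have h := ((hasDerivAt_id y).const_add 1).fun_inv (by simpa using hy.ne')
  convert h using 1
  all_goals try rfl
  simp only [id]
  field_simp

lemma subst_left {u : ℝ} (h0 : 0 < u) (h1 : u < 1) :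
    ∫ t in (0:ℝ)..(1/2), t ^ (u - 1) * (1 - t) ^ (-u)
      = ∫ y in (0:ℝ)..1, y ^ (u - 1) / (1 + y) := by
  rw [intervalIntegral.integral_of_le (by norm_num : (0:ℝ) ≤ 1/2),
    intervalIntegral.integral_of_le (by norm_num : (0:ℝ) ≤ 1),
    integral_Ioc_eq_integral_Ioo, integral_Ioc_eq_integral_Ioo, ← image_phi]
  rw [integral_image_eq_integral_abs_deriv_smul measurableSet_Ioo
    (fun y hy => (deriv_phi (by linarith [hy.1])).hasDerivWithinAt)
    (fun y1 h1 y2 h2 h => by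
      have e1 : (0:ℝ) < 1 + y1 := by linarith [h1.1]
      have e2 : (0:ℝ) < 1 + y2 := by linarith [h2.1]
      field_simp at h; linarith)]
  refine setIntegral_congr_fun measurableSet_Ioo fun y hy => ?_
  obtain ⟨hy0, hy1⟩ := hy
  have hpos : (0:ℝ) < 1 + y := by linarith
  have h1y : 1 - y / (1 + y) = (1 + y)⁻¹ := by field_simp; ring
  rw [smul_eq_mul, h1y, Real.div_rpow hy0.le hpos.le,
    Real.inv_rpow hpos.le, ← Real.rpow_neg hpos.le, neg_neg,
    abs_of_pos (by positivity),
    show (u:ℝ) = (u - 1) + 1 by ring, Real.rpow_add hpos, Real.rpow_one]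
  have hne : (1 + y) ^ (u - 1) ≠ 0 := by positivity
  field_simp
  ring

lemma subst_right {u : ℝ} (h0 : 0 < u) (h1 : u < 1) :
    ∫ t in (1/2:ℝ)..1, t ^ (u - 1) * (1 - t) ^ (-u)
      = ∫ y in (0:ℝ)..1, y ^ (-u) / (1 + y) := by
  rw [intervalIntegral.integral_of_le (by norm_num : (1/2:ℝ) ≤ 1),
    intervalIntegral.integral_of_le (by norm_num : (0:ℝ) ≤ 1),
    integral_Ioc_eq_integral_Ioo, integral_Ioc_eq_integral_Ioo, ← image_psi]
  rw [integral_image_eq_integral_abs_deriv_smul measurableSet_Ioo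
    (fun y hy => (deriv_psi (by linarith [hy.1])).hasDerivWithinAt)
    (fun y1 h1 y2 h2 h => by
      have e1 : (0:ℝ) < 1 + y1 := by linarith [h1.1]
      have e2 : (0:ℝ) < 1 + y2 := by linarith [h2.1]
      field_simp at h; linarith)]
  refine setIntegral_congr_fun measurableSet_Ioo fun y hy => ?_
  obtain ⟨hy0, hy1⟩ := hy
  have hpos : (0:ℝ) < 1 + y := by linarith
  have h1y : 1 - (1 + y)⁻¹ = y / (1 + y) := by field_simp; ring
  rw [smul_eq_mul, h1y, Real.div_rpow hy0.le hpos.le,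
    Real.inv_rpow hpos.le, ← Real.rpow_neg hpos.le,
    abs_neg, abs_of_pos (by positivity)]
  rw [show -(u - 1) = (-u) + 1 by ring, Real.rpow_add hpos, Real.rpow_one]
  have hne : (1 + y) ^ (-u) ≠ 0 := by positivity
  field_simp

lemma measurable_g (u : ℝ) : Measurable (fun t : ℝ => t ^ (u - 1) * (1 - t) ^ (-u)) := by
  fun_prop

lemma integrable_g_left {u : ℝ} (h0 : 0 < u) (h1 : u < 1) :
    IntervalIntegrable (fun t : ℝ => t ^ (u - 1) * (1 - t) ^ (-u)) volume 0 (1/2) := by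
  have hint : IntervalIntegrable (fun t : ℝ => t ^ (u - 1) * 2 ^ u) volume 0 (1/2) :=
    (intervalIntegral.intervalIntegrable_rpow' (by linarith)).mul_const _
  rw [intervalIntegrable_iff_integrableOn_Ioc_of_le (by norm_num)] at hint ⊢
  refine hint.mono' (measurable_g u).aestronglyMeasurable ?_
  filter_upwards [ae_restrict_mem measurableSet_Ioc] with t ht
  obtain ⟨ht0, ht2⟩ := ht
  have h1t : (0:ℝ) < 1 - t := by linarith
  rw [Real.norm_eq_abs, abs_mul, abs_of_nonneg (Real.rpow_nonneg ht0.le _),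
    abs_of_nonneg (Real.rpow_nonneg h1t.le _)]
  refine mul_le_mul_of_nonneg_left ?_ (Real.rpow_nonneg ht0.le _)
  rw [Real.rpow_neg h1t.le]
  calc ((1 - t) ^ u)⁻¹ ≤ (((1:ℝ)/2) ^ u)⁻¹ := by
        apply inv_anti₀ (Real.rpow_pos_of_pos (by norm_num) u)
        exact Real.rpow_le_rpow (by norm_num) (by linarith) h0.le
    _ = 2 ^ u := by
        rw [show (1:ℝ)/2 = 2⁻¹ by norm_num, Real.inv_rpow (by norm_num), inv_inv]

lemma integrable_g_right {u : ℝ} (h0 : 0 < u) (h1 : u < 1) :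
    IntervalIntegrable (fun t : ℝ => t ^ (u - 1) * (1 - t) ^ (-u)) volume (1/2) 1 := by
  have hint : IntervalIntegrable (fun t : ℝ => 2 ^ (1-u) * (1 - t) ^ (-u)) volume (1/2) 1 := by
    have := (intervalIntegral.intervalIntegrable_rpow' (r := -u) (by linarith)
      (a := 0) (b := 1/2)).comp_sub_left 1
    norm_num at this
    exact (this.const_mul _).symm
  rw [intervalIntegrable_iff_integrableOn_Ioc_of_le (by norm_num)] at hint ⊢
  refine hint.mono' (measurable_g u).aestronglyMeasurable ?_
  filter_upwards [ae_restrict_mem measurableSet_Ioc] with t ht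
  obtain ⟨ht0, ht2⟩ := ht
  have ht0' : (0:ℝ) < t := by linarith
  have h1t : (0:ℝ) ≤ 1 - t := by linarith
  rw [Real.norm_eq_abs, abs_mul, abs_of_nonneg (Real.rpow_nonneg ht0'.le _),
    abs_of_nonneg (Real.rpow_nonneg h1t _)]
  refine mul_le_mul_of_nonneg_right ?_ (Real.rpow_nonneg h1t _)
  rw [show u - 1 = -(1-u) by ring, Real.rpow_neg ht0'.le]
  calc (t ^ (1-u))⁻¹ ≤ (((1:ℝ)/2) ^ (1-u))⁻¹ := by
        apply inv_anti₀ (Real.rpow_pos_of_pos (by norm_num) _)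
        exact Real.rpow_le_rpow (by norm_num) (by linarith) (by linarith)
    _ = 2 ^ (1-u) := by
        rw [show (1:ℝ)/2 = 2⁻¹ by norm_num, Real.inv_rpow (by norm_num), inv_inv]

lemma sum_integral {u : ℝ} (h0 : 0 < u) (h1 : u < 1) :
    (∫ y in (0:ℝ)..1, y ^ (u - 1) / (1 + y)) + (∫ y in (0:ℝ)..1, y ^ (-u) / (1 + y))
      = π / Real.sin (π * u) := by
  rw [← subst_left h0 h1, ← subst_right h0 h1,
    intervalIntegral.integral_add_adjacent_intervals (integrable_g_left h0 h1)
      (integrable_g_right h0 h1), beta_eq h0 h1]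

def K (x t : ℝ) : ℝ := (t ^ (x - 1) - t ^ (-x)) / ((1 + t) * Real.log t)

def K' (x t : ℝ) : ℝ := (t ^ (x - 1) + t ^ (-x)) / (1 + t)

lemma measurable_K (x : ℝ) : Measurable (K x) := by
  unfold K
  have h1 : Measurable fun t : ℝ => t ^ (x - 1) := by measurability
  have h2 : Measurable fun t : ℝ => t ^ (-x) := by measurability
  exact (h1.sub h2).div ((measurable_const.add measurable_id).mul Real.measurable_log)

lemma measurable_K' (x : ℝ) : Measurable (K' x) := by unfold K'; fun_prop

lemma K_bound {x t : ℝ} (hx0 : 0 < x) (hx1 : x < 1) (ht0 : 0 < t) (ht1 : t ≤ 1) :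
    |K x t| ≤ t ^ (x - 1) + t ^ (-x) := by
  rcases eq_or_lt_of_le ht1 with h | h
  · subst h
    simp [K, Real.one_rpow]
  · have hL : Real.log t < 0 := Real.log_neg ht0 h
    have hLne : Real.log t ≠ 0 := hL.ne
    have h1t : (0:ℝ) < 1 + t := by linarith
    have e1 : t ^ (x - 1) = Real.exp (Real.log t * (x - 1)) := Real.rpow_def_of_pos ht0 _
    have e2 : t ^ (-x) = Real.exp (Real.log t * (-x)) := Real.rpow_def_of_pos ht0 _
    have hS : 0 < t ^ (x - 1) + t ^ (-x) := by positivity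
    have hnum : |t ^ (x - 1) - t ^ (-x)| ≤ |Real.log t| * (t ^ (x - 1) + t ^ (-x)) := by
      rw [e1, e2]
      calc |Real.exp (Real.log t * (x - 1)) - Real.exp (Real.log t * (-x))|
          ≤ |Real.log t * (x - 1) - Real.log t * (-x)| *
            (Real.exp (Real.log t * (x - 1)) + Real.exp (Real.log t * (-x))) :=
            abs_exp_sub_exp _ _
        _ ≤ |Real.log t| * (Real.exp (Real.log t * (x - 1)) + Real.exp (Real.log t * (-x))) := by
            refine mul_le_mul_of_nonneg_right ?_ (by positivity)
            have habs : |2*x - 1| ≤ 1 := abs_le.2 ⟨by linarith, by linarith⟩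
            rw [show Real.log t * (x - 1) - Real.log t * (-x) = Real.log t * (2*x - 1) by ring,
              abs_mul]
            nlinarith [abs_nonneg (Real.log t), habs]
    simp only [K]
    rw [abs_div, abs_mul, abs_of_pos h1t]
    rw [div_le_iff₀ (by positivity)]
    nlinarith [hnum, mul_nonneg (mul_nonneg hS.le ht0.le) (abs_nonneg (Real.log t))]

lemma K'_bound {a b x t : ℝ} (ha : 0 < a) (hab : a ≤ x) (hxb : x ≤ b)
    (ht0 : 0 < t) (ht1 : t ≤ 1) : ‖K' x t‖ ≤ t ^ (a - 1) + t ^ (-b) := by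
  have hnn : 0 ≤ K' x t :=
    div_nonneg (add_nonneg (Real.rpow_nonneg ht0.le _) (Real.rpow_nonneg ht0.le _))
      (by linarith)
  rw [Real.norm_eq_abs, abs_of_nonneg hnn]
  calc K' x t ≤ t ^ (x - 1) + t ^ (-x) :=
        div_le_self (add_nonneg (Real.rpow_nonneg ht0.le _) (Real.rpow_nonneg ht0.le _))
          (by linarith)
    _ ≤ t ^ (a - 1) + t ^ (-b) :=
        add_le_add (Real.rpow_le_rpow_of_exponent_ge ht0 ht1 (by linarith))
          (Real.rpow_le_rpow_of_exponent_ge ht0 ht1 (by linarith))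

lemma hasDerivAt_K {t : ℝ} (ht0 : 0 < t) (ht1 : t < 1) (x : ℝ) :
    HasDerivAt (fun y => K y t) (K' x t) x := by
  have hL : Real.log t < 0 := Real.log_neg ht0 ht1
  have hLne : Real.log t ≠ 0 := hL.ne
  have h1t : (0:ℝ) < 1 + t := by linarith
  have hfun : (fun y => K y t) = fun y =>
      (Real.exp (Real.log t * (y - 1)) - Real.exp (Real.log t * (-y))) /
        ((1 + t) * Real.log t) := by
    funext y
    simp only [K]
    rw [Real.rpow_def_of_pos ht0, Real.rpow_def_of_pos ht0]
  rw [hfun]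
  have d1 : HasDerivAt (fun y : ℝ => Real.exp (Real.log t * (y - 1)))
      (Real.log t * Real.exp (Real.log t * (x - 1))) x := by
    have h : HasDerivAt (fun y : ℝ => Real.log t * (y - 1)) (Real.log t) x := by
      simpa using ((hasDerivAt_id x).sub_const 1).const_mul (Real.log t)
    simpa [mul_comm] using h.exp
  have d2 : HasDerivAt (fun y : ℝ => Real.exp (Real.log t * (-y)))
      (-Real.log t * Real.exp (Real.log t * (-x))) x := by
    have h : HasDerivAt (fun y : ℝ => Real.log t * (-y)) (-Real.log t) x := by
      simpa [mul_comm] using (hasDerivAt_id x).neg.const_mul (Real.log t)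
    simpa [mul_comm] using h.exp
  have hd := (d1.sub d2).div_const ((1 + t) * Real.log t)
  convert hd using 1
  all_goals try rfl
  simp only [K']
  rw [Real.rpow_def_of_pos ht0, Real.rpow_def_of_pos ht0]
  field_simp
  ring

lemma hasDerivAt_F {x : ℝ} (hx0 : 0 < x) (hx1 : x < 1) :
    HasDerivAt (fun y => ∫ t in (0:ℝ)..1, K y t) (π / Real.sin (π * x)) x := by
  set ε := min x (1 - x) / 2 with hεdef
  have hε0 : 0 < ε := div_pos (lt_min hx0 (by linarith)) two_pos
  have hm1 := min_le_left x (1 - x)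
  have hm2 := min_le_right x (1 - x)
  have ha0 : 0 < x - ε := by simp only [hεdef]; linarith
  have hb1 : x + ε < 1 := by simp only [hεdef]; linarith
  have hmeas : ∀ᶠ y in nhds x,
      AEStronglyMeasurable (K y) (volume.restrict (Set.uIoc (0:ℝ) 1)) :=
    Filter.Eventually.of_forall fun y => (measurable_K y).aestronglyMeasurable
  have hint : IntervalIntegrable (K x) volume 0 1 := by
    have hb : IntervalIntegrable (fun t : ℝ => t ^ (x - 1) + t ^ (-x)) volume 0 1 :=
      (intervalIntegral.intervalIntegrable_rpow' (by linarith)).add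
        (intervalIntegral.intervalIntegrable_rpow' (by linarith))
    rw [intervalIntegrable_iff_integrableOn_Ioc_of_le zero_le_one] at hb ⊢
    refine hb.mono' (measurable_K x).aestronglyMeasurable ?_
    filter_upwards [ae_restrict_mem measurableSet_Ioc] with t ht
    exact Real.norm_eq_abs (K x t) ▸ K_bound hx0 hx1 ht.1 ht.2
  have hmeas' : AEStronglyMeasurable (K' x) (volume.restrict (Set.uIoc (0:ℝ) 1)) :=
    (measurable_K' x).aestronglyMeasurable
  have hbound : ∀ᵐ t ∂volume, t ∈ Set.uIoc (0:ℝ) 1 →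
      ∀ y ∈ Metric.ball x ε, ‖K' y t‖ ≤ t ^ ((x - ε) - 1) + t ^ (-(x + ε)) := by
    refine Filter.Eventually.of_forall fun t ht y hy => ?_
    rw [Set.uIoc_of_le zero_le_one] at ht
    rw [Metric.mem_ball, Real.dist_eq] at hy
    have h1 := abs_lt.1 hy
    exact K'_bound ha0 (by linarith) (by linarith) ht.1 ht.2
  have hbint : IntervalIntegrable (fun t : ℝ => t ^ ((x - ε) - 1) + t ^ (-(x + ε)))
      volume 0 1 :=
    (intervalIntegral.intervalIntegrable_rpow' (by linarith)).add
      (intervalIntegral.intervalIntegrable_rpow' (by linarith))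
  have hdiff : ∀ᵐ t ∂volume, t ∈ Set.uIoc (0:ℝ) 1 →
      ∀ y ∈ Metric.ball x ε, HasDerivAt (fun z => K z t) (K' y t) y := by
    have hne : ∀ᵐ t : ℝ ∂volume, t ≠ 1 := by
      rw [MeasureTheory.ae_iff]
      simp only [ne_eq, not_not]
      exact measure_singleton 1
    filter_upwards [hne] with t ht1 ht y hy
    rw [Set.uIoc_of_le zero_le_one] at ht
    exact hasDerivAt_K ht.1 (lt_of_le_of_ne ht.2 ht1) y
  obtain ⟨-, hD⟩ := intervalIntegral.hasDerivAt_integral_of_dominated_loc_of_deriv_le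
    (Metric.ball_mem_nhds x hε0) hmeas hint hmeas' hbound hbint hdiff
  have hval : ∫ t in (0:ℝ)..1, K' x t = π / Real.sin (π * x) := by
    rw [← sum_integral hx0 hx1, ← intervalIntegral.integral_add
      (intervalIntegrable_rpow_div (by linarith)) (intervalIntegrable_rpow_div (by linarith))]
    refine intervalIntegral.integral_congr fun t ht => ?_
    simp only [K']
    rw [add_div]
  exact hval ▸ hD

lemma hasDerivAt_H {x : ℝ} (hx0 : 0 < x) (hx1 : x < 1) :
    HasDerivAt (fun y => Real.log (Real.tan (π * y / 2))) (π / Real.sin (π * x)) x := by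
  have hpi := Real.pi_pos
  set u := π * x / 2 with hu
  have hu0 : 0 < u := by positivity
  have hu2 : u < π / 2 := by rw [hu]; rw [div_lt_div_iff_of_pos_right two_pos]; nlinarith
  have hcos : 0 < Real.cos u := Real.cos_pos_of_mem_Ioo ⟨by linarith, hu2⟩
  have hsin : 0 < Real.sin u := Real.sin_pos_of_pos_of_lt_pi hu0 (by linarith)
  have htan : 0 < Real.tan u := by
    rw [Real.tan_eq_sin_div_cos]; exact div_pos hsin hcos
  have dinner : HasDerivAt (fun y : ℝ => π * y / 2) (π / 2) x := by
    simpa using ((hasDerivAt_id x).const_mul π).div_const 2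
  have dtan : HasDerivAt Real.tan (1 / Real.cos u ^ 2) u := Real.hasDerivAt_tan hcos.ne'
  have dcomp : HasDerivAt (fun y : ℝ => Real.tan (π * y / 2))
      (1 / Real.cos u ^ 2 * (π / 2)) x := HasDerivAt.comp (h₂ := Real.tan) x dtan dinner
  have dlog := dcomp.log htan.ne'
  convert dlog using 1
  rw [Real.tan_eq_sin_div_cos]
  have hsx : Real.sin (π * x) = 2 * Real.sin u * Real.cos u := by
    rw [show π * x = 2 * u by rw [hu]; ring, Real.sin_two_mul]
  rw [hsx, ← hu]
  field_simp

lemma F_half : ∫ t in (0:ℝ)..1, K (1/2) t = 0 := by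
  have h : ∀ t : ℝ, K (1/2 : ℝ) t = 0 := fun t => by
    simp only [K]
    rw [show (1:ℝ)/2 - 1 = -(1/2) by norm_num, sub_self, zero_div]
  simp only [h, intervalIntegral.integral_zero]

end KummerAux

open KummerAux in
/-- Kummer's integral: for `0 < x < 1`,
`∫_0^1 (t^{x−1} − t^{−x}) / ((1+t) log t) dt = log tan(πx/2)`. -/
theorem kummer_integral_eq_log_tan (x : ℝ) (hx0 : 0 < x) (hx1 : x < 1) :
    ∫ t in (0:ℝ)..1, (t ^ (x - 1) - t ^ (-x)) / ((1 + t) * Real.log t) =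
      Real.log (Real.tan (Real.pi * x / 2)) := by
  set φ : ℝ → ℝ := fun y => (∫ t in (0:ℝ)..1, K y t) - Real.log (Real.tan (π * y / 2))
    with hφdef
  have hφ : ∀ y ∈ Ioo (0:ℝ) 1, HasDerivAt φ 0 y := fun y hy => by
    simpa using (hasDerivAt_F hy.1 hy.2).fun_sub (hasDerivAt_H hy.1 hy.2)
  have hdiff : DifferentiableOn ℝ φ (Ioo 0 1) := fun y hy =>
    ((hφ y hy).differentiableAt).differentiableWithinAt
  have hfd : ∀ y ∈ Ioo (0:ℝ) 1, fderivWithin ℝ φ (Ioo 0 1) y = 0 := fun y hy => by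
    rw [fderivWithin_of_isOpen isOpen_Ioo hy, (hφ y hy).hasFDerivAt.fderiv]
    ext z
    simp
  have hconst : φ x = φ (1/2) := (convex_Ioo (0:ℝ) 1).is_const_of_fderivWithin_eq_zero hdiff hfd
    ⟨hx0, hx1⟩ (show (1/2:ℝ) ∈ Ioo (0:ℝ) 1 by norm_num)
  have hhalf : φ (1/2) = 0 := by
    rw [hφdef]
    simp only
    rw [F_half, show π * (1/2) / 2 = π / 4 by ring, Real.tan_pi_div_four, Real.log_one,
      sub_zero]
  have hx : φ x = 0 := hconst.trans hhalf
  rw [hφdef] at hx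
  simp only at hx
  have : (∫ t in (0:ℝ)..1, K x t) = Real.log (Real.tan (π * x / 2)) := by linarith
  simpa only [K] using this
end
end

section
/- For every real x > 0, Γ(x) = lim_{n→∞} n^x ∑_{k=0}^n C(n,k) (−1)^k / (k + x). -/
lemma alt_sum_eq (n : ℕ) : ∀ x : ℝ, 0 < x →
    ∑ k ∈ Finset.range (n + 1), (n.choose k : ℝ) * (-1) ^ k / ((k : ℝ) + x)
      = (n.factorial : ℝ) / ∏ j ∈ Finset.range (n + 1), (x + j) := by
  induction n with
  | zero =>
    intro x hx
    simp
  | succ n ih =>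
    intro x hx
    have key : ∑ k ∈ Finset.range (n + 2), ((n+1).choose k : ℝ) * (-1) ^ k / ((k : ℝ) + x)
        = (∑ k ∈ Finset.range (n + 1), (n.choose k : ℝ) * (-1) ^ k / ((k : ℝ) + x))
          - ∑ k ∈ Finset.range (n + 1), (n.choose k : ℝ) * (-1) ^ k / ((k : ℝ) + (x + 1)) := by
      have hA : (∑ k ∈ Finset.range (n + 1), (n.choose k : ℝ) * (-1) ^ k / ((k : ℝ) + x))
          = ∑ k ∈ Finset.range (n + 2), (n.choose k : ℝ) * (-1) ^ k / ((k : ℝ) + x) := by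
        symm; rw [Finset.sum_range_succ]; simp
      rw [hA,
        Finset.sum_range_succ' (fun k => ((n+1).choose k : ℝ) * (-1) ^ k / ((k : ℝ) + x)) (n+1),
        Finset.sum_range_succ' (fun k => (n.choose k : ℝ) * (-1) ^ k / ((k : ℝ) + x)) (n+1)]
      have hterm : ∀ i ∈ Finset.range (n+1),
          (((n+1).choose (i+1) : ℝ) * (-1) ^ (i+1) / (((i+1 : ℕ) : ℝ) + x))
          = ((n.choose (i+1) : ℝ) * (-1) ^ (i+1) / (((i+1 : ℕ) : ℝ) + x))
            - ((n.choose i : ℝ) * (-1) ^ i / ((i : ℝ) + (x + 1))) := by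
        intro i _
        rw [Nat.choose_succ_succ]
        push_cast
        have h : ((i : ℝ) + 1 + x) ≠ 0 := by positivity
        rw [show (i:ℝ) + (x+1) = (i:ℝ)+1+x by ring]
        field_simp
        ring
      rw [Finset.sum_congr rfl hterm, Finset.sum_sub_distrib]
      simp
      ring
    rw [key, ih x hx, ih (x+1) (by linarith)]
    set P := ∏ j ∈ Finset.range (n + 1), (x + j) with hP
    set Q := ∏ j ∈ Finset.range (n + 1), ((x+1) + j) with hQ
    have h1 : P ≠ 0 := Finset.prod_ne_zero_iff.2 fun j _ => by positivity
    have h2 : Q ≠ 0 := Finset.prod_ne_zero_iff.2 fun j _ => by positivity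
    have prodsucc : ∏ j ∈ Finset.range (n + 2), (x + j) = x * Q := by
      rw [hQ, Finset.prod_range_succ']
      rw [Finset.prod_congr rfl (fun j _ => by push_cast; ring :
        ∀ j ∈ Finset.range (n+1), (x + ((j:ℕ)+1:ℕ)) = ((x+1) + j))]
      push_cast; ring
    have prodsucc2 : ∏ j ∈ Finset.range (n + 2), (x + j) = (x + ((n:ℝ)+1)) * P := by
      rw [hP, Finset.prod_range_succ]; push_cast; ring
    have hrel : x * Q = (x + ((n:ℝ)+1)) * P := prodsucc.symm.trans prodsucc2
    rw [prodsucc, Nat.factorial_succ]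
    have hx0 : x ≠ 0 := ne_of_gt hx
    field_simp
    push_cast at *
    linear_combination (n.factorial : ℝ) * hrel

/-- For every real `x > 0`, `Γ(x) = lim_{n→∞} n^x ∑_{k=0}^n C(n,k) (−1)^k / (k + x)`. -/
theorem tendsto_rpow_mul_alternating_sum_gamma (x : ℝ) (hx : 0 < x) :
    Filter.Tendsto (fun n : ℕ =>
        (n : ℝ) ^ x * ∑ k ∈ Finset.range (n + 1), (n.choose k : ℝ) * (-1) ^ k / ((k : ℝ) + x))
      Filter.atTop (nhds (Real.Gamma x)) := by
  have := Real.GammaSeq_tendsto_Gamma x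
  refine this.congr fun n => ?_
  rw [alt_sum_eq n x hx, Real.GammaSeq, mul_div_assoc]
end

section
/- The derivative of the Riemann zeta function at −1 satisfies ζ'(−1) = (1/12)(1 − γ − log(2π)) + ζ'(2)/(2π²). -/
open Complex Real

/-- `ζ'(−1) = (1/12)(1 − γ − log(2π)) + ζ'(2)/(2π²)`. -/
theorem deriv_riemannZeta_neg_one :
    deriv riemannZeta (-1) =
      (1 / 12 : ℂ) * (1 - (Real.eulerMascheroniConstant : ℂ) -
          ((Real.log (2 * Real.pi) : ℝ) : ℂ)) +
        deriv riemannZeta 2 / (2 * (Real.pi : ℂ) ^ 2) := by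
  have hπ : (π : ℂ) ≠ 0 := by exact_mod_cast Real.pi_ne_zero
  have h2π : (2 * π : ℂ) ≠ 0 := by simp [hπ]
  -- derivative of `2 * (2π)^(-s)` at 2
  have h1 : HasDerivAt (fun s : ℂ ↦ 2 * (2 * π : ℂ) ^ (-s))
      (2 * ((2 * π : ℂ) ^ (-2 : ℂ) * Complex.log (2 * π) * (-1))) 2 :=
    ((hasDerivAt_neg' (2 : ℂ)).const_cpow (Or.inl h2π)).const_mul 2
  -- derivative of Gamma at 2
  have h2 : HasDerivAt Complex.Gamma
      (1 - (Real.eulerMascheroniConstant : ℂ)) 2 := by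
    have := Complex.hasDerivAt_Gamma_nat 1
    norm_num [harmonic_succ] at this
    exact this.congr_deriv (by ring)
  -- derivative of `cos (π s / 2)` at 2
  have h3 : HasDerivAt (fun s : ℂ ↦ Complex.cos (π * s / 2)) 0 2 := by
    have hinner : HasDerivAt (fun s : ℂ ↦ (π : ℂ) * s / 2) ((π : ℂ) / 2) 2 := by
      simpa using ((hasDerivAt_id (2 : ℂ)).const_mul (π : ℂ)).div_const 2
    refine hinner.ccos.congr_deriv ?_
    have h22 : (π : ℂ) * 2 / 2 = (π : ℂ) := by ring
    rw [h22, ← Complex.ofReal_sin, Real.sin_pi]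
    simp
  -- derivative of zeta at 2
  have h4 : HasDerivAt riemannZeta (deriv riemannZeta 2) 2 :=
    (differentiableAt_riemannZeta (by norm_num)).hasDerivAt
  have hG := ((h1.mul h2).mul h3).mul h4
  -- the LHS function `s ↦ ζ(1-s)`
  have hF : HasDerivAt (fun s : ℂ ↦ riemannZeta (1 - s))
      (deriv riemannZeta (-1) * (-1)) 2 := by
    have hz : HasDerivAt riemannZeta (deriv riemannZeta (-1)) (1 - 2 : ℂ) := by
      have h12 : ((1 : ℂ) - 2) = -1 := by norm_num
      rw [h12]
      exact (differentiableAt_riemannZeta (by norm_num)).hasDerivAt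
    exact hz.comp 2 ((hasDerivAt_id (2 : ℂ)).const_sub 1)
  -- functional equation near 2
  have heq : (fun s : ℂ ↦ riemannZeta (1 - s)) =ᶠ[nhds 2]
      (fun s ↦ 2 * (2 * π : ℂ) ^ (-s) * Complex.Gamma s * Complex.cos (π * s / 2) *
        riemannZeta s) := by
    have hopen : IsOpen {s : ℂ | 1 < s.re} := isOpen_lt continuous_const Complex.continuous_re
    have h2mem : (2 : ℂ) ∈ {s : ℂ | 1 < s.re} := by simp
    filter_upwards [hopen.mem_nhds h2mem] with s hs
    refine riemannZeta_one_sub (fun n ↦ fun h ↦ ?_) (fun h ↦ ?_)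
    · have hre : s.re = -(n : ℝ) := by rw [h]; simp
      rw [hre] at hs
      linarith [Nat.cast_nonneg (α := ℝ) n]
    · rw [h] at hs; simp at hs
  have key := hF.unique (hG.congr_of_eventuallyEq heq)
  have hc : (π : ℂ) * 2 / 2 = (π : ℂ) := by ring
  have hcos : Complex.cos ((π : ℂ) * 2 / 2) = -1 := by
    rw [hc, ← Complex.ofReal_cos, Real.cos_pi]; simp
  have hpow : (2 * π : ℂ) ^ (-2 : ℂ) = ((2 * π : ℂ) ^ (2 : ℕ))⁻¹ := by
    rw [Complex.cpow_neg, ← Complex.cpow_natCast]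
    norm_num
  have hlog : Complex.log (2 * (π : ℂ)) = ((Real.log (2 * π) : ℝ) : ℂ) := by
    rw [Complex.ofReal_log (by positivity : (0:ℝ) ≤ 2 * π)]
    push_cast
    ring_nf
  have hΓ : Complex.Gamma 2 = 1 := by
    simp [Complex.Gamma_nat_eq_factorial]
  simp only [Pi.mul_apply] at key
  rw [hΓ, hcos, hpow, hlog, riemannZeta_two] at key
  have hπ2 : ((2 * (π : ℂ)) ^ (2 : ℕ)) ≠ 0 := pow_ne_zero _ h2π
  have hB : ((2 * (π:ℂ)) ^ (2:ℕ))⁻¹ = 1/(4*π^2) := by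
    rw [show ((2 * (π:ℂ)) ^ (2:ℕ)) = 4*π^2 by ring, one_div]
  rw [hB, mul_neg_one, neg_eq_iff_eq_neg] at key
  rw [key]
  have h4 : (4 * (π:ℂ)^2) ≠ 0 := by simp [hπ]
  field_simp
  ring
end
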